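/- arXiv:0909.2538 — 6 statements merged into one kernel-verified Lean document; each statement's English description precedes it below -/
import Mathlib

section
/- Let K be a set of positive integers, let L = ⋃_{n∈K} ((−log(n+1), −log n] ∪ [log n, log(n+1))), let π_K(x) = #{n ∈ K : n ≤ x}, and let δ > 0. Then liminf_{ξ→∞} |L ∩ (ξ−δ, ξ)| > 0 (Lebesgue measure) if and only if liminf_{ξ→∞} (π_K(e^ξ) − π_K(e^{ξ−δ}))/e^ξ > 0. -/
open MeasureTheory Set Filter Topology ComplexConjugate

noncomputable section

/-- The restriction of Lebesgue measure to a set `S ⊆ ℝ`; we regard `L²(S)` as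
`Lp ℂ 2 (mu S)`, identified with the subspace of `L²(ℝ)` of functions supported in `S`. -/
def mu (S : Set ℝ) : Measure ℝ := volume.restrict S

/-- `coeff S g x = ∫_S g(τ) e^{-i x τ} dτ`, i.e. `√(2π)` times the Fourier transform
`F g (x) = (2π)^{-1/2} ∫ g(ξ) e^{-iξx} dξ` of `g` regarded as a function supported in `S`. -/
def coeff (S : Set ℝ) (g : ℝ → ℂ) (x : ℝ) : ℂ :=
  ∫ τ in S, g τ * Complex.exp (-(Complex.I * x * τ))

/-- The set `L = ⋃_{n∈K} ((−log(n+1), −log n] ∪ [log n, log(n+1)))`. -/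
def Lset (K : Set ℕ) : Set ℝ :=
  ⋃ n ∈ K, (Ioc (-Real.log (n + 1)) (-Real.log n) ∪ Ico (Real.log n) (Real.log (n + 1)))

/-- Counting function `π_K(x) = #{n ∈ K : n ≤ x}`, as a real number. -/
def countK (K : Set ℕ) (x : ℝ) : ℝ := ((K ∩ {n : ℕ | (n : ℝ) ≤ x}).ncard : ℝ)

/-- Defining (weak) property of the operator `𝒵_{K,I}` on `L²(S)`: tested against any
`φ ∈ L²(S)` it is given by
`⟨Z g, φ⟩ = (1/2π) Σ_{n∈K} (1/n) [(∫_S g(τ) n^{-iτ} dτ) conj(∫_S φ(τ) n^{-iτ} dτ)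
  + (∫_S g(τ) n^{iτ} dτ) conj(∫_S φ(τ) n^{iτ} dτ)]`,
which is the weak form of `(Z g)(t) = (1/2π) Σ_{n∈K} (1/n) [(∫_S g(τ) n^{-iτ} dτ) n^{it}
  + (∫_S g(τ) n^{iτ} dτ) n^{-it}]` for `t ∈ S`. -/
def IsZetaOp (K : Set ℕ) (S : Set ℝ)
    (Z : Lp ℂ 2 (mu S) →L[ℂ] Lp ℂ 2 (mu S)) : Prop :=
  ∀ g φ : Lp ℂ 2 (mu S),
    (∫ t in S, (Z g) t * conj (φ t))
      = (1 / (2 * (Real.pi : ℂ))) *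
        ∑' n : K, (1 / ((n : ℕ) : ℂ)) *
          (coeff S g (Real.log ((n : ℕ) : ℝ)) * conj (coeff S φ (Real.log ((n : ℕ) : ℝ)))
            + coeff S g (-Real.log ((n : ℕ) : ℝ)) * conj (coeff S φ (-Real.log ((n : ℕ) : ℝ))))

/-- Defining (weak) property of the operator `g ↦ χ_S ⬝ F⁻¹(χ_L ⬝ F g)` on `L²(S)`:
tested against any `φ ∈ L²(S)` it satisfies `⟨M g, φ⟩ = ∫_L (F g)(ξ) conj((F φ)(ξ)) dξ`,
where `F` is the Fourier transform `F g (ξ) = (2π)^{-1/2} ∫ g(τ) e^{-iξτ} dτ`. -/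
def IsMultOp (L : Set ℝ) (S : Set ℝ)
    (M : Lp ℂ 2 (mu S) →L[ℂ] Lp ℂ 2 (mu S)) : Prop :=
  ∀ g φ : Lp ℂ 2 (mu S),
    (∫ t in S, (M g) t * conj (φ t))
      = (1 / (2 * (Real.pi : ℂ))) * ∫ ξ in L, coeff S g ξ * conj (coeff S φ ξ)

/-- A map between normed spaces is bounded below in norm. -/
def BddBelowOp {E F : Type*} [NormedAddCommGroup E] [NormedAddCommGroup F]
    (Z : E → F) : Prop :=
  ∃ c : ℝ, 0 < c ∧ ∀ g : E, c * ‖g‖ ≤ ‖Z g‖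

/-- The multiplicative semigroup of positive integers generated by a set `P` of primes:
the positive integers all of whose prime factors lie in `P` (including `1`). -/
def genBy (P : Set ℕ) : Set ℕ := {n : ℕ | 0 < n ∧ ∀ p : ℕ, p.Prime → p ∣ n → p ∈ P}

/-- The primes not belonging to `Q`. -/
def primesNotIn (Q : Set ℕ) : Set ℕ := {p : ℕ | p.Prime ∧ p ∉ Q}

/-- `ζ_J(1 + it) = Σ_{n ∈ J} n^{-1-it}` on the abscissa `Re s = 1`. -/
def zetaLine (J : Set ℕ) (t : ℝ) : ℂ := ∑' n : J, ((n : ℕ) : ℂ) ^ (-(1 + Complex.I * t))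

section Statement4Aux

open Real

lemma finK (K : Set ℕ) (x : ℝ) : (K ∩ {n : ℕ | (n : ℝ) ≤ x}).Finite :=
  (Set.finite_Iic (⌊x⌋₊)).subset (fun n hn => Nat.le_floor hn.2)

lemma countK_nonneg (K : Set ℕ) (x : ℝ) : 0 ≤ countK K x := Nat.cast_nonneg _

lemma countK_mono (K : Set ℕ) {x y : ℝ} (h : x ≤ y) : countK K x ≤ countK K y := by
  have : (K ∩ {n : ℕ | (n : ℝ) ≤ x}).ncard ≤ (K ∩ {n : ℕ | (n : ℝ) ≤ y}).ncard :=
    Set.ncard_le_ncard (fun n hn => ⟨hn.1, le_trans hn.2 h⟩) (finK K y)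
  unfold countK
  exact_mod_cast this

lemma countK_le_add_one (K : Set ℕ) {x y : ℝ} (h : x ≤ y + 1) :
    countK K x ≤ countK K y + 1 := by
  have hss : {n : ℕ | y < (n : ℝ) ∧ (n : ℝ) ≤ x}.Subsingleton := by
    intro p hp q hq
    have h1 : (q : ℝ) < (p : ℝ) + 1 := lt_of_le_of_lt hq.2 (by linarith [hp.1])
    have h2 : (p : ℝ) < (q : ℝ) + 1 := lt_of_le_of_lt hp.2 (by linarith [hq.1])
    have h1' : q < p + 1 := by exact_mod_cast h1
    have h2' : p < q + 1 := by exact_mod_cast h2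
    omega
  have hfin2 : {n : ℕ | y < (n : ℝ) ∧ (n : ℝ) ≤ x}.Finite := hss.finite
  have hsub : K ∩ {n : ℕ | (n : ℝ) ≤ x} ⊆
      (K ∩ {n : ℕ | (n : ℝ) ≤ y}) ∪ {n : ℕ | y < (n : ℝ) ∧ (n : ℝ) ≤ x} := by
    rintro n ⟨hnK, hnx⟩
    by_cases hy : (n : ℝ) ≤ y
    · exact Or.inl ⟨hnK, hy⟩
    · exact Or.inr ⟨lt_of_not_ge hy, hnx⟩
  have hone : {n : ℕ | y < (n : ℝ) ∧ (n : ℝ) ≤ x}.ncard ≤ 1 := by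
    rcases hss.eq_empty_or_singleton with h0 | ⟨a, ha⟩
    · simp [h0]
    · simp [ha]
  have hle : (K ∩ {n : ℕ | (n : ℝ) ≤ x}).ncard
      ≤ (K ∩ {n : ℕ | (n : ℝ) ≤ y}).ncard + 1 :=
    (Set.ncard_le_ncard hsub ((finK K y).union hfin2)).trans
      ((Set.ncard_union_le _ _).trans (by omega))
  unfold countK
  exact_mod_cast hle

lemma countK_le (K : Set ℕ) {x : ℝ} (hx : 0 ≤ x) : countK K x ≤ x + 1 := by
  have h1 : (K ∩ {n : ℕ | (n : ℝ) ≤ x}).ncard ≤ (Set.Iic ⌊x⌋₊).ncard :=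
    Set.ncard_le_ncard (fun n hn => Nat.le_floor hn.2) (Set.finite_Iic _)
  have h2 : (Set.Iic ⌊x⌋₊).ncard = ⌊x⌋₊ + 1 := by
    rw [← Finset.coe_Iic, Set.ncard_coe_finset, Nat.card_Iic]
  have h3 : (⌊x⌋₊ : ℝ) ≤ x := Nat.floor_le hx
  have h4 : (K ∩ {n : ℕ | (n : ℝ) ≤ x}).ncard ≤ ⌊x⌋₊ + 1 := h1.trans_eq h2
  unfold countK
  calc ((K ∩ {n : ℕ | (n : ℝ) ≤ x}).ncard : ℝ) ≤ (⌊x⌋₊ : ℝ) + 1 := by exact_mod_cast h4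
    _ ≤ x + 1 := by linarith

end Statement4Aux
section Statement4Aux2

lemma log_succ_ge (n : ℕ) (hn : 1 ≤ n) :
    1 / ((n : ℝ) + 1) ≤ Real.log ((n : ℝ) + 1) - Real.log n := by
  have hn0 : (0 : ℝ) < n := by exact_mod_cast hn
  have hx : (0 : ℝ) < (n : ℝ) / ((n : ℝ) + 1) := by positivity
  have h := Real.log_le_sub_one_of_pos hx
  rw [Real.log_div (by positivity) (by positivity)] at h
  have : (n : ℝ) / ((n : ℝ) + 1) - 1 = -(1 / ((n : ℝ) + 1)) := by field_simp; ring
  linarith [this ▸ h]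

lemma log_succ_le (n : ℕ) (hn : 1 ≤ n) :
    Real.log ((n : ℝ) + 1) - Real.log n ≤ 1 / (n : ℝ) := by
  have hn0 : (0 : ℝ) < n := by exact_mod_cast hn
  have hx : (0 : ℝ) < ((n : ℝ) + 1) / (n : ℝ) := by positivity
  have h := Real.log_le_sub_one_of_pos hx
  rw [Real.log_div (by positivity) (by positivity)] at h
  have : ((n : ℝ) + 1) / (n : ℝ) - 1 = 1 / (n : ℝ) := by field_simp; ring
  linarith [this ▸ h]

lemma Ico_log_disjoint {m n : ℕ} (h : m < n) :
    Disjoint (Set.Ico (Real.log m) (Real.log (m + 1)))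
      (Set.Ico (Real.log n) (Real.log (n + 1))) := by
  apply Set.Ico_disjoint_Ico.mpr
  have hle : Real.log ((m : ℝ) + 1) ≤ Real.log n :=
    Real.log_le_log (by positivity) (by exact_mod_cast h)
  exact le_trans (min_le_left _ _) (le_trans hle (le_max_right _ _))

lemma lset_vol_ne_top (K : Set ℕ) (δ ξ : ℝ) :
    volume (Lset K ∩ Set.Ioo (ξ - δ) ξ) ≠ ⊤ := by
  apply ne_top_of_le_ne_top _ (measure_mono Set.inter_subset_right)
  rw [Real.volume_Ioo]
  exact ENNReal.ofReal_ne_top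

lemma measure_lower (K : Set ℕ) {δ ξ : ℝ} (hδ : 0 < δ) (hξ : δ + 1 ≤ ξ) :
    (countK K (Real.exp ξ - 1) - countK K (Real.exp (ξ - δ))) * Real.exp (-ξ)
      ≤ (volume (Lset K ∩ Set.Ioo (ξ - δ) ξ)).toReal := by
  set A : Set ℕ :=
    K ∩ {n : ℕ | Real.exp (ξ - δ) < (n : ℝ) ∧ (n : ℝ) ≤ Real.exp ξ - 1} with hA
  have hAfin : A.Finite :=
    (finK K (Real.exp ξ - 1)).subset (fun n hn => ⟨hn.1, hn.2.2⟩)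
  set F := hAfin.toFinset with hF
  have hmemA : ∀ n ∈ F, n ∈ A := fun n hn => hAfin.mem_toFinset.mp hn
  have hone : ∀ n ∈ F, 1 ≤ n := by
    intro n hn
    have h := (hmemA n hn).2.1
    have : (0 : ℝ) < n := lt_trans (Real.exp_pos _) h
    exact_mod_cast Nat.one_le_iff_ne_zero.mpr (by exact_mod_cast this.ne')
  -- the union of intervals is inside the target set
  have hsub : (⋃ n ∈ F, Set.Ico (Real.log n) (Real.log ((n : ℝ) + 1)))
      ⊆ Lset K ∩ Set.Ioo (ξ - δ) ξ := by
    intro x hx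
    rw [Set.mem_iUnion₂] at hx
    obtain ⟨n, hn, hxn⟩ := hx
    obtain ⟨hnK, hn1, hn2⟩ := hmemA n hn
    constructor
    · exact Set.mem_iUnion₂.mpr ⟨n, hnK, Or.inr hxn⟩
    · constructor
      · have : ξ - δ < Real.log n := by
          have := Real.log_lt_log (Real.exp_pos (ξ - δ)) hn1
          rwa [Real.log_exp] at this
        exact lt_of_lt_of_le this hxn.1
      · have : Real.log ((n : ℝ) + 1) ≤ ξ := by
          have h1 : (n : ℝ) + 1 ≤ Real.exp ξ := by linarith
          have := Real.log_le_log (by positivity) h1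
          rwa [Real.log_exp] at this
        exact lt_of_lt_of_le hxn.2 this
  have hdisj : (↑F : Set ℕ).PairwiseDisjoint
      (fun n : ℕ => Set.Ico (Real.log n) (Real.log ((n : ℝ) + 1))) := by
    intro m hm n hn hmn
    rcases lt_or_gt_of_ne hmn with h | h
    · exact Ico_log_disjoint h
    · exact (Ico_log_disjoint h).symm
  have hvol : volume (⋃ n ∈ F, Set.Ico (Real.log n) (Real.log ((n : ℝ) + 1)))
      = ∑ n ∈ F, ENNReal.ofReal (Real.log ((n : ℝ) + 1) - Real.log n) := by
    rw [measure_biUnion_finset hdisj (fun n _ => measurableSet_Ico)]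
    simp [Real.volume_Ico]
  have hterm : ∀ n ∈ F, ENNReal.ofReal (Real.exp (-ξ))
      ≤ ENNReal.ofReal (Real.log ((n : ℝ) + 1) - Real.log n) := by
    intro n hn
    apply ENNReal.ofReal_le_ofReal
    have h1 := log_succ_ge n (hone n hn)
    have h2 : (n : ℝ) + 1 ≤ Real.exp ξ := by linarith [(hmemA n hn).2.2]
    have h3 : Real.exp (-ξ) ≤ 1 / ((n : ℝ) + 1) := by
      rw [Real.exp_neg]
      rw [inv_eq_one_div]
      apply one_div_le_one_div_of_le (by positivity) h2
    linarith
  have hsum : ENNReal.ofReal ((F.card : ℝ) * Real.exp (-ξ))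
      ≤ volume (⋃ n ∈ F, Set.Ico (Real.log n) (Real.log ((n : ℝ) + 1))) := by
    rw [hvol]
    calc ENNReal.ofReal ((F.card : ℝ) * Real.exp (-ξ))
        = F.card • ENNReal.ofReal (Real.exp (-ξ)) := by
          rw [nsmul_eq_mul, ← ENNReal.ofReal_natCast, ← ENNReal.ofReal_mul (by positivity)]
      _ = ∑ _n ∈ F, ENNReal.ofReal (Real.exp (-ξ)) := by rw [Finset.sum_const]
      _ ≤ _ := Finset.sum_le_sum hterm
  -- cardinality bound
  have hcard : countK K (Real.exp ξ - 1) - countK K (Real.exp (ξ - δ)) ≤ (F.card : ℝ) := by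
    have hsub2 : K ∩ {n : ℕ | (n : ℝ) ≤ Real.exp ξ - 1}
        ⊆ A ∪ (K ∩ {n : ℕ | (n : ℝ) ≤ Real.exp (ξ - δ)}) := by
      rintro n ⟨hnK, hnx⟩
      by_cases hy : (n : ℝ) ≤ Real.exp (ξ - δ)
      · exact Or.inr ⟨hnK, hy⟩
      · exact Or.inl ⟨hnK, lt_of_not_ge hy, hnx⟩
    have h1 : (K ∩ {n : ℕ | (n : ℝ) ≤ Real.exp ξ - 1}).ncard
        ≤ A.ncard + (K ∩ {n : ℕ | (n : ℝ) ≤ Real.exp (ξ - δ)}).ncard :=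
      (Set.ncard_le_ncard hsub2 (hAfin.union (finK K _))).trans (Set.ncard_union_le _ _)
    have h2 : A.ncard = F.card := Set.ncard_eq_toFinset_card A hAfin
    rw [h2] at h1
    have h1' : countK K (Real.exp ξ - 1)
        ≤ (F.card : ℝ) + countK K (Real.exp (ξ - δ)) := by
      unfold countK; exact_mod_cast h1
    linarith
  -- conclude
  have hfin : volume (Lset K ∩ Set.Ioo (ξ - δ) ξ) ≠ ⊤ := lset_vol_ne_top K δ ξ
  have hle : ENNReal.ofReal ((F.card : ℝ) * Real.exp (-ξ))
      ≤ volume (Lset K ∩ Set.Ioo (ξ - δ) ξ) := hsum.trans (measure_mono hsub)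
  have := ENNReal.toReal_mono hfin hle
  rw [ENNReal.toReal_ofReal (by positivity)] at this
  calc (countK K (Real.exp ξ - 1) - countK K (Real.exp (ξ - δ))) * Real.exp (-ξ)
      ≤ (F.card : ℝ) * Real.exp (-ξ) :=
        mul_le_mul_of_nonneg_right hcard (Real.exp_pos _).le
    _ ≤ _ := this

end Statement4Aux2
section Statement4Aux3

lemma measure_upper (K : Set ℕ) (hK : ∀ n ∈ K, 0 < n) {δ ξ : ℝ}
    (hδ : 0 < δ) (hξ : δ + 1 ≤ ξ) :
    (volume (Lset K ∩ Set.Ioo (ξ - δ) ξ)).toReal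
      ≤ (countK K (Real.exp ξ) - countK K (Real.exp (ξ - δ)) + 1)
          * (1 / (Real.exp (ξ - δ) - 1)) := by
  have hE2 : (2 : ℝ) ≤ Real.exp (ξ - δ) := by
    have := Real.add_one_le_exp (ξ - δ)
    linarith
  have hE1 : (0 : ℝ) < Real.exp (ξ - δ) - 1 := by linarith
  set B : Set ℕ :=
    K ∩ {n : ℕ | Real.exp (ξ - δ) - 1 < (n : ℝ) ∧ (n : ℝ) < Real.exp ξ} with hB
  have hBfin : B.Finite :=
    (finK K (Real.exp ξ)).subset (fun n hn => ⟨hn.1, hn.2.2.le⟩)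
  set F := hBfin.toFinset with hF
  have hmemB : ∀ n ∈ F, n ∈ B := fun n hn => hBfin.mem_toFinset.mp hn
  have hone : ∀ n ∈ F, 1 ≤ n := fun n hn => hK n (hmemB n hn).1
  -- inclusion
  have hsub : Lset K ∩ Set.Ioo (ξ - δ) ξ
      ⊆ ⋃ n ∈ F, Set.Ico (Real.log n) (Real.log ((n : ℝ) + 1)) := by
    rintro x ⟨hxL, hx1, hx2⟩
    rw [Lset, Set.mem_iUnion₂] at hxL
    obtain ⟨n, hnK, hcase⟩ := hxL
    have hn1 : 1 ≤ n := hK n hnK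
    have hn0 : (0 : ℝ) < n := by exact_mod_cast hn1
    rcases hcase with h | h
    · -- negative interval: impossible since x > ξ - δ ≥ 1 > 0
      exfalso
      have hlog : 0 ≤ Real.log n := Real.log_nonneg (by exact_mod_cast hn1)
      have : x ≤ 0 := le_trans h.2 (by linarith)
      linarith
    · -- positive interval
      have hnB : n ∈ F := by
        rw [hF, hBfin.mem_toFinset]
        refine ⟨hnK, ?_, ?_⟩
        · have : ξ - δ < Real.log ((n : ℝ) + 1) := lt_trans hx1 h.2
          have := (Real.lt_log_iff_exp_lt (by positivity)).mp this
          linarith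
        · have : Real.log n < ξ := lt_of_le_of_lt h.1 hx2
          exact (Real.log_lt_iff_lt_exp hn0).mp this
      exact Set.mem_iUnion₂.mpr ⟨n, hnB, h⟩
  -- measure bound
  have hvol : volume (Lset K ∩ Set.Ioo (ξ - δ) ξ)
      ≤ ENNReal.ofReal ((F.card : ℝ) * (1 / (Real.exp (ξ - δ) - 1))) := by
    calc volume (Lset K ∩ Set.Ioo (ξ - δ) ξ)
        ≤ volume (⋃ n ∈ F, Set.Ico (Real.log n) (Real.log ((n : ℝ) + 1))) :=
          measure_mono hsub
      _ ≤ ∑ n ∈ F, volume (Set.Ico (Real.log n) (Real.log ((n : ℝ) + 1))) :=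
          measure_biUnion_finset_le F _
      _ ≤ ∑ _n ∈ F, ENNReal.ofReal (1 / (Real.exp (ξ - δ) - 1)) := by
          apply Finset.sum_le_sum
          intro n hn
          rw [Real.volume_Ico]
          apply ENNReal.ofReal_le_ofReal
          have h1 := log_succ_le n (hone n hn)
          have h2 : Real.exp (ξ - δ) - 1 ≤ (n : ℝ) := (hmemB n hn).2.1.le
          have h3 : 1 / (n : ℝ) ≤ 1 / (Real.exp (ξ - δ) - 1) :=
            one_div_le_one_div_of_le hE1 h2
          linarith
      _ = ENNReal.ofReal ((F.card : ℝ) * (1 / (Real.exp (ξ - δ) - 1))) := by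
          rw [Finset.sum_const, nsmul_eq_mul, ← ENNReal.ofReal_natCast,
            ← ENNReal.ofReal_mul (by positivity)]
  -- cardinality bound
  have hcard : (F.card : ℝ)
      ≤ countK K (Real.exp ξ) - countK K (Real.exp (ξ - δ)) + 1 := by
    have hdisj : Disjoint B (K ∩ {n : ℕ | (n : ℝ) ≤ Real.exp (ξ - δ) - 1}) := by
      rw [Set.disjoint_left]
      rintro n ⟨_, hn1, _⟩ ⟨_, hn2⟩
      exact absurd hn2 (not_le.mpr hn1)
    have hsub2 : B ∪ (K ∩ {n : ℕ | (n : ℝ) ≤ Real.exp (ξ - δ) - 1})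
        ⊆ K ∩ {n : ℕ | (n : ℝ) ≤ Real.exp ξ} := by
      rintro n (⟨hnK, _, hn2⟩ | ⟨hnK, hn2⟩)
      · exact ⟨hnK, hn2.le⟩
      · have hEE : Real.exp (ξ - δ) ≤ Real.exp ξ := Real.exp_le_exp.mpr (by linarith)
        have hn2' : (n : ℝ) ≤ Real.exp (ξ - δ) - 1 := hn2
        exact ⟨hnK, by show (n : ℝ) ≤ Real.exp ξ; linarith⟩
    have h1 : B.ncard + (K ∩ {n : ℕ | (n : ℝ) ≤ Real.exp (ξ - δ) - 1}).ncard
        ≤ (K ∩ {n : ℕ | (n : ℝ) ≤ Real.exp ξ}).ncard := by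
      rw [← Set.ncard_union_eq hdisj hBfin (finK K _)]
      exact Set.ncard_le_ncard hsub2 (finK K _)
    have h2 : B.ncard = F.card := Set.ncard_eq_toFinset_card B hBfin
    rw [h2] at h1
    have h1' : (F.card : ℝ) + countK K (Real.exp (ξ - δ) - 1) ≤ countK K (Real.exp ξ) := by
      unfold countK; exact_mod_cast h1
    have h3 : countK K (Real.exp (ξ - δ)) ≤ countK K (Real.exp (ξ - δ) - 1) + 1 :=
      countK_le_add_one K (by linarith)
    linarith
  -- conclude
  calc (volume (Lset K ∩ Set.Ioo (ξ - δ) ξ)).toReal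
      ≤ (ENNReal.ofReal ((F.card : ℝ) * (1 / (Real.exp (ξ - δ) - 1)))).toReal :=
        ENNReal.toReal_mono ENNReal.ofReal_ne_top hvol
    _ = (F.card : ℝ) * (1 / (Real.exp (ξ - δ) - 1)) := ENNReal.toReal_ofReal (by positivity)
    _ ≤ (countK K (Real.exp ξ) - countK K (Real.exp (ξ - δ)) + 1)
          * (1 / (Real.exp (ξ - δ) - 1)) :=
        mul_le_mul_of_nonneg_right hcard (by positivity)

end Statement4Aux3

/-- For `K` a set of positive integers,
`L = ⋃_{n∈K} ((−log(n+1), −log n] ∪ [log n, log(n+1)))` and `δ > 0`: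
`liminf_{ξ→∞} |L ∩ (ξ−δ, ξ)| > 0` iff `liminf_{ξ→∞} (π_K(e^ξ) − π_K(e^{ξ−δ}))/e^ξ > 0`. -/
theorem statement4 (K : Set ℕ) (hK : ∀ n ∈ K, 0 < n) (δ : ℝ) (hδ : 0 < δ) :
    (0 < Filter.liminf (fun ξ : ℝ => (volume (Lset K ∩ Ioo (ξ - δ) ξ)).toReal) atTop)
      ↔ 0 < Filter.liminf
          (fun ξ : ℝ => (countK K (Real.exp ξ) - countK K (Real.exp (ξ - δ))) / Real.exp ξ)
          atTop := by
  set m : ℝ → ℝ := fun ξ : ℝ => (volume (Lset K ∩ Ioo (ξ - δ) ξ)).toReal with hmdef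
  set g : ℝ → ℝ :=
    fun ξ : ℝ => (countK K (Real.exp ξ) - countK K (Real.exp (ξ - δ))) / Real.exp ξ with hgdef
  have hm_nonneg : ∀ ξ : ℝ, 0 ≤ m ξ := fun _ => ENNReal.toReal_nonneg
  have hg_nonneg : ∀ ξ : ℝ, 0 ≤ g ξ := by
    intro ξ
    apply div_nonneg _ (Real.exp_pos _).le
    have := countK_mono K (Real.exp_le_exp.mpr (by linarith : ξ - δ ≤ ξ))
    linarith
  have hm_le : ∀ ξ : ℝ, m ξ ≤ δ := by
    intro ξ
    have h : volume (Lset K ∩ Ioo (ξ - δ) ξ) ≤ ENNReal.ofReal δ := by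
      refine le_trans (measure_mono inter_subset_right) ?_
      rw [Real.volume_Ioo]
      exact ENNReal.ofReal_le_ofReal (by linarith)
    have := ENNReal.toReal_mono ENNReal.ofReal_ne_top h
    rwa [ENNReal.toReal_ofReal hδ.le] at this
  have hg_le : ∀ᶠ ξ : ℝ in atTop, g ξ ≤ 2 := by
    filter_upwards [eventually_ge_atTop (0 : ℝ)] with ξ hξ0
    have h1 : countK K (Real.exp ξ) ≤ Real.exp ξ + 1 := countK_le K (Real.exp_pos _).le
    have h2 : 1 ≤ Real.exp ξ := by nlinarith [Real.add_one_le_exp ξ]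
    have h3 : 0 ≤ countK K (Real.exp (ξ - δ)) := countK_nonneg _ _
    rw [hgdef]
    show (countK K (Real.exp ξ) - countK K (Real.exp (ξ - δ))) / Real.exp ξ ≤ 2
    rw [div_le_iff₀ (Real.exp_pos _)]
    linarith
  have hbdd_m : Filter.IsBoundedUnder (· ≥ ·) atTop m :=
    Filter.isBoundedUnder_of ⟨0, fun ξ => hm_nonneg ξ⟩
  have hbdd_g : Filter.IsBoundedUnder (· ≥ ·) atTop g :=
    Filter.isBoundedUnder_of ⟨0, fun ξ => hg_nonneg ξ⟩
  have hcob_m : Filter.IsCoboundedUnder (· ≥ ·) atTop m :=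
    Filter.isCoboundedUnder_ge_of_eventually_le atTop
      (Filter.Eventually.of_forall hm_le)
  have hcob_g : Filter.IsCoboundedUnder (· ≥ ·) atTop g :=
    Filter.isCoboundedUnder_ge_of_eventually_le atTop hg_le
  have htend : Filter.Tendsto (fun ξ : ℝ => Real.exp (ξ - δ)) atTop atTop := by
    apply Real.tendsto_exp_atTop.comp
    exact tendsto_atTop_add_const_right atTop (-δ) tendsto_id |>.congr (by
      intro x; simp [sub_eq_add_neg])
  constructor
  · -- measure side implies counting side
    intro hb
    set b := Filter.liminf m atTop with hbdef
    have hev1 : ∀ᶠ ξ : ℝ in atTop, b / 2 < m ξ :=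
      Filter.eventually_lt_of_lt_liminf (by linarith) hbdd_m
    have hev2 : ∀ᶠ ξ : ℝ in atTop, δ + 1 ≤ ξ := eventually_ge_atTop _
    have hev3 : ∀ᶠ ξ : ℝ in atTop, 8 / b ≤ Real.exp (ξ - δ) :=
      htend.eventually_ge_atTop (8 / b)
    have hkey : ∀ᶠ ξ : ℝ in atTop, b / 8 * Real.exp (-δ) ≤ g ξ := by
      filter_upwards [hev1, hev2, hev3] with ξ h1 h2 h3
      have hup := measure_upper K hK hδ h2
      set c := countK K (Real.exp ξ) - countK K (Real.exp (ξ - δ)) with hc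
      set E := Real.exp (ξ - δ) with hEdef
      have hE2 : (2 : ℝ) ≤ E := by
        have := Real.add_one_le_exp (ξ - δ)
        rw [hEdef]; linarith
      have hE1 : (0 : ℝ) < E - 1 := by linarith
      have h2' : m ξ * (E - 1) ≤ c + 1 := by
        have h := mul_le_mul_of_nonneg_right hup hE1.le
        calc m ξ * (E - 1) ≤ (c + 1) * (1 / (E - 1)) * (E - 1) := h
          _ = c + 1 := by field_simp
      have h4 : b / 2 * (E - 1) ≤ m ξ * (E - 1) :=
        mul_le_mul_of_nonneg_right h1.le hE1.le
      have h5 : 8 ≤ b * E := by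
        have := (div_le_iff₀ hb).mp h3
        linarith
      have hkeyE : b / 8 * E ≤ c := by
        nlinarith [mul_nonneg hb.le (by linarith : (0 : ℝ) ≤ E - 2)]
      show b / 8 * Real.exp (-δ) ≤ c / Real.exp ξ
      rw [le_div_iff₀ (Real.exp_pos ξ)]
      have heq : b / 8 * Real.exp (-δ) * Real.exp ξ = b / 8 * E := by
        rw [hEdef, mul_assoc, ← Real.exp_add, show -δ + ξ = ξ - δ by ring]
      linarith
    have hfinal : b / 8 * Real.exp (-δ) ≤ Filter.liminf g atTop :=
      Filter.le_liminf_of_le hcob_g hkey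
    have hpos : 0 < b / 8 * Real.exp (-δ) := by positivity
    linarith
  · -- counting side implies measure side
    intro ha
    set a := Filter.liminf g atTop with hadef
    have hev1 : ∀ᶠ ξ : ℝ in atTop, a / 2 < g ξ :=
      Filter.eventually_lt_of_lt_liminf (by linarith) hbdd_g
    have hev2 : ∀ᶠ ξ : ℝ in atTop, δ + 1 ≤ ξ := eventually_ge_atTop _
    have hev3 : ∀ᶠ ξ : ℝ in atTop, Real.exp (-ξ) ≤ a / 4 :=
      Real.tendsto_exp_neg_atTop_nhds_zero.eventually
        (eventually_le_nhds (by positivity : (0 : ℝ) < a / 4))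
    have hkey : ∀ᶠ ξ : ℝ in atTop, a / 4 ≤ m ξ := by
      filter_upwards [hev1, hev2, hev3] with ξ h1 h2 h3
      have hlow := measure_lower K hδ h2
      have hc1 : countK K (Real.exp ξ) ≤ countK K (Real.exp ξ - 1) + 1 :=
        countK_le_add_one K (by linarith)
      set c := countK K (Real.exp ξ) - countK K (Real.exp (ξ - δ)) with hc
      set d := countK K (Real.exp ξ - 1) - countK K (Real.exp (ξ - δ)) with hd
      have hdc : c - 1 ≤ d := by rw [hc, hd]; linarith
      have hstep : (c - 1) * Real.exp (-ξ) ≤ d * Real.exp (-ξ) :=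
        mul_le_mul_of_nonneg_right hdc (Real.exp_pos _).le
      have hgc : g ξ = c * Real.exp (-ξ) := by
        rw [hgdef]
        show (countK K (Real.exp ξ) - countK K (Real.exp (ξ - δ))) / Real.exp ξ
            = c * Real.exp (-ξ)
        rw [Real.exp_neg, div_eq_mul_inv, hc]
      have h1' : a / 2 < c * Real.exp (-ξ) := by rw [← hgc]; exact h1
      have : (c - 1) * Real.exp (-ξ) = c * Real.exp (-ξ) - Real.exp (-ξ) := by ring
      have hm2 : m ξ ≥ d * Real.exp (-ξ) := hlow
      linarith
    have hfinal : a / 4 ≤ Filter.liminf m atTop := Filter.le_liminf_of_le hcob_m hkey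
    have hpos : 0 < a / 4 := by positivity
    linarith

end
end

section
/- Let I ⊂ ℝ be a bounded interval and let g ∈ L²(I) with g ≠ 0 (as an element of L²). If K is a set of positive integers such that the Fourier transform ĝ = F g (which extends to an entire function of exponential type) satisfies ĝ(log n) = 0 for every n ∈ K, then Σ_{n∈K} 1/n < ∞. -/
open MeasureTheory Set Filter Topology ComplexConjugate

noncomputable section

section AuxiliaryLemmas

open AddCircle

/-- Factor out a finite set of distinct zeros of an entire function. -/
private lemma factor_zeros (f : ℂ → ℂ) (hf : Differentiable ℂ f) (T : Finset ℂ)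
    (hT : ∀ w ∈ T, f w = 0) :
    ∃ G : ℂ → ℂ, Differentiable ℂ G ∧ ∀ z, f z = (∏ w ∈ T, (z - w)) * G z := by
  classical
  induction T using Finset.induction_on with
  | empty => exact ⟨f, hf, by simp⟩
  | insert w T ha ih =>
    obtain ⟨G, hGd, hGe⟩ := ih (fun u hu => hT u (Finset.mem_insert_of_mem hu))
    have hGw : G w = 0 := by
      have h0 : f w = 0 := hT w (Finset.mem_insert_self w T)
      have hprod : (∏ u ∈ T, (w - u)) ≠ 0 := by
        rw [Finset.prod_ne_zero_iff]
        intro u hu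
        have : u ≠ w := fun h => ha (h ▸ hu)
        exact sub_ne_zero.mpr (fun h => this (by linear_combination -h))
      have := hGe w
      rw [h0] at this
      exact (mul_eq_zero.mp this.symm).resolve_left hprod
    refine ⟨dslope G w, ?_, ?_⟩
    · rw [← differentiableOn_univ]
      exact (Complex.differentiableOn_dslope (by simp)).mpr hGd.differentiableOn
    · intro z
      have hfac : G z = (z - w) * dslope G w z := by
        have := sub_smul_dslope G w z
        rw [hGw, sub_zero] at this
        simpa [smul_eq_mul] using this.symm
      rw [hGe z, hfac, Finset.prod_insert ha]
      ring

private lemma count_zeros {f : ℂ → ℂ} (hf : Differentiable ℂ f) {z₀ : ℂ} {r M : ℝ}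
    (hr : 0 < r) (hz₀ : ‖z₀‖ ≤ r) (T : Finset ℂ) (hT0 : ∀ w ∈ T, f w = 0)
    (hTr : ∀ w ∈ T, ‖w‖ ≤ r) (hM : ∀ z : ℂ, ‖z‖ ≤ 5 * r → ‖f z‖ ≤ M) :
    ‖f z₀‖ * 2 ^ T.card ≤ M := by
  classical
  obtain ⟨G, hGd, hGe⟩ := factor_zeros f hf T hT0
  have hM0 : 0 ≤ M := le_trans (norm_nonneg _) (hM 0 (by simp; positivity))
  have h4r : (0:ℝ) < (4 * r) ^ T.card := by positivity
  -- bound G on the sphere of radius 5r, hence on the closed ball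
  have hGsph : ∀ z ∈ frontier (Metric.ball (0:ℂ) (5 * r)), ‖G z‖ ≤ M / (4 * r) ^ T.card := by
    intro z hz
    rw [frontier_ball (0:ℂ) (by positivity : (5:ℝ) * r ≠ 0), mem_sphere_zero_iff_norm] at hz
    have hprod : (4 * r) ^ T.card ≤ ∏ w ∈ T, ‖z - w‖ := by
      rw [← Finset.prod_const]
      refine Finset.prod_le_prod (fun w _ => by positivity) (fun w hw => ?_)
      have := norm_sub_norm_le z w
      have h2 := hTr w hw
      calc (4:ℝ) * r ≤ ‖z‖ - ‖w‖ := by rw [hz]; linarith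
        _ ≤ ‖z - w‖ := by
          have := norm_sub_norm_le z w
          linarith [abs_le.mp (abs_norm_sub_norm_le z w)]
    have hfz : ‖f z‖ ≤ M := hM z (le_of_eq hz)
    have hfzeq : ‖f z‖ = (∏ w ∈ T, ‖z - w‖) * ‖G z‖ := by
      rw [hGe z, norm_mul, norm_prod]
    rw [le_div_iff₀ h4r]
    calc ‖G z‖ * (4 * r) ^ T.card ≤ ‖G z‖ * ∏ w ∈ T, ‖z - w‖ :=
          mul_le_mul_of_nonneg_left hprod (norm_nonneg _)
      _ = ‖f z‖ := by rw [hfzeq]; ring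
      _ ≤ M := hfz
  have hGz₀ : ‖G z₀‖ ≤ M / (4 * r) ^ T.card := by
    refine Complex.norm_le_of_forall_mem_frontier_norm_le Metric.isBounded_ball
      hGd.diffContOnCl hGsph ?_
    refine subset_closure ?_
    rw [Metric.mem_ball, dist_zero_right]
    linarith
  have hprod₀ : ∏ w ∈ T, ‖z₀ - w‖ ≤ (2 * r) ^ T.card := by
    rw [← Finset.prod_const]
    refine Finset.prod_le_prod (fun w _ => norm_nonneg _) (fun w hw => ?_)
    calc ‖z₀ - w‖ ≤ ‖z₀‖ + ‖w‖ := norm_sub_le _ _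
      _ ≤ 2 * r := by linarith [hTr w hw]
  have hfz₀ : ‖f z₀‖ ≤ (2 * r) ^ T.card * (M / (4 * r) ^ T.card) := by
    rw [hGe z₀, norm_mul, norm_prod]
    exact mul_le_mul hprod₀ hGz₀ (norm_nonneg _) (by positivity)
  calc ‖f z₀‖ * 2 ^ T.card ≤ ((2 * r) ^ T.card * (M / (4 * r) ^ T.card)) * 2 ^ T.card :=
        mul_le_mul_of_nonneg_right hfz₀ (by positivity)
    _ = M * ((2 * r) ^ T.card * 2 ^ T.card / (4 * r) ^ T.card) := by ring
    _ = M := by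
        rw [← mul_pow, show (2:ℝ) * r * 2 = 4 * r by ring, div_self (ne_of_gt h4r), mul_one]

private lemma aux_int {a b : ℝ} {g₀ : ℝ → ℂ} (hgm : AEStronglyMeasurable g₀ (volume.restrict (Ioo a b)))
    (hgi : Integrable g₀ (volume.restrict (Ioo a b))) {c : ℝ}
    (hτc : ∀ τ ∈ Ioo a b, |τ| ≤ c) (z : ℂ) :
    Integrable (fun τ : ℝ => g₀ τ * Complex.exp (-(Complex.I * z * τ)))
      (volume.restrict (Ioo a b)) := by
  refine Integrable.mono' (g := fun τ => ‖g₀ τ‖ * Real.exp (c * ‖z‖))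
    (hgi.norm.mul_const _) ?_ ?_
  · exact hgm.mul ((Complex.continuous_exp.comp (by fun_prop)).aestronglyMeasurable)
  · filter_upwards [ae_restrict_mem measurableSet_Ioo] with τ hτ
    simp only [norm_mul, Complex.norm_exp]
    refine mul_le_mul_of_nonneg_left ?_ (norm_nonneg _)
    rw [Real.exp_le_exp]
    have : (-(Complex.I * z * τ)).re = z.im * τ := by
      simp [Complex.mul_re, Complex.mul_im]
    rw [this]
    calc z.im * τ ≤ |z.im * τ| := le_abs_self _
      _ = |z.im| * |τ| := abs_mul _ _
      _ ≤ ‖z‖ * c := by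
          refine mul_le_mul (Complex.abs_im_le_norm z) (hτc τ hτ) (abs_nonneg _) (norm_nonneg _)
      _ = c * ‖z‖ := by ring

private lemma aux_bound {a b : ℝ} {g₀ : ℝ → ℂ} {c : ℝ} (hτc : ∀ τ ∈ Ioo a b, |τ| ≤ c) (hc : 0 ≤ c)
    (hgi : Integrable g₀ (volume.restrict (Ioo a b))) (z : ℂ) :
    ‖∫ τ in Ioo a b, g₀ τ * Complex.exp (-(Complex.I * z * τ))‖
      ≤ (∫ τ in Ioo a b, ‖g₀ τ‖) * Real.exp (c * ‖z‖) := by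
  calc ‖∫ τ in Ioo a b, g₀ τ * Complex.exp (-(Complex.I * z * τ))‖
      ≤ ∫ τ in Ioo a b, ‖g₀ τ * Complex.exp (-(Complex.I * z * τ))‖ :=
        norm_integral_le_integral_norm _
    _ ≤ ∫ τ in Ioo a b, ‖g₀ τ‖ * Real.exp (c * ‖z‖) := by
        refine integral_mono_of_nonneg (ae_of_all _ fun τ => norm_nonneg _)
          ((Integrable.norm ?_).mul_const _) ?_
        · exact hgi
        · filter_upwards [ae_restrict_mem measurableSet_Ioo] with τ hτ
          simp only [norm_mul, Complex.norm_exp]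
          refine mul_le_mul_of_nonneg_left ?_ (norm_nonneg _)
          rw [Real.exp_le_exp]
          have h1 : (-(Complex.I * z * τ)).re = z.im * τ := by
            simp [Complex.mul_re, Complex.mul_im]
          rw [h1]
          calc z.im * τ ≤ |z.im * τ| := le_abs_self _
            _ = |z.im| * |τ| := abs_mul _ _
            _ ≤ ‖z‖ * c :=
                mul_le_mul (Complex.abs_im_le_norm z) (hτc τ hτ) (abs_nonneg _)
                  (norm_nonneg _)
            _ = c * ‖z‖ := by ring
    _ = (∫ τ in Ioo a b, ‖g₀ τ‖) * Real.exp (c * ‖z‖) := by rw [integral_mul_const]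

set_option maxHeartbeats 1000000 in
private lemma aux_diff {a b : ℝ} {g₀ : ℝ → ℂ} (hgm : AEStronglyMeasurable g₀ (volume.restrict (Ioo a b)))
    (hgi : Integrable g₀ (volume.restrict (Ioo a b))) {c : ℝ}
    (hτc : ∀ τ ∈ Ioo a b, |τ| ≤ c) (hc : 0 ≤ c)
    (hint : ∀ z : ℂ, Integrable (fun τ : ℝ => g₀ τ * Complex.exp (-(Complex.I * z * τ)))
      (volume.restrict (Ioo a b))) :
    Differentiable ℂ (fun z : ℂ => ∫ τ in Ioo a b, g₀ τ * Complex.exp (-(Complex.I * z * τ))) := by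
  intro z₀
  set μ := volume.restrict (Ioo a b)
  set F : ℂ → ℝ → ℂ := fun z τ => g₀ τ * Complex.exp (-(Complex.I * z * τ)) with hF
  set F' : ℂ → ℝ → ℂ := fun z τ => g₀ τ * (-(Complex.I * τ)) * Complex.exp (-(Complex.I * z * τ))
    with hF'
  set bound : ℝ → ℝ := fun τ => ‖g₀ τ‖ * (c * Real.exp (c * (‖z₀‖ + 1))) with hbd
  have hmeas : ∀ᶠ z in 𝓝 z₀, AEStronglyMeasurable (F z) μ := by
    refine Eventually.of_forall fun z => hgm.mul ?_
    exact (Complex.continuous_exp.comp (by fun_prop)).aestronglyMeasurable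
  have hmeas' : AEStronglyMeasurable (F' z₀) μ := by
    refine (hgm.mul ?_).mul ?_
    · exact Continuous.aestronglyMeasurable (by fun_prop)
    · exact (Complex.continuous_exp.comp (by fun_prop)).aestronglyMeasurable
  have hboundint : Integrable bound μ := hgi.norm.mul_const _
  have hbound : ∀ᵐ τ ∂μ, ∀ z ∈ Metric.ball z₀ 1, ‖F' z τ‖ ≤ bound τ := by
    filter_upwards [ae_restrict_mem measurableSet_Ioo] with τ hτ
    intro z hz
    have hre : (-(Complex.I * z * (τ:ℂ))).re = z.im * τ := by
      simp [Complex.mul_re, Complex.mul_im]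
    have hz' : ‖z‖ ≤ ‖z₀‖ + 1 := by
      have h2 := mem_ball_iff_norm.mp hz
      calc ‖z‖ = ‖z₀ + (z - z₀)‖ := by ring_nf
        _ ≤ ‖z₀‖ + ‖z - z₀‖ := norm_add_le _ _
        _ ≤ ‖z₀‖ + 1 := by linarith
    have hexp : Real.exp ((-(Complex.I * z * (τ:ℂ))).re) ≤ Real.exp (c * (‖z₀‖ + 1)) := by
      rw [hre, Real.exp_le_exp]
      calc z.im * τ ≤ |z.im| * |τ| := (le_abs_self _).trans (le_of_eq (abs_mul _ _))
        _ ≤ ‖z‖ * c := mul_le_mul (Complex.abs_im_le_norm z) (hτc τ hτ) (abs_nonneg _)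
            (norm_nonneg _)
        _ ≤ c * (‖z₀‖ + 1) := by rw [mul_comm]; exact mul_le_mul_of_nonneg_left hz' hc
    have : ‖F' z τ‖ = ‖g₀ τ‖ * (|τ| * Real.exp ((-(Complex.I * z * (τ:ℂ))).re)) := by
      rw [hF']
      simp only [norm_mul, Complex.norm_exp, norm_neg,
        norm_mul, Complex.norm_I, one_mul, Complex.norm_real, Real.norm_eq_abs]
      ring
    rw [this, hbd]
    refine mul_le_mul_of_nonneg_left ?_ (norm_nonneg _)
    exact mul_le_mul (hτc τ hτ) hexp (Real.exp_nonneg _) hc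
  have hderiv : ∀ᵐ τ ∂μ, ∀ z ∈ Metric.ball z₀ 1, HasDerivAt (fun z => F z τ) (F' z τ) z := by
    refine ae_of_all _ fun τ z _ => ?_
    have hd : HasDerivAt (fun z : ℂ => -(Complex.I * z * τ)) (-(Complex.I * τ)) z := by
      have e : (fun z : ℂ => -(Complex.I * z * τ)) = fun x => x * (-(Complex.I * τ)) := by funext y; ring
      rw [e]; exact hasDerivAt_mul_const _
    have h2 := hd.cexp.const_mul (g₀ τ)
    simpa [hF, hF', mul_comm, mul_assoc, mul_left_comm] using h2
  exact (hasDerivAt_integral_of_dominated_loc_of_deriv_le (Metric.ball_mem_nhds z₀ one_pos) hmeas (hint z₀) hmeas'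
    hbound hboundint hderiv).2.differentiableAt

private lemma aux_nonzero {a b : ℝ} (hab : a < b) (g : Lp ℂ 2 (mu (Ioo a b)))
    (hv : ∀ x : ℝ, (∫ τ in Ioo a b, g τ * Complex.exp (-(Complex.I * x * τ))) = 0) :
    g = 0 := by
  set T := b - a with hTdef
  have hT0 : 0 < T := by simp [hTdef]; linarith
  haveI : Fact (0 < T) := ⟨hT0⟩
  have haT : a + T = b := by simp [hTdef]
  set g₀ : ℝ → ℂ := ⇑g with hg₀
  have hgsm : StronglyMeasurable g₀ := Lp.stronglyMeasurable g
  set F : AddCircle T → ℂ := AddCircle.liftIoc T a g₀ with hF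
  have hFsm : StronglyMeasurable F := by
    exact (hgsm.comp_measurable measurable_subtype_coe).comp_measurable
      (AddCircle.measurableEquivIoc T a).measurable
  have hrIoc : volume.restrict (Ioo a b) = volume.restrict (Ioc a b) :=
    Measure.restrict_congr_set Ioo_ae_eq_Ioc
  have hgIoc : MemLp g₀ 2 (volume.restrict (Ioc a (a + T))) := by
    rw [haT, ← hrIoc]
    exact Lp.memLp g
  have hmp := AddCircle.measurePreserving_mk T a
  have hFa : ∀ x ∈ Ioc a (a + T), F ↑x = g₀ x := fun x hx => AddCircle.liftIoc_coe_apply hx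
  have hFvol : MemLp F 2 (volume : Measure (AddCircle T)) := by
    rw [← hmp.map_eq]
    rw [memLp_map_measure_iff (by rw [hmp.map_eq]; exact hFsm.aestronglyMeasurable)
      hmp.measurable.aemeasurable]
    refine (memLp_congr_ae ?_).mpr hgIoc
    filter_upwards [ae_restrict_mem measurableSet_Ioc] with x hx
    exact hFa x hx
  have hofT : (ENNReal.ofReal T) ≠ 0 := by simp [hT0]
  have hhaar : (haarAddCircle : Measure (AddCircle T)) = (ENNReal.ofReal T)⁻¹ • volume := by
    rw [AddCircle.volume_eq_smul_haarAddCircle, smul_smul, ENNReal.inv_mul_cancel hofT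
      ENNReal.ofReal_ne_top, one_smul]
  have hFh : MemLp F 2 (haarAddCircle : Measure (AddCircle T)) := by
    rw [hhaar]
    exact hFvol.smul_measure (ENNReal.inv_ne_top.mpr hofT)
  set G : Lp ℂ 2 (haarAddCircle : Measure (AddCircle T)) := hFh.toLp F with hG
  have hcoeffF : ∀ n : ℤ, fourierCoeff F n = 0 := by
    intro n
    rw [fourierCoeff_eq_intervalIntegral F n a]
    have hle : a ≤ a + T := by linarith
    rw [intervalIntegral.integral_of_le hle]
    set ξ : ℝ := 2 * Real.pi * n / T with hξ
    have hptwise : ∀ x ∈ Ioc a (a + T),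
        fourier (-n) (x : AddCircle T) • F ↑x = g₀ x * Complex.exp (-(Complex.I * ξ * x)) := by
      intro x hx
      have hTne : (T : ℂ) ≠ 0 := by
        simp only [ne_eq, Complex.ofReal_eq_zero]
        exact ne_of_gt hT0
      have harg : 2 * (Real.pi : ℂ) * Complex.I * ((-n : ℤ) : ℂ) * (x : ℂ) / (T : ℂ)
          = -(Complex.I * (ξ : ℝ) * (x : ℝ)) := by
        rw [hξ]
        push_cast
        ring
      rw [hFa x hx, fourier_coe_apply, harg, smul_eq_mul, mul_comm]
    have h2 : ∫ x in Ioc a (a + T), fourier (-n) (x : AddCircle T) • F ↑x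
        = ∫ x in Ioc a (a + T), g₀ x * Complex.exp (-(Complex.I * ξ * x)) := by
      refine setIntegral_congr_fun measurableSet_Ioc ?_
      intro x hx
      exact hptwise x hx
    rw [h2, haT, ← hrIoc, hv ξ, smul_zero]
  have hcoeffG : ∀ n : ℤ, fourierCoeff (⇑G) n = 0 := by
    intro n
    have hae : ⇑G =ᵐ[(haarAddCircle : Measure (AddCircle T))] F := hFh.coeFn_toLp
    rw [← hcoeffF n, fourierCoeff, fourierCoeff]
    refine integral_congr_ae ?_
    filter_upwards [hae] with x hx
    rw [hx]
  have hG0 : G = 0 := by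
    have h0 : fourierBasis.repr G = 0 := by
      ext n
      rw [fourierBasis_repr]
      simp [hcoeffG n]
    exact (LinearIsometryEquiv.map_eq_zero_iff _).mp h0
  have hF0 : F =ᵐ[(haarAddCircle : Measure (AddCircle T))] 0 := by
    have h1 : ⇑G =ᵐ[(haarAddCircle : Measure (AddCircle T))] F := hFh.coeFn_toLp
    have h2 : ⇑G =ᵐ[(haarAddCircle : Measure (AddCircle T))] 0 := by
      rw [hG0]; exact Lp.coeFn_zero _ _ _
    exact h1.symm.trans h2
  have hFvol0 : F =ᵐ[(volume : Measure (AddCircle T))] (0 : AddCircle T → ℂ) := by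
    rw [AddCircle.volume_eq_smul_haarAddCircle]
    exact Measure.ae_smul_measure hF0 _
  have hcomp : F ∘ (QuotientAddGroup.mk : ℝ → AddCircle T)
      =ᵐ[volume.restrict (Ioc a (a + T))] (0 : ℝ → ℂ) := by
    have h0 : F =ᵐ[Measure.map (QuotientAddGroup.mk : ℝ → AddCircle T)
        (volume.restrict (Ioc a (a + T)))] (0 : AddCircle T → ℂ) := by
      rw [hmp.map_eq]
      exact hFvol0
    exact ae_eq_comp hmp.measurable.aemeasurable h0
  have hg00 : g₀ =ᵐ[volume.restrict (Ioo a b)] 0 := by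
    rw [hrIoc, ← haT]
    filter_upwards [hcomp, ae_restrict_mem measurableSet_Ioc] with x hx hmem
    rw [← hFa x hmem]
    exact hx
  exact Lp.ext (hg00.trans (Lp.coeFn_zero ℂ 2 (volume.restrict (Ioo a b))).symm)

end AuxiliaryLemmas

set_option maxHeartbeats 2000000 in
/-- If `g ∈ L²(I)` is nonzero on the bounded interval `I = (a,b)` and its
Fourier transform `ĝ(ξ) = (2π)^{-1/2} ∫_I g(τ) e^{-iξτ} dτ` vanishes at `log n` for every
`n ∈ K`, then `Σ_{n∈K} 1/n < ∞`. -/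
theorem statement5 (a b : ℝ) (hab : a < b) (g : Lp ℂ 2 (mu (Ioo a b))) (hg : g ≠ 0)
    (K : Set ℕ) (hK : ∀ n ∈ K, 0 < n)
    (hzero : ∀ n ∈ K, coeff (Ioo a b) g (Real.log n) = 0) :
    Summable fun n : K => (1 : ℝ) / ((n : ℕ) : ℝ) := by
  classical
  set g₀ : ℝ → ℂ := ⇑g with hg₀
  have hgsm : StronglyMeasurable g₀ := Lp.stronglyMeasurable g
  haveI I1 : IsFiniteMeasure (volume.restrict (Ioo a b)) := by
    constructor
    rw [Measure.restrict_apply_univ]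
    simp [Real.volume_Ioo]
  haveI : IsFiniteMeasure (mu (Ioo a b)) := I1
  have hgi : Integrable g₀ (volume.restrict (Ioo a b)) :=
    memLp_one_iff_integrable.mp ((Lp.memLp g).mono_exponent (by norm_num))
  set c : ℝ := max |a| |b| + 1 with hc
  have hc0 : 0 < c := by positivity
  have hτc : ∀ τ ∈ Ioo a b, |τ| ≤ c := by
    intro τ hτ
    rw [abs_le]
    constructor
    · linarith [neg_abs_le a, le_max_left |a| |b|, hτ.1]
    · linarith [le_abs_self b, le_max_right |a| |b|, hτ.2]
  set h : ℂ → ℂ := fun z => ∫ τ in Ioo a b, g₀ τ * Complex.exp (-(Complex.I * z * τ)) with hh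
  have hint := aux_int hgsm.aestronglyMeasurable hgi hτc
  have hdiff : Differentiable ℂ h := aux_diff hgsm.aestronglyMeasurable hgi hτc hc0.le hint
  set Cg : ℝ := ∫ τ in Ioo a b, ‖g₀ τ‖ with hCg
  have hbnd : ∀ z : ℂ, ‖h z‖ ≤ Cg * Real.exp (c * ‖z‖) := fun z => aux_bound hτc hc0.le hgi z
  have hexists : ∃ x₀ : ℝ, h x₀ ≠ 0 := by
    by_contra hcon
    push_neg at hcon
    exact hg (aux_nonzero hab g hcon)
  obtain ⟨x₀, hx₀⟩ := hexists
  have hD : 0 < ‖h ((x₀ : ℝ) : ℂ)‖ := norm_pos_iff.mpr hx₀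
  have hCg0 : 0 < Cg := by
    by_contra hcg
    push_neg at hcg
    have h1 := hbnd x₀
    nlinarith [Real.exp_pos (c * ‖((x₀ : ℝ) : ℂ)‖)]
  -- the rank function
  have hfin : ∀ n : ℕ, ({m | m ∈ K ∧ m ≤ n}).Finite := fun n =>
    (Set.finite_Iic n).subset fun m hm => hm.2
  set rk : ℕ → ℕ := fun n => ((hfin n).toFinset).card with hrk
  set R₀ : ℝ := ‖((x₀ : ℝ) : ℂ)‖ + 1 with hR₀
  have hR₀0 : 0 < R₀ := by positivity
  -- key counting estimate
  have hkey : ∀ n ∈ K, ‖h ((x₀ : ℝ) : ℂ)‖ * 2 ^ (rk n)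
      ≤ Cg * Real.exp (5 * c * (Real.log n + R₀)) := by
    intro n hn
    have hn1 : (1 : ℝ) ≤ (n : ℝ) := by exact_mod_cast hK n hn
    have hlogn : 0 ≤ Real.log n := Real.log_nonneg hn1
    set r : ℝ := Real.log n + R₀ with hr'
    have hr : 0 < r := by positivity
    set T : Finset ℂ := ((hfin n).toFinset).image (fun m : ℕ => ((Real.log m : ℝ) : ℂ)) with hT
    have hmemK : ∀ m ∈ (hfin n).toFinset, m ∈ K ∧ m ≤ n := by
      intro m hm
      simpa using (Set.Finite.mem_toFinset _).mp hm
    have hcard : T.card = rk n := by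
      rw [hT]
      refine Finset.card_image_of_injOn ?_
      intro m₁ hm₁ m₂ hm₂ he
      have h1 : (1:ℝ) ≤ (m₁ : ℝ) := by exact_mod_cast hK m₁ (hmemK m₁ hm₁).1
      have h2 : (1:ℝ) ≤ (m₂ : ℝ) := by exact_mod_cast hK m₂ (hmemK m₂ hm₂).1
      have he' : Real.log m₁ = Real.log m₂ := by
        simp only [Complex.ofReal_inj] at he
        exact he
      have : (m₁ : ℝ) = (m₂ : ℝ) := by
        rw [← Real.exp_log (by linarith : (0:ℝ) < (m₁:ℝ)),
            ← Real.exp_log (by linarith : (0:ℝ) < (m₂:ℝ)), he']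
      exact_mod_cast this
    have hT0 : ∀ w ∈ T, h w = 0 := by
      intro w hw
      rw [hT, Finset.mem_image] at hw
      obtain ⟨m, hm, rfl⟩ := hw
      exact hzero m (hmemK m hm).1
    have hTr : ∀ w ∈ T, ‖w‖ ≤ r := by
      intro w hw
      rw [hT, Finset.mem_image] at hw
      obtain ⟨m, hm, rfl⟩ := hw
      have h1 : (1:ℝ) ≤ (m : ℝ) := by exact_mod_cast hK m (hmemK m hm).1
      have h2 : (m : ℝ) ≤ (n : ℝ) := by exact_mod_cast (hmemK m hm).2
      have h3 : Real.log m ≤ Real.log n := Real.log_le_log (by linarith) h2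
      rw [Complex.norm_real, Real.norm_eq_abs, abs_of_nonneg (Real.log_nonneg h1)]
      linarith
    have hz₀r : ‖((x₀ : ℝ) : ℂ)‖ ≤ r := by
      rw [hr', hR₀]
      linarith
    have hM : ∀ z : ℂ, ‖z‖ ≤ 5 * r → ‖h z‖ ≤ Cg * Real.exp (5 * c * r) := by
      intro z hz
      refine (hbnd z).trans ?_
      refine mul_le_mul_of_nonneg_left ?_ hCg0.le
      rw [Real.exp_le_exp]
      calc c * ‖z‖ ≤ c * (5 * r) := mul_le_mul_of_nonneg_left hz hc0.le
        _ = 5 * c * r := by ring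
    have := count_zeros hdiff hr hz₀r T hT0 hTr hM
    rw [hcard] at this
    exact this
  -- develop the pointwise geometric bound
  set C₁ : ℝ := Cg * Real.exp (5 * c * R₀) / ‖h ((x₀ : ℝ) : ℂ)‖ with hC₁
  have hC₁0 : 0 < C₁ := by positivity
  have hpow : ∀ n ∈ K, (2:ℝ) ^ (rk n) ≤ C₁ * Real.exp (5 * c * Real.log n) := by
    intro n hn
    have := hkey n hn
    rw [hC₁]
    rw [div_mul_eq_mul_div, le_div_iff₀ hD]
    calc (2:ℝ) ^ rk n * ‖h ((x₀ : ℝ) : ℂ)‖ = ‖h ((x₀ : ℝ) : ℂ)‖ * 2 ^ rk n := by ring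
      _ ≤ Cg * Real.exp (5 * c * (Real.log n + R₀)) := this
      _ = Cg * Real.exp (5 * c * R₀) * Real.exp (5 * c * Real.log n) := by
          rw [mul_assoc Cg, ← Real.exp_add]
          congr 1
          rw [Real.exp_eq_exp]
          ring
  set q : ℝ := Real.exp (-(Real.log 2 / (5 * c))) with hq
  have hq0 : 0 < q := Real.exp_pos _
  have hq1 : q < 1 := by
    rw [hq, Real.exp_lt_one_iff]
    have : 0 < Real.log 2 := Real.log_pos (by norm_num)
    have : 0 < Real.log 2 / (5 * c) := by positivity
    linarith
  set C₂ : ℝ := Real.exp (Real.log C₁ / (5 * c)) with hC₂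
  have hptb : ∀ n : K, (1:ℝ) / ((n : ℕ) : ℝ) ≤ C₂ * q ^ (rk n) := by
    rintro ⟨n, hn⟩
    simp only
    have hn1 : (1 : ℝ) ≤ (n : ℝ) := by exact_mod_cast hK n hn
    have hnpos : (0:ℝ) < n := by linarith
    have h1 := hpow n hn
    -- take logarithms
    have hlog : (rk n : ℝ) * Real.log 2 ≤ Real.log C₁ + 5 * c * Real.log n := by
      have h2 : Real.log ((2:ℝ) ^ rk n) ≤ Real.log (C₁ * Real.exp (5 * c * Real.log n)) :=
        Real.log_le_log (by positivity) h1
      rw [Real.log_pow, Real.log_mul (ne_of_gt hC₁0) (Real.exp_ne_zero _),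
        Real.log_exp] at h2
      exact_mod_cast h2
    have hlog2 : -Real.log n ≤ (Real.log C₁ - (rk n : ℝ) * Real.log 2) / (5 * c) := by
      rw [le_div_iff₀ (by positivity : (0:ℝ) < 5 * c)]
      nlinarith
    have hexp : (1:ℝ) / n = Real.exp (-Real.log n) := by
      rw [Real.exp_neg, Real.exp_log hnpos, one_div]
    rw [hexp]
    calc Real.exp (-Real.log n)
        ≤ Real.exp ((Real.log C₁ - (rk n : ℝ) * Real.log 2) / (5 * c)) :=
          Real.exp_le_exp.mpr hlog2
      _ = C₂ * q ^ (rk n) := by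
          rw [hC₂, hq, ← Real.exp_nat_mul, ← Real.exp_add]
          congr 1
          field_simp
          ring
  have hrkmono : ∀ n m : K, ((n : ℕ) : ℕ) < (m : ℕ) → rk n < rk m := by
    rintro ⟨n, hn⟩ ⟨m, hm⟩ hlt
    simp only at hlt ⊢
    refine Finset.card_lt_card ?_
    rw [Finset.ssubset_iff_of_subset]
    · refine ⟨m, ?_, ?_⟩
      · rw [Set.Finite.mem_toFinset]
        exact ⟨hm, le_refl m⟩
      · rw [Set.Finite.mem_toFinset]
        rintro ⟨-, hmn⟩
        omega
    · intro x hx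
      rw [Set.Finite.mem_toFinset] at hx ⊢
      exact ⟨hx.1, hx.2.trans hlt.le⟩
  have hrkinj : Function.Injective (fun n : K => rk (n : ℕ)) := by
    rintro ⟨n, hn⟩ ⟨m, hm⟩ he
    simp only at he
    rcases lt_trichotomy n m with hlt | heq | hgt
    · exact absurd he (ne_of_lt (hrkmono ⟨n, hn⟩ ⟨m, hm⟩ hlt))
    · exact Subtype.ext heq
    · exact absurd he.symm (ne_of_lt (hrkmono ⟨m, hm⟩ ⟨n, hn⟩ hgt))
  have hsum : Summable (fun k : ℕ => C₂ * q ^ k) :=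
    (summable_geometric_of_lt_one hq0.le hq1).mul_left C₂
  have hsum2 : Summable ((fun k : ℕ => C₂ * q ^ k) ∘ (fun n : K => rk (n : ℕ))) :=
    hsum.comp_injective hrkinj
  refine Summable.of_nonneg_of_le (fun n => by positivity) (fun n => hptb n) hsum2

end
end

section
/- Let I ⊂ ℝ be a bounded interval and let L ⊂ ℝ be a measurable set of positive Lebesgue measure. Then the operator g ↦ χ_I · F⁻¹(χ_L · F g) is injective on L²(I): if g ∈ L²(I) and χ_I F⁻¹(χ_L F g) = 0 in L²(I), then g = 0. -/
open MeasureTheory Set Filter Topology ComplexConjugate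
open scoped ENNReal

noncomputable section

lemma entireC (a b : ℝ) (f : ℝ → ℂ) (hf : Integrable f (volume.restrict (Ioo a b))) :
    Differentiable ℂ (fun z : ℂ => ∫ τ in Ioo a b, f τ * Complex.exp (-(Complex.I * z * τ))) := by
  intro z₀
  set R : ℝ := max |a| |b| with hR
  have hR0 : 0 ≤ R := le_trans (abs_nonneg a) (le_max_left _ _)
  have hre : ∀ (z : ℂ) (τ : ℝ), (-(Complex.I * z * (τ:ℂ))).re = z.im * τ := by
    intro z τ; simp [Complex.mul_re, Complex.mul_im]
  have habs : ∀ τ ∈ Ioo a b, |τ| ≤ R := by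
    intro τ hτ
    rw [abs_le]
    constructor <;>
      linarith [neg_abs_le a, le_abs_self b, le_max_left |a| |b|, le_max_right |a| |b|,
        hτ.1, hτ.2]
  have hexp_cont : ∀ z : ℂ, Continuous fun τ : ℝ => Complex.exp (-(Complex.I * z * τ)) := by
    intro z; fun_prop
  have hmeas : ∀ z : ℂ,
      AEStronglyMeasurable (fun τ : ℝ => f τ * Complex.exp (-(Complex.I * z * τ)))
        (volume.restrict (Ioo a b)) := fun z =>
    hf.aestronglyMeasurable.mul (hexp_cont z).aestronglyMeasurable
  have hnorm : ∀ (z : ℂ) (τ : ℝ), ‖f τ * Complex.exp (-(Complex.I * z * τ))‖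
      = ‖f τ‖ * Real.exp (z.im * τ) := by
    intro z τ
    rw [norm_mul, Complex.norm_exp, hre]
  have hint : ∀ z : ℂ, Integrable (fun τ : ℝ => f τ * Complex.exp (-(Complex.I * z * τ)))
      (volume.restrict (Ioo a b)) := by
    intro z
    refine (hf.norm.mul_const (Real.exp (R * |z.im|))).mono' (hmeas z) ?_
    filter_upwards [ae_restrict_mem measurableSet_Ioo] with τ hτ
    rw [hnorm]
    refine mul_le_mul_of_nonneg_left (Real.exp_le_exp.2 ?_) (norm_nonneg _)
    calc z.im * τ ≤ |z.im * τ| := le_abs_self _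
    _ = |τ| * |z.im| := by rw [abs_mul]; ring
    _ ≤ R * |z.im| := mul_le_mul_of_nonneg_right (habs τ hτ) (abs_nonneg _)
  have key := hasDerivAt_integral_of_dominated_loc_of_deriv_le (μ := volume.restrict (Ioo a b))
    (F := fun (z : ℂ) (τ : ℝ) => f τ * Complex.exp (-(Complex.I * z * τ)))
    (F' := fun (z : ℂ) (τ : ℝ) => f τ * (-(Complex.I * τ)) * Complex.exp (-(Complex.I * z * τ)))
    (x₀ := z₀) (bound := fun τ => ‖f τ‖ * (R * Real.exp (R * (‖z₀‖ + 1))))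
    (s := Metric.ball z₀ 1) (Metric.ball_mem_nhds z₀ zero_lt_one)
    (Eventually.of_forall fun z => hmeas z) (hint z₀)
    ?_ ?_ ?_ ?_
  · exact key.2.differentiableAt
  · exact (hf.aestronglyMeasurable.mul
      (Continuous.aestronglyMeasurable (by fun_prop : Continuous
        fun τ : ℝ => -(Complex.I * (τ:ℂ))))).mul (hexp_cont z₀).aestronglyMeasurable
  · filter_upwards [ae_restrict_mem measurableSet_Ioo] with τ hτ z hz
    rw [norm_mul, norm_mul, Complex.norm_exp, hre]
    have h1 : ‖-(Complex.I * (τ:ℂ))‖ ≤ R := by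
      rw [norm_neg, norm_mul, Complex.norm_I, one_mul, Complex.norm_real, Real.norm_eq_abs]
      exact habs τ hτ
    have h2 : Real.exp (z.im * τ) ≤ Real.exp (R * (‖z₀‖ + 1)) := by
      apply Real.exp_le_exp.2
      have him : |z.im| ≤ ‖z₀‖ + 1 := by
        calc |z.im| ≤ ‖z‖ := Complex.abs_im_le_norm z
        _ ≤ ‖z₀‖ + ‖z - z₀‖ := by
            have := norm_add_le z₀ (z - z₀); simpa using this
        _ ≤ ‖z₀‖ + 1 := by
            have : ‖z - z₀‖ < 1 := by
              rw [← Complex.dist_eq]; simpa [Metric.mem_ball] using hz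
            linarith
      calc z.im * τ ≤ |z.im * τ| := le_abs_self _
      _ = |τ| * |z.im| := by rw [abs_mul]; ring
      _ ≤ R * (‖z₀‖ + 1) :=
          mul_le_mul (habs τ hτ) him (abs_nonneg _) hR0
    calc ‖f τ‖ * ‖-(Complex.I * (τ:ℂ))‖ * Real.exp (z.im * τ)
        ≤ (‖f τ‖ * R) * Real.exp (R * (‖z₀‖ + 1)) :=
          mul_le_mul (mul_le_mul_of_nonneg_left h1 (norm_nonneg _)) h2
            (Real.exp_pos _).le (by positivity)
    _ = ‖f τ‖ * (R * Real.exp (R * (‖z₀‖ + 1))) := by ring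
  · exact hf.norm.mul_const _
  · filter_upwards with τ z hz
    have h1 : HasDerivAt (fun z : ℂ => -(Complex.I * z * τ)) (-(Complex.I * τ)) z := by
      have h := ((hasDerivAt_id z).const_mul (Complex.I * (τ:ℂ))).neg
      simpa using h.congr_of_eventuallyEq
        (Eventually.of_forall (fun w => by simp only [id_eq, Pi.neg_apply]; ring))
    have h2 := (h1.cexp).const_mul (f τ)
    exact h2.congr_deriv (by ring)


lemma norm_mul_exp (c : ℂ) (s τ : ℝ) : ‖c * Complex.exp (-(Complex.I * s * τ))‖ = ‖c‖ := by
  rw [norm_mul, Complex.norm_exp]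
  have : (-(Complex.I * s * (τ:ℝ))).re = 0 := by simp [Complex.mul_re, Complex.mul_im]
  rw [this, Real.exp_zero, mul_one]

lemma parseval_shift (a b : ℝ) (hab : a < b) (f : ℝ → ℂ) (hsm : StronglyMeasurable f)
    (hf : MemLp f 2 (volume.restrict (Ioo a b))) (s : ℝ) :
    Summable (fun n : ℤ => ‖coeff (Ioo a b) f (s + n * (2 * Real.pi / (b - a)))‖ ^ 2) ∧
      ∑' n : ℤ, ‖coeff (Ioo a b) f (s + n * (2 * Real.pi / (b - a)))‖ ^ 2
        = (b - a) * ∫ τ in Ioo a b, ‖f τ‖ ^ 2 := by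
  have hT : 0 < b - a := by linarith
  haveI : Fact (0 < b - a) := ⟨hT⟩
  have haT : a + (b - a) = b := by ring
  set fs : ℝ → ℂ := fun τ => f τ * Complex.exp (-(Complex.I * s * τ)) with hfs_def
  have hfs_sm : StronglyMeasurable fs :=
    hsm.mul (Continuous.stronglyMeasurable (by fun_prop))
  have hnorm_fs : ∀ τ : ℝ, ‖fs τ‖ = ‖f τ‖ := fun τ => norm_mul_exp _ _ _
  have hIoc : volume.restrict (Ioo a b) = volume.restrict (Ioc a b) :=
    Measure.restrict_congr_set Ioo_ae_eq_Ioc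
  have hfs_mem : MemLp fs 2 (volume.restrict (Ioc a b)) := by
    rw [← hIoc]
    exact hf.of_le hfs_sm.aestronglyMeasurable
      (Eventually.of_forall fun τ => le_of_eq (hnorm_fs τ))
  set F : AddCircle (b - a) → ℂ := AddCircle.liftIoc (b - a) a fs with hF_def
  have hF_sm : StronglyMeasurable F := by
    have hm : Measurable fun x : AddCircle (b - a) => ((AddCircle.equivIoc (b - a) a x : ℝ)) :=
      measurable_subtype_coe.comp (AddCircle.measurableEquivIoc (b - a) a).measurable
    exact hfs_sm.comp_measurable hm
  have hcoe : ∀ᵐ x ∂(volume.restrict (Ioc a b)),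
      F ((x : ℝ) : AddCircle (b - a)) = fs x := by
    filter_upwards [ae_restrict_mem measurableSet_Ioc] with x hx
    exact AddCircle.liftIoc_coe_apply (by rw [haT]; exact hx)
  have hFvol : MemLp F 2 (volume : Measure (AddCircle (b - a))) := by
    refine ⟨hF_sm.aestronglyMeasurable, ?_⟩
    have h1 : eLpNorm F 2 (volume : Measure (AddCircle (b - a)))
        = eLpNorm (F ∘ (fun x : ℝ => (x : AddCircle (b - a)))) 2
            (volume.restrict (Ioc a (a + (b - a)))) :=
      (eLpNorm_comp_measurePreserving hF_sm.aestronglyMeasurable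
        (AddCircle.measurePreserving_mk (b - a) a)).symm
    rw [h1, haT]
    have h2 : eLpNorm (fun x : ℝ => F ((x : ℝ) : AddCircle (b - a))) 2
        (volume.restrict (Ioc a b)) = eLpNorm fs 2 (volume.restrict (Ioc a b)) :=
      eLpNorm_congr_ae hcoe
    exact lt_of_le_of_lt (le_of_eq h2) hfs_mem.2
  have hhaar : (AddCircle.haarAddCircle : Measure (AddCircle (b - a)))
      = (ENNReal.ofReal (b - a))⁻¹ • (volume : Measure (AddCircle (b - a))) := by
    rw [AddCircle.volume_eq_smul_haarAddCircle, smul_smul, ENNReal.inv_mul_cancel, one_smul]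
    · exact (ENNReal.ofReal_pos.2 hT).ne'
    · exact ENNReal.ofReal_ne_top
  have hFhaar : MemLp F 2 (AddCircle.haarAddCircle : Measure (AddCircle (b - a))) := by
    rw [hhaar]
    exact hFvol.smul_measure (ENNReal.inv_ne_top.2 (ENNReal.ofReal_pos.2 hT).ne')
  set Fl : Lp ℂ 2 (AddCircle.haarAddCircle : Measure (AddCircle (b - a))) := hFhaar.toLp F
  have hcoeff_eq : ∀ n : ℤ, fourierCoeff (⇑Fl) n = fourierCoeff F n := by
    intro n
    refine integral_congr_ae ?_
    filter_upwards [hFhaar.coeFn_toLp] with t ht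
    rw [ht]
  have hba : ((b : ℂ) - a) ≠ 0 := sub_ne_zero.2 (by exact_mod_cast hab.ne')
  have hkey : ∀ n : ℤ, coeff (Ioo a b) f (s + n * (2 * Real.pi / (b - a)))
      = (b - a) • fourierCoeff F n := by
    intro n
    have hab2 : a < a + (b - a) := by linarith
    have hscal : (b - a) * (1 / (a + (b - a) - a)) = 1 := by
      have h2 : a + (b - a) - a = b - a := by ring
      rw [h2]; field_simp
    have hIoc2 : (volume.restrict (Ioc a (a + (b - a)))) = volume.restrict (Ioc a b) := by
      rw [haT]
    have e1 : ∀ (u v c : ℂ), Complex.exp u * (c * Complex.exp v)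
        = c * Complex.exp (v + u) := by
      intros u v c; rw [Complex.exp_add]; ring
    symm
    calc (b - a) • fourierCoeff F n
        = ∫ x in Ioc a (a + (b - a)),
            fourier (-n) ((x : ℝ) : AddCircle (a + (b - a) - a)) • fs x := by
          rw [hF_def, fourierCoeff_liftIoc_eq, fourierCoeffOn_eq_integral,
            intervalIntegral.integral_of_le hab2.le, smul_smul, hscal, one_smul]
      _ = ∫ x in Ioc a (a + (b - a)),
            f x * Complex.exp (-(Complex.I * ((s + n * (2 * Real.pi / (b - a)) : ℝ) : ℂ) * x)) := by
          refine setIntegral_congr_fun measurableSet_Ioc fun x _ => ?_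
          rw [fourier_coe_apply, smul_eq_mul, hfs_def, e1]
          congr 2
          push_cast
          have h2 : ((a:ℂ) + ((b:ℂ) - (a:ℂ)) - (a:ℂ)) = (b:ℂ) - (a:ℂ) := by ring
          rw [h2]
          field_simp
          ring
      _ = coeff (Ioo a b) f (s + n * (2 * Real.pi / (b - a))) := by
          rw [coeff, hIoc, hIoc2]
  constructor
  · have h1 : Summable fun i : ℤ => ‖fourierBasis.repr Fl i‖ ^ ((2:ℝ≥0∞)).toReal :=
      (lp.memℓp (fourierBasis.repr Fl)).summable (by norm_num)
    have h2 : Summable fun i : ℤ => ‖fourierCoeff F i‖ ^ 2 := by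
      refine h1.congr fun i => ?_
      rw [fourierBasis_repr, hcoeff_eq]
      norm_num
    refine ((h2.mul_left ((b - a) ^ 2)).congr fun n => ?_)
    rw [hkey n, norm_smul, Real.norm_eq_abs, abs_of_pos hT, mul_pow]
  · have hps := tsum_sq_fourierCoeff Fl
    simp_rw [hcoeff_eq] at hps
    have h2 : Summable fun i : ℤ => ‖fourierCoeff F i‖ ^ 2 := by
      refine ((lp.memℓp (fourierBasis.repr Fl)).summable (by norm_num)).congr fun i => ?_
      rw [fourierBasis_repr, hcoeff_eq]
      norm_num
    have hL : ∑' n : ℤ, ‖coeff (Ioo a b) f (s + n * (2 * Real.pi / (b - a)))‖ ^ 2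
        = (b - a) ^ 2 * ∑' i : ℤ, ‖fourierCoeff F i‖ ^ 2 := by
      rw [← tsum_mul_left]
      congr 1
      funext n
      rw [hkey n, norm_smul, Real.norm_eq_abs, abs_of_pos hT, mul_pow]
    have hRhaar : ∫ t, ‖Fl t‖ ^ 2 ∂(AddCircle.haarAddCircle)
        = ∫ t, ‖F t‖ ^ 2 ∂(AddCircle.haarAddCircle : Measure (AddCircle (b - a))) := by
      refine integral_congr_ae ?_
      filter_upwards [hFhaar.coeFn_toLp] with t ht
      rw [ht]
    have hvol : ∫ t, ‖F t‖ ^ 2 ∂(volume : Measure (AddCircle (b - a)))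
        = ∫ τ in Ioo a b, ‖f τ‖ ^ 2 := by
      rw [← AddCircle.integral_preimage (b - a) a (fun t => ‖F t‖ ^ 2)]
      rw [haT, ← hIoc]
      rw [hIoc]
      refine integral_congr_ae ?_
      filter_upwards [hcoe] with x hx
      rw [hx, hnorm_fs]
    have hsmul : ∫ t, ‖F t‖ ^ 2 ∂(volume : Measure (AddCircle (b - a)))
        = (b - a) * ∫ t, ‖F t‖ ^ 2 ∂(AddCircle.haarAddCircle : Measure (AddCircle (b - a))) := by
      rw [AddCircle.volume_eq_smul_haarAddCircle, integral_smul_measure,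
        ENNReal.toReal_ofReal hT.le, smul_eq_mul]
    rw [hL, hps, hRhaar]
    rw [← hvol, hsmul]
    ring

lemma cont_coeff (a b : ℝ) (f : ℝ → ℂ) (hf : Integrable f (volume.restrict (Ioo a b))) :
    Continuous (fun ξ : ℝ => coeff (Ioo a b) f ξ) :=
  (entireC a b f hf).continuous.comp Complex.continuous_ofReal

lemma integrable_normsq (a b : ℝ) (hab : a < b) (f : ℝ → ℂ) (hsm : StronglyMeasurable f)
    (hf : MemLp f 2 (volume.restrict (Ioo a b))) :
    Integrable (fun ξ : ℝ => ‖coeff (Ioo a b) f ξ‖ ^ 2) volume := by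
  haveI : IsFiniteMeasure (volume.restrict (Ioo a b)) :=
    ⟨by rw [Measure.restrict_apply_univ]; exact measure_Ioo_lt_top⟩
  have hint_f : Integrable f (volume.restrict (Ioo a b)) := hf.integrable one_le_two
  have hc_cont : Continuous (fun ξ : ℝ => coeff (Ioo a b) f ξ) := cont_coeff a b f hint_f
  set Ω : ℝ := 2 * Real.pi / (b - a) with hΩ_def
  have hΩ : 0 < Ω := by
    apply div_pos (by positivity) (by linarith)
  set φ : ℝ → ℝ≥0∞ := fun ξ => ENNReal.ofReal (‖coeff (Ioo a b) f ξ‖ ^ 2) with hφ_def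
  have hmeas : Measurable φ :=
    ENNReal.measurable_ofReal.comp ((hc_cont.norm.pow 2).measurable)
  have htrans : ∀ n : ℤ, ∫⁻ ξ in Ioc (0 + n • Ω) (0 + (n + 1) • Ω), φ ξ
      = ∫⁻ s in Ioc (0:ℝ) Ω, φ (s + n • Ω) := by
    intro n
    have hpre : (fun x : ℝ => x + n • Ω) ⁻¹' (Ioc (0 + n • Ω) (0 + (n + 1) • Ω))
        = Ioc (0:ℝ) Ω := by
      rw [preimage_add_const_Ioc, show (0:ℝ) + n • Ω - n • Ω = 0 by
        simp only [zero_add, sub_self], show (0:ℝ) + (n + 1) • Ω - n • Ω = Ω by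
        simp only [zero_add, add_zsmul, one_zsmul, add_sub_cancel_left]]
    have mp := (measurePreserving_add_right volume (n • Ω)).restrict_preimage
      (measurableSet_Ioc (a := 0 + n • Ω) (b := 0 + (n + 1) • Ω))
    rw [hpre] at mp
    exact (mp.lintegral_comp hmeas).symm
  have hsum : ∀ s : ℝ, ∑' n : ℤ, φ (s + n • Ω)
      = ENNReal.ofReal ((b - a) * ∫ τ in Ioo a b, ‖f τ‖ ^ 2) := by
    intro s
    have h1 := parseval_shift a b hab f hsm hf s
    have hpt : ∀ n : ℤ, s + n • Ω = s + (n : ℝ) * (2 * Real.pi / (b - a)) := by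
      intro n; rw [zsmul_eq_mul, hΩ_def]
    calc ∑' n : ℤ, φ (s + n • Ω)
        = ∑' n : ℤ, ENNReal.ofReal
            (‖coeff (Ioo a b) f (s + (n : ℝ) * (2 * Real.pi / (b - a)))‖ ^ 2) :=
          tsum_congr fun n => by rw [hpt n]
      _ = ENNReal.ofReal
            (∑' n : ℤ, ‖coeff (Ioo a b) f (s + (n : ℝ) * (2 * Real.pi / (b - a)))‖ ^ 2) :=
          (ENNReal.ofReal_tsum_of_nonneg (fun n => by positivity) h1.1).symm
      _ = ENNReal.ofReal ((b - a) * ∫ τ in Ioo a b, ‖f τ‖ ^ 2) := by rw [h1.2]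
  have hlt : ∫⁻ ξ, φ ξ < ⊤ := by
    rw [← setLIntegral_univ, ← iUnion_Ioc_add_zsmul hΩ 0,
      lintegral_iUnion (fun n => measurableSet_Ioc) (pairwise_disjoint_Ioc_add_zsmul 0 Ω)]
    have : ∀ n : ℤ, ∫⁻ ξ in Ioc (0 + n • Ω) (0 + (n + 1) • Ω), φ ξ
        = ∫⁻ s in Ioc (0:ℝ) Ω, φ (s + n • Ω) := htrans
    rw [tsum_congr this]
    have hswap := lintegral_tsum (μ := volume.restrict (Ioc (0:ℝ) Ω))
      (f := fun (n : ℤ) (s : ℝ) => φ (s + n • Ω))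
      (fun n => (hmeas.comp (measurable_add_const (n • Ω))).aemeasurable)
    rw [← hswap]
    calc ∫⁻ s in Ioc (0:ℝ) Ω, ∑' n : ℤ, φ (s + n • Ω)
        = ∫⁻ _ in Ioc (0:ℝ) Ω,
            ENNReal.ofReal ((b - a) * ∫ τ in Ioo a b, ‖f τ‖ ^ 2) := by
          exact setLIntegral_congr_fun measurableSet_Ioc
            (fun s _ => hsum s)
    _ = ENNReal.ofReal ((b - a) * ∫ τ in Ioo a b, ‖f τ‖ ^ 2) * volume (Ioc (0:ℝ) Ω) :=
          setLIntegral_const _ _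
    _ < ⊤ := ENNReal.mul_lt_top ENNReal.ofReal_lt_top (by simp)
  refine ⟨(hc_cont.norm.pow 2).aestronglyMeasurable, ?_⟩
  rw [hasFiniteIntegral_iff_ofReal (Eventually.of_forall fun ξ => by positivity)]
  exact hlt


/-- For a bounded interval `I = (a,b)` and a measurable set `L` of positive
Lebesgue measure, the operator `g ↦ χ_I F⁻¹(χ_L F g)` is injective on `L²(I)`. -/
theorem statement6 (a b : ℝ) (hab : a < b) (L : Set ℝ) (hL : MeasurableSet L)
    (hLpos : 0 < volume L)
    (M : Lp ℂ 2 (mu (Ioo a b)) →L[ℂ] Lp ℂ 2 (mu (Ioo a b)))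
    (hM : IsMultOp L (Ioo a b) M) :
    ∀ g : Lp ℂ 2 (mu (Ioo a b)), M g = 0 → g = 0 := by
  intro g hg0
  haveI : IsFiniteMeasure (volume.restrict (Ioo a b)) :=
    ⟨by rw [Measure.restrict_apply_univ]; exact measure_Ioo_lt_top⟩
  have hsm : StronglyMeasurable (⇑g) := Lp.stronglyMeasurable g
  have hmem : MemLp (⇑g) 2 (volume.restrict (Ioo a b)) := Lp.memLp g
  have hint_f : Integrable (⇑g) (volume.restrict (Ioo a b)) := hmem.integrable one_le_two
  set c : ℝ → ℂ := fun ξ => coeff (Ioo a b) (⇑g) ξ with hc_def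
  have hc_cont : Continuous c := cont_coeff a b (⇑g) hint_f
  -- Step A: ∫_L ‖c‖² = 0
  have hM' := hM g g
  rw [hg0] at hM'
  have hzero : (∫ t in Ioo a b, ((0 : Lp ℂ 2 (mu (Ioo a b))) t) * conj (g t)) = 0 := by
    have h0 : ∀ᵐ t ∂(volume.restrict (Ioo a b)),
        ((0 : Lp ℂ 2 (mu (Ioo a b))) t) * conj (g t) = 0 := by
      filter_upwards [Lp.coeFn_zero (E := ℂ) (p := 2) (μ := mu (Ioo a b))] with t ht
      rw [ht]
      simp
    exact integral_eq_zero_of_ae h0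
  rw [hzero] at hM'
  have h2π : (1 / (2 * (Real.pi : ℂ))) ≠ 0 :=
    one_div_ne_zero (mul_ne_zero two_ne_zero (by exact_mod_cast Real.pi_ne_zero))
  have hintL : (∫ ξ in L, c ξ * conj (c ξ)) = 0 := by
    rcases mul_eq_zero.1 hM'.symm with h | h
    · exact absurd h h2π
    · exact h
  have hconv : (∫ ξ in L, c ξ * conj (c ξ))
      = ((∫ ξ in L, ‖c ξ‖ ^ 2 : ℝ) : ℂ) := by
    calc (∫ ξ in L, c ξ * conj (c ξ))
        = ∫ ξ in L, ((‖c ξ‖ ^ 2 : ℝ) : ℂ) := by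
          refine integral_congr_ae (Eventually.of_forall fun ξ => ?_)
          show c ξ * conj (c ξ) = ((‖c ξ‖ ^ 2 : ℝ) : ℂ)
          rw [Complex.mul_conj, Complex.normSq_eq_norm_sq]
      _ = ((∫ ξ in L, ‖c ξ‖ ^ 2 : ℝ) : ℂ) := integral_ofReal
  have hrezero : (∫ ξ in L, ‖c ξ‖ ^ 2) = 0 := by
    have := hconv ▸ hintL
    exact_mod_cast this
  have hIL : Integrable (fun ξ => ‖c ξ‖ ^ 2) (volume.restrict L) :=
    (integrable_normsq a b hab (⇑g) hsm hmem).restrict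
  have hzeroL : (fun ξ => ‖c ξ‖ ^ 2) =ᵐ[volume.restrict L] 0 :=
    (integral_eq_zero_iff_of_nonneg_ae (Eventually.of_forall fun ξ => by positivity) hIL).1
      hrezero
  have hcL : ∀ᵐ ξ ∂(volume.restrict L), c ξ = 0 := by
    filter_upwards [hzeroL] with ξ hξ
    have : ‖c ξ‖ = 0 := by
      have h2 : ‖c ξ‖ ^ 2 = 0 := hξ
      nlinarith [norm_nonneg (c ξ), sq_nonneg ‖c ξ‖]
    simpa using this
  -- Step B: accumulation point of zeros inside L
  set Z : Set ℝ := {x : ℝ | c x = 0} with hZ_def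
  have hZmeas : MeasurableSet Z := isClosed_eq hc_cont continuous_const |>.measurableSet
  have hdiff : volume (L \ Z) = 0 := by
    have h1 : volume (Zᶜ ∩ L) = 0 := by
      have h2 : (volume.restrict L) Zᶜ = 0 := ae_iff.1 hcL
      rwa [Measure.restrict_apply hZmeas.compl] at h2
    rw [diff_eq, inter_comm]
    exact h1
  have hLZ : volume (L ∩ Z) = volume L := by
    have h3 := measure_inter_add_diff (μ := volume) L hZmeas
    rw [hdiff, add_zero] at h3
    exact h3
  have hLZpos : 0 < volume (L ∩ Z) := hLZ ▸ hLpos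
  obtain ⟨n, hn⟩ : ∃ n : ℕ, 0 < volume (L ∩ Z ∩ Icc (-(n:ℝ)) n) := by
    by_contra h
    push_neg at h
    simp only [le_zero_iff] at h
    have hcover : L ∩ Z ⊆ ⋃ n : ℕ, (L ∩ Z ∩ Icc (-(n:ℝ)) n) := by
      intro x hx
      obtain ⟨m, hm⟩ := exists_nat_ge |x|
      exact mem_iUnion.2 ⟨m, hx, mem_Icc.2 ⟨(abs_le.1 hm).1, (abs_le.1 hm).2⟩⟩
    have h4 : volume (L ∩ Z) = 0 :=
      le_antisymm ((measure_mono hcover).trans (measure_iUnion_null h).le) (by positivity)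
    exact hLZpos.ne' h4
  have hinf : (L ∩ Z ∩ Icc (-(n:ℝ)) n).Infinite := by
    intro hfin
    exact hn.ne' (hfin.measure_zero volume)
  obtain ⟨x₀, -, hacc⟩ := hinf.exists_accPt_of_subset_isCompact isCompact_Icc inter_subset_right
  -- Step C: identity theorem
  have hanalC : AnalyticOnNhd ℂ
      (fun z : ℂ => ∫ τ in Ioo a b, g τ * Complex.exp (-(Complex.I * z * τ))) univ :=
    Complex.analyticOnNhd_univ_iff_differentiable.2 (entireC a b (⇑g) hint_f)
  have hanal : AnalyticOnNhd ℝ c univ := by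
    have h1 := (hanalC.restrictScalars (𝕜 := ℝ)).comp
      (Complex.ofRealCLM.analyticOnNhd univ) (mapsTo_univ _ _)
    exact h1
  have hfreq : ∃ᶠ x in 𝓝[≠] x₀, c x = 0 := by
    have h2 := accPt_iff_frequently.1 hacc
    rw [frequently_nhdsWithin_iff]
    exact h2.mono fun y hy => ⟨hy.2.1.2, by simpa using hy.1⟩
  have hczero : ∀ ξ : ℝ, c ξ = 0 := fun ξ =>
    hanal.eqOn_zero_of_preconnected_of_frequently_eq_zero isPreconnected_univ
      (mem_univ x₀) hfreq (mem_univ ξ)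
  -- Step D: conclude g = 0
  have hps := (parseval_shift a b hab (⇑g) hsm hmem 0).2
  have hLzero : ∑' m : ℤ, ‖coeff (Ioo a b) (⇑g) (0 + m * (2 * Real.pi / (b - a)))‖ ^ 2
      = 0 := by
    have hterm : ∀ m : ℤ, ‖coeff (Ioo a b) (⇑g) (0 + m * (2 * Real.pi / (b - a)))‖ ^ 2
        = 0 := by
      intro m
      rw [show coeff (Ioo a b) (⇑g) (0 + m * (2 * Real.pi / (b - a)))
        = c (0 + m * (2 * Real.pi / (b - a))) from rfl, hczero]
      simp
    rw [tsum_congr hterm, tsum_zero]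
  have hI0 : (∫ τ in Ioo a b, ‖g τ‖ ^ 2) = 0 := by
    rw [hLzero] at hps
    have hba : (b - a) ≠ 0 := by linarith
    rcases mul_eq_zero.1 hps.symm with h | h
    · exact absurd h hba
    · exact h
  have hint2 : Integrable (fun τ => ‖g τ‖ ^ 2) (volume.restrict (Ioo a b)) := by
    have h5 := hmem.integrable_norm_rpow two_ne_zero ENNReal.ofNat_ne_top
    refine h5.congr (Eventually.of_forall fun τ => ?_)
    show ‖(⇑g) τ‖ ^ ((2:ℝ≥0∞)).toReal = ‖(⇑g) τ‖ ^ (2:ℕ)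
    have h6 : ((2 : ℝ≥0∞)).toReal = ((2:ℕ):ℝ) := by simp
    rw [h6, Real.rpow_natCast]
  have hgz : ∀ᵐ τ ∂(volume.restrict (Ioo a b)), (⇑g) τ = 0 := by
    have h7 := (integral_eq_zero_iff_of_nonneg_ae
      (Eventually.of_forall fun τ => by positivity) hint2).1 hI0
    filter_upwards [h7] with τ hτ
    have h8 : ‖g τ‖ ^ 2 = 0 := hτ
    have h9 : ‖g τ‖ = 0 := by nlinarith [norm_nonneg (g τ)]
    simpa using h9
  have hgz' : (⇑g) =ᵐ[mu (Ioo a b)] 0 := hgz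
  exact Lp.eq_zero_iff_ae_eq_zero.2 hgz'


end
end

section
/- Let Q be a set of prime numbers, let K be the multiplicative semigroup generated by Q (the set of positive integers all of whose prime factors lie in Q, including 1), and let J be the semigroup generated by the primes not in Q. Then the limit lim_{x→∞} π_K(x)/x exists and equals lim_{σ→1⁺} 1/ζ_J(σ), where ζ_J(σ) = Σ_{n∈J} n^{−σ} (with the convention that the right-hand side is 0 when ζ_J(σ) → ∞ as σ → 1⁺). -/
open MeasureTheory Set Filter Topology ComplexConjugate

noncomputable section

open scoped ENNReal NNReal

section aux

def cntA (F : Finset ℕ) (N : ℕ) : Finset ℕ :=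
  (Finset.range (N+1)).filter (fun n => n ≠ 0 ∧ ∀ p ∈ F, ¬ p ∣ n)

lemma cntA_empty (N : ℕ) : (cntA ∅ N).card = N := by
  have : cntA ∅ N = (Finset.range (N+1)).erase 0 := by
    ext n
    simp [cntA, Finset.mem_erase, and_comm]
  rw [this, Finset.card_erase_of_mem (by simp), Finset.card_range]; omega

lemma cntA_split {q : ℕ} (hq : q.Prime) (F : Finset ℕ) (hF : ∀ p ∈ F, p.Prime)
    (hqF : q ∉ F) (N : ℕ) :
    (cntA F N).card = (cntA (insert q F) N).card + (cntA F (N / q)).card := by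
  have hq0 : 0 < q := hq.pos
  have h1 : (cntA F N).filter (fun n => ¬ q ∣ n) = cntA (insert q F) N := by
    ext n
    simp only [cntA, Finset.mem_filter, Finset.mem_range, Finset.mem_insert]
    constructor
    · rintro ⟨⟨hn, h0, hav⟩, hnd⟩
      exact ⟨hn, h0, fun p hp => by rcases hp with rfl | hp; exact hnd; exact hav p hp⟩
    · rintro ⟨hn, h0, hav⟩
      exact ⟨⟨hn, h0, fun p hp => hav p (Or.inr hp)⟩, hav q (Or.inl rfl)⟩
  have h2 : (cntA F N).filter (fun n => q ∣ n) = (cntA F (N / q)).image (fun m => q * m) := by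
    ext n
    simp only [cntA, Finset.mem_filter, Finset.mem_range, Finset.mem_image]
    constructor
    · rintro ⟨⟨hn, h0, hav⟩, m, rfl⟩
      refine ⟨m, ⟨?_, ?_, ?_⟩, rfl⟩
      · have : m ≤ N / q := (Nat.le_div_iff_mul_le hq0).2 (by rw [mul_comm]; omega)
        omega
      · rintro rfl; exact h0 (by ring)
      · intro p hp hpm
        exact hav p hp (hpm.mul_left q)
    · rintro ⟨m, ⟨hm, hm0, hav⟩, rfl⟩
      have hmN : m ≤ N / q := by omega
      have : q * m ≤ N := by
        have h := (Nat.le_div_iff_mul_le hq0).1 hmN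
        have hc : q * m = m * q := Nat.mul_comm q m
        omega
      refine ⟨⟨by omega, by positivity, ?_⟩, Dvd.intro m rfl⟩
      intro p hp hpdvd
      rcases ((hF p hp).dvd_mul.1 hpdvd) with h | h
      · exact hqF (((Nat.prime_dvd_prime_iff_eq (hF p hp) hq).1 h) ▸ hp)
      · exact hav p hp h
  have hinj : Function.Injective (fun m => q * m) := fun a b h => by
    simpa [Nat.mul_left_cancel_iff hq0] using h
  calc (cntA F N).card
      = ((cntA F N).filter (fun n => ¬ q ∣ n)).card + ((cntA F N).filter (fun n => q ∣ n)).card := by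
        rw [add_comm, Finset.card_filter_add_card_filter_not]
    _ = (cntA (insert q F) N).card + (cntA F (N / q)).card := by
        rw [h1, h2, Finset.card_image_of_injective _ hinj]

lemma cntA_bound (F : Finset ℕ) : ∀ N : ℕ, (∀ p ∈ F, p.Prime) →
    |((cntA F N).card : ℝ) - N * ∏ p ∈ F, (1 - 1/(p:ℝ))| ≤ 2 ^ F.card - 1 := by
  induction F using Finset.induction_on with
  | empty => intro N _; simp [cntA_empty]
  | @insert q F hqF ih =>
    intro N hF
    have hq : q.Prime := hF q (Finset.mem_insert_self q F)
    have hFs : ∀ p ∈ F, p.Prime := fun p hp => hF p (Finset.mem_insert_of_mem hp)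
    have hq2 : (2:ℝ) ≤ q := by exact_mod_cast hq.two_le
    have hq0 : (0:ℝ) < q := by linarith
    have hcast : ((cntA (insert q F) N).card : ℝ)
        = ((cntA F N).card : ℝ) - ((cntA F (N/q)).card : ℝ) := by
      have h := congrArg (fun n : ℕ => (n : ℝ)) (cntA_split hq F hFs hqF N)
      push_cast at h; linarith
    set P : ℝ := ∏ p ∈ F, (1 - 1/(p:ℝ)) with hPdef
    have hP0 : 0 ≤ P := Finset.prod_nonneg (fun p hp => by
      have : (2:ℝ) ≤ p := by exact_mod_cast (hFs p hp).two_le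
      have : 1/(p:ℝ) ≤ 1/2 := by
        apply one_div_le_one_div_of_le <;> linarith
      linarith)
    have hP1 : P ≤ 1 := Finset.prod_le_one
      (fun p hp => by
        have : (2:ℝ) ≤ p := by exact_mod_cast (hFs p hp).two_le
        have : 1/(p:ℝ) ≤ 1/2 := by
          apply one_div_le_one_div_of_le <;> linarith
        linarith)
      (fun p hp => by
        have : (0:ℝ) < p := by
          have : (2:ℝ) ≤ p := by exact_mod_cast (hFs p hp).two_le
          linarith
        have : 0 < 1/(p:ℝ) := by positivity
        linarith)
    have h1 := ih N hFs
    have h2 := ih (N/q) hFs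
    have e1 : ((N/q : ℕ):ℝ) ≤ (N:ℝ)/q := Nat.cast_div_le
    have e2 : (N:ℝ)/q < ((N/q : ℕ):ℝ) + 1 := by
      rw [div_lt_iff₀ hq0]
      have : N < (N/q + 1) * q := (Nat.div_lt_iff_lt_mul hq.pos).1 (Nat.lt_succ_self _)
      exact_mod_cast this
    have h4 := mul_nonneg (sub_nonneg.2 e1) hP0
    rw [sub_mul] at h4
    have h5 : ((N:ℝ)/q - ((N/q : ℕ):ℝ)) * P ≤ 1 :=
      mul_le_one₀ (by linarith) hP0 hP1
    rw [sub_mul] at h5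
    rw [Finset.prod_insert hqF, Finset.card_insert_of_notMem hqF, hcast]
    have key : (N:ℝ) * ((1 - 1/q) * P) = (N:ℝ)*P - ((N:ℝ)/q)*P := by
      field_simp
    rw [key, abs_le] at *
    rw [pow_succ]
    constructor <;> [skip; skip] <;>
      (obtain ⟨h1a, h1b⟩ := h1; obtain ⟨h2a, h2b⟩ := h2) <;> linarith



open Classical in
noncomputable def KFin (Q : Set ℕ) (N : ℕ) : Finset ℕ :=
  (Finset.range (N+1)).filter (fun n => n ∈ genBy Q)

open Classical in
noncomputable def TFin (Q : Set ℕ) (F : Finset ℕ) (N : ℕ) : Finset ℕ :=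
  (Finset.range (N+1)).filter (fun p => p ∈ primesNotIn Q \ ↑F)

def MFin (p N : ℕ) : Finset ℕ := (Finset.range (N+1)).filter (fun n => n ≠ 0 ∧ p ∣ n)

lemma KFin_coe (Q : Set ℕ) (x : ℝ) (hx : 0 ≤ x) :
    genBy Q ∩ {n : ℕ | (n : ℝ) ≤ x} = ↑(KFin Q ⌊x⌋₊) := by
  ext n
  simp only [KFin, Finset.coe_filter, Finset.mem_range, mem_inter_iff, mem_setOf_eq]
  rw [Nat.lt_succ_iff, Nat.le_floor_iff hx, and_comm]

lemma KFin_subset_cntA (Q : Set ℕ) (F : Finset ℕ) (hF : ↑F ⊆ primesNotIn Q) (N : ℕ) :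
    KFin Q N ⊆ cntA F N := by
  intro n hn
  simp only [KFin, Finset.mem_filter, Finset.mem_range] at hn
  simp only [cntA, Finset.mem_filter, Finset.mem_range]
  refine ⟨hn.1, hn.2.1.ne', fun p hp hdvd => ?_⟩
  have hpP := hF hp
  exact hpP.2 (hn.2.2 p hpP.1 hdvd)

lemma cntA_subset (Q : Set ℕ) (F : Finset ℕ) (N : ℕ) :
    cntA F N ⊆ KFin Q N ∪ (TFin Q F N).biUnion (fun p => MFin p N) := by
  intro n hn
  simp only [cntA, Finset.mem_filter, Finset.mem_range] at hn
  obtain ⟨hnN, hn0, hav⟩ := hn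
  rw [Finset.mem_union]
  by_cases hK : n ∈ genBy Q
  · left
    simp only [KFin, Finset.mem_filter, Finset.mem_range]
    exact ⟨hnN, hK⟩
  · right
    simp only [genBy, mem_setOf_eq, not_and, not_forall] at hK
    obtain ⟨p, hp, hdvd, hpQ⟩ := hK (Nat.pos_of_ne_zero hn0)
    rw [Finset.mem_biUnion]
    refine ⟨p, ?_, ?_⟩
    · simp only [TFin, Finset.mem_filter, Finset.mem_range, mem_diff, mem_setOf_eq]
      refine ⟨by
        have := Nat.le_of_dvd (Nat.pos_of_ne_zero hn0) hdvd
        omega, ⟨⟨hp, hpQ⟩, fun hpF => hav p hpF hdvd⟩⟩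
    · simp only [MFin, Finset.mem_filter, Finset.mem_range]
      exact ⟨hnN, hn0, hdvd⟩

lemma MFin_card (p N : ℕ) (hp : 0 < p) : (MFin p N).card = N / p := by
  have himg : MFin p N = (Finset.range (N/p)).image (fun k => p * (k+1)) := by
    ext n
    simp only [MFin, Finset.mem_filter, Finset.mem_range, Finset.mem_image]
    constructor
    · rintro ⟨hnN, hn0, m, rfl⟩
      have hm0 : m ≠ 0 := by rintro rfl; simp at hn0
      have hmN : m ≤ N / p := (Nat.le_div_iff_mul_le hp).2 (by rw [mul_comm]; omega)
      exact ⟨m - 1, by omega, by congr 1; omega⟩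
    · rintro ⟨k, hk, rfl⟩
      have : (k+1) * p ≤ N := (Nat.le_div_iff_mul_le hp).1 (by omega)
      have hc : (k+1) * p = p * (k+1) := Nat.mul_comm _ _
      refine ⟨by omega, by positivity, Dvd.intro _ rfl⟩
  rw [himg, Finset.card_image_of_injective _ (fun a b h => by
    have := Nat.eq_of_mul_eq_mul_left hp h; omega), Finset.card_range]

lemma count_upper (Q : Set ℕ) (F : Finset ℕ) (hF : ↑F ⊆ primesNotIn Q) (N : ℕ) :
    (KFin Q N).card ≤ (cntA F N).card :=
  Finset.card_le_card (KFin_subset_cntA Q F hF N)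

lemma count_lower (Q : Set ℕ) (F : Finset ℕ) (N : ℕ) :
    (cntA F N).card ≤ (KFin Q N).card + ∑ p ∈ TFin Q F N, N / p := by
  calc (cntA F N).card ≤ (KFin Q N ∪ (TFin Q F N).biUnion (fun p => MFin p N)).card :=
        Finset.card_le_card (cntA_subset Q F N)
    _ ≤ (KFin Q N).card + ((TFin Q F N).biUnion (fun p => MFin p N)).card :=
        Finset.card_union_le _ _
    _ ≤ (KFin Q N).card + ∑ p ∈ TFin Q F N, (MFin p N).card := by
        exact Nat.add_le_add_left (Finset.card_biUnion_le) _
    _ = (KFin Q N).card + ∑ p ∈ TFin Q F N, N / p := by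
        congr 1
        apply Finset.sum_congr rfl
        intro p hp
        have hpP : p ∈ primesNotIn Q := by
          simp only [TFin, Finset.mem_filter, mem_diff] at hp
          exact hp.2.1
        exact MFin_card p N hpP.1.pos


lemma genBy_empty : genBy (∅ : Set ℕ) = {1} := by
  ext n
  simp only [genBy, mem_setOf_eq, mem_singleton_iff]
  constructor
  · rintro ⟨h0, h⟩
    by_contra hn
    obtain ⟨p, pp, pd⟩ := Nat.exists_prime_and_dvd (by omega : n ≠ 1)
    exact h p pp pd
  · rintro rfl
    exact ⟨one_pos, fun p pp pd => absurd (Nat.dvd_one.1 pd) pp.ne_one⟩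

lemma genBy_mono {P P' : Set ℕ} (h : P ⊆ P') : genBy P ⊆ genBy P' :=
  fun n hn => ⟨hn.1, fun p pp pd => h (hn.2 p pp pd)⟩

/-- the equiv for one more prime -/
lemma genBy_insert_bij {q : ℕ} (hq : q.Prime) {P : Set ℕ} (hqP : q ∉ P) :
    ∃ e : ℕ × ↥(genBy P) ≃ ↥(genBy (insert q P)),
      ∀ x : ℕ × ↥(genBy P), ((e x : ℕ)) = q ^ x.1 * (x.2 : ℕ) := by
  have hmem : ∀ (k : ℕ) (m : ℕ), m ∈ genBy P → q ^ k * m ∈ genBy (insert q P) := by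
    rintro k m ⟨hm0, hm⟩
    refine ⟨Nat.mul_pos (pow_pos hq.pos _) hm0, fun p pp pd => ?_⟩
    rcases pp.dvd_mul.1 pd with h | h
    · exact Or.inl ((Nat.prime_dvd_prime_iff_eq pp hq).1 (pp.dvd_of_dvd_pow h))
    · exact Or.inr (hm p pp h)
  have hndvd : ∀ m ∈ genBy P, ¬ q ∣ m := by
    rintro m ⟨hm0, hm⟩ hdvd
    exact hqP (hm q hq hdvd)
  set f : ℕ × ↥(genBy P) → ↥(genBy (insert q P)) :=
    fun x => ⟨q ^ x.1 * (x.2 : ℕ), hmem x.1 _ x.2.2⟩ with hf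
  have hinj : Function.Injective f := by
    rintro ⟨k, m, hm⟩ ⟨k', m', hm'⟩ h
    simp only [hf, Subtype.mk_eq_mk] at h
    have hm0 : m ≠ 0 := hm.1.ne'
    have hm'0 : m' ≠ 0 := hm'.1.ne'
    have hkk' : k = k' := by
      have h1 := congrArg (fun n => n.factorization q) h
      simp only [Nat.factorization_mul (pow_ne_zero _ hq.pos.ne') hm0,
        Nat.factorization_mul (pow_ne_zero _ hq.pos.ne') hm'0,
        Nat.Prime.factorization_pow, Finsupp.add_apply, Finsupp.single_eq_same,
        Nat.factorization_eq_zero_of_not_dvd (hndvd m ⟨hm.1, hm.2⟩),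
        Nat.factorization_eq_zero_of_not_dvd (hndvd m' ⟨hm'.1, hm'.2⟩)] at h1
      rcases (by simpa using h1 : k = k' ∨ q.factorization q = 0) with h | h
      · exact h
      · rw [Nat.Prime.factorization_self ?_] at h
        · exact absurd h one_ne_zero
        · exact hq
    subst hkk'
    have : m = m' := Nat.eq_of_mul_eq_mul_left (pow_pos hq.pos k) h
    simp [this]
  have hsurj : Function.Surjective f := by
    rintro ⟨n, hn0, hn⟩
    have hn0' : n ≠ 0 := hn0.ne'
    set k := n.factorization q with hk
    set m := n / q ^ k with hmdef
    have hmn : q ^ k * m = n := Nat.ordProj_mul_ordCompl_eq_self n q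
    have hqm : ¬ q ∣ m := Nat.not_dvd_ordCompl hq hn0'
    have hmP : m ∈ genBy P := by
      refine ⟨Nat.ordCompl_pos q hn0', fun p pp pd => ?_⟩
      have : p ∣ n := pd.trans (Nat.ordCompl_dvd n q)
      rcases hn p pp this with rfl | h
      · exact absurd pd hqm
      · exact h
    exact ⟨(k, ⟨m, hmP⟩), Subtype.ext hmn⟩
  exact ⟨Equiv.ofBijective f ⟨hinj, hsurj⟩, fun x => rfl⟩

lemma euler_finset (F : Finset ℕ) : (∀ p ∈ F, p.Prime) →
    ∑' n : ↥(genBy ↑F), (((n : ℕ) : ℝ≥0∞))⁻¹ = ∏ p ∈ F, (1 - ((p : ℝ≥0∞))⁻¹)⁻¹ := by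
  induction F using Finset.induction_on with
  | empty =>
    intro _
    rw [Finset.coe_empty, genBy_empty]
    simp [tsum_singleton 1 (fun n : ℕ => ((n:ℝ≥0∞))⁻¹)]
  | @insert q F hqF ih =>
    intro hF
    have hq : q.Prime := hF q (Finset.mem_insert_self q F)
    have hFs : ∀ p ∈ F, p.Prime := fun p hp => hF p (Finset.mem_insert_of_mem hp)
    obtain ⟨e, he⟩ := genBy_insert_bij (P := (↑F : Set ℕ)) hq (by simpa using hqF)
    rw [Finset.coe_insert] at *
    have := Equiv.tsum_eq e (fun n : ↥(genBy (insert q (↑F : Set ℕ))) => ((n : ℕ) : ℝ≥0∞)⁻¹)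
    rw [← this]
    have hterm : ∀ x : ℕ × ↥(genBy (↑F : Set ℕ)),
        (((e x : ℕ) : ℝ≥0∞))⁻¹ = ((q : ℝ≥0∞))⁻¹ ^ x.1 * (((x.2 : ℕ) : ℝ≥0∞))⁻¹ := by
      intro x
      rw [he x]
      push_cast
      rw [ENNReal.mul_inv (Or.inl (pow_ne_zero _ (Nat.cast_ne_zero.mpr hq.pos.ne'))) (Or.inl (by simp [ENNReal.pow_ne_top]))]
      rw [ENNReal.inv_pow]
    calc ∑' x : ℕ × ↥(genBy (↑F : Set ℕ)), (((e x : ℕ) : ℝ≥0∞))⁻¹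
        = ∑' (k : ℕ) (m : ↥(genBy (↑F : Set ℕ))), ((q : ℝ≥0∞))⁻¹ ^ k * (((m : ℕ) : ℝ≥0∞))⁻¹ := by
          rw [← ENNReal.tsum_prod]
          exact tsum_congr hterm
      _ = (∑' k : ℕ, ((q : ℝ≥0∞))⁻¹ ^ k) * ∑' m : ↥(genBy (↑F : Set ℕ)), (((m : ℕ) : ℝ≥0∞))⁻¹ := by
          rw [← ENNReal.tsum_mul_right]
          exact tsum_congr fun k => ENNReal.tsum_mul_left
      _ = (1 - ((q : ℝ≥0∞))⁻¹)⁻¹ * ∏ p ∈ F, (1 - ((p : ℝ≥0∞))⁻¹)⁻¹ := by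
          rw [ENNReal.tsum_geometric, ih hFs]
      _ = ∏ p ∈ insert q F, (1 - ((p : ℝ≥0∞))⁻¹)⁻¹ := by
          rw [Finset.prod_insert hqF]


section main
variable (Q : Set ℕ)

def Zval : ℝ≥0∞ := ∑' n : ↥(genBy (primesNotIn Q)), (((n : ℕ) : ℝ≥0∞))⁻¹

lemma one_mem_genBy (P : Set ℕ) : 1 ∈ genBy P :=
  ⟨one_pos, fun p pp pd => absurd (Nat.dvd_one.1 pd) pp.ne_one⟩

lemma pos_of_mem_genBy {P : Set ℕ} {n : ℕ} (h : n ∈ genBy P) : 0 < n := h.1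

lemma one_le_Zval : 1 ≤ Zval Q := by
  have := ENNReal.le_tsum (f := fun n : ↥(genBy (primesNotIn Q)) => (((n : ℕ) : ℝ≥0∞))⁻¹)
    ⟨1, one_mem_genBy _⟩
  simpa [Zval] using this

/-- `Z` is the sup of the finite Euler products. -/
lemma Zval_eq_iSup :
    Zval Q = ⨆ (F : Finset ℕ) (_ : ↑F ⊆ primesNotIn Q), ∏ p ∈ F, (1 - ((p : ℝ≥0∞))⁻¹)⁻¹ := by
  apply le_antisymm
  · rw [Zval, ENNReal.tsum_eq_iSup_sum]
    apply iSup_le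
    intro G
    classical
    set F : Finset ℕ := G.biUnion (fun n => ((n : ℕ)).primeFactors) with hFdef
    have hFP : ↑F ⊆ primesNotIn Q := by
      intro p hp
      simp only [hFdef, Finset.coe_biUnion, mem_iUnion, Finset.mem_coe,
        Nat.mem_primeFactors] at hp
      obtain ⟨n, _, hp1, hp2, _⟩ := hp
      exact (n : ↥(genBy (primesNotIn Q))).2.2 p hp1 hp2
    have hmem : ∀ n : ↥(genBy (primesNotIn Q)), n ∈ G → (n:ℕ) ∈ genBy (↑F : Set ℕ) := by
      intro n hn
      refine ⟨n.2.1, fun p pp pd => ?_⟩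
      simp only [hFdef, Finset.coe_biUnion, mem_iUnion, Finset.mem_coe]
      exact ⟨n, hn, Nat.mem_primeFactors.2 ⟨pp, pd, n.2.1.ne'⟩⟩
    have key : ∑ n ∈ G, (((n : ℕ) : ℝ≥0∞))⁻¹ ≤ ∏ p ∈ F, (1 - ((p : ℝ≥0∞))⁻¹)⁻¹ := by
      rw [← euler_finset F (fun p hp => (hFP hp).1)]
      calc ∑ n ∈ G, (((n : ℕ) : ℝ≥0∞))⁻¹
          = ∑ x ∈ G.image (fun n : ↥(genBy (primesNotIn Q)) => (n:ℕ)), ((x : ℝ≥0∞))⁻¹ := by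
            rw [Finset.sum_image (fun a _ b _ h => Subtype.ext h)]
        _ = ∑ x ∈ G.image (fun n : ↥(genBy (primesNotIn Q)) => (n:ℕ)),
              (genBy (↑F:Set ℕ)).indicator (fun x : ℕ => ((x:ℝ≥0∞))⁻¹) x := by
            apply Finset.sum_congr rfl
            intro x hx
            obtain ⟨n, hn, rfl⟩ := Finset.mem_image.1 hx
            rw [indicator_of_mem (hmem n hn)]
        _ ≤ ∑' x : ℕ, (genBy (↑F:Set ℕ)).indicator (fun x : ℕ => ((x:ℝ≥0∞))⁻¹) x :=
            ENNReal.sum_le_tsum _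
        _ = ∑' n : ↥(genBy (↑F:Set ℕ)), (((n : ℕ) : ℝ≥0∞))⁻¹ := (tsum_subtype _ _).symm
    exact le_iSup_of_le F (le_iSup_of_le hFP key)
  · apply iSup_le; intro F; apply iSup_le; intro hFP
    rw [← euler_finset F (fun p hp => (hFP hp).1), Zval]
    rw [tsum_subtype (genBy (↑F : Set ℕ)) (fun x : ℕ => ((x:ℝ≥0∞))⁻¹),
      tsum_subtype (genBy (primesNotIn Q)) (fun x : ℕ => ((x:ℝ≥0∞))⁻¹)]
    apply ENNReal.tsum_le_tsum
    intro n
    exact indicator_le_indicator_of_subset (genBy_mono hFP) (fun _ => zero_le) n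
end main

section zeta
variable (Q : Set ℕ)

def ZE (σ : ℝ) : ℝ≥0∞ := ∑' n : ↥(genBy (primesNotIn Q)), (((n : ℕ) : ℝ≥0∞)) ^ (-σ)

lemma ofReal_term {n : ℕ} (hn : 0 < n) (σ : ℝ) :
    ENNReal.ofReal ((n : ℝ) ^ (-σ)) = ((n : ℝ≥0∞)) ^ (-σ) := by
  rw [← ENNReal.ofReal_rpow_of_pos (by exact_mod_cast hn : (0:ℝ) < (n:ℝ)), ENNReal.ofReal_natCast]

lemma ZE_le_Zval {σ : ℝ} (hσ : 1 ≤ σ) : ZE Q σ ≤ Zval Q := by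
  apply ENNReal.tsum_le_tsum
  intro n
  have h1 : (1 : ℝ≥0∞) ≤ ((n : ℕ) : ℝ≥0∞) := by exact_mod_cast n.2.1
  calc ((n : ℕ) : ℝ≥0∞) ^ (-σ) ≤ ((n : ℕ) : ℝ≥0∞) ^ (-1 : ℝ) :=
        ENNReal.rpow_le_rpow_of_exponent_le h1 (by linarith)
    _ = (((n : ℕ) : ℝ≥0∞))⁻¹ := ENNReal.rpow_neg_one _

lemma tendsto_ZE : Tendsto (ZE Q) (𝓝[>] (1:ℝ)) (𝓝 (Zval Q)) := by
  apply tendsto_order.2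
  constructor
  · intro b hb
    rw [Zval, ENNReal.tsum_eq_iSup_sum, lt_iSup_iff] at hb
    obtain ⟨G, hG⟩ := hb
    set g : ℝ → ℝ≥0∞ := fun σ => ENNReal.ofReal (∑ n ∈ G, ((n : ℕ) : ℝ) ^ (-σ)) with hg
    have hcont : ContinuousAt g 1 := by
      apply ENNReal.continuous_ofReal.continuousAt.comp
      apply (continuous_finset_sum G (fun n _ => ?_)).continuousAt
      exact continuous_iff_continuousAt.2 fun x =>
        (Real.continuousAt_const_rpow (by exact_mod_cast n.2.1.ne' : ((n:ℕ):ℝ) ≠ 0)).comp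
          continuous_neg.continuousAt
    have hgle : ∀ σ : ℝ, g σ ≤ ZE Q σ := by
      intro σ
      show ENNReal.ofReal (∑ n ∈ G, ((n:ℕ):ℝ) ^ (-σ)) ≤ ZE Q σ
      rw [ENNReal.ofReal_sum_of_nonneg (fun n _ => Real.rpow_nonneg (Nat.cast_nonneg _) _)]
      calc ∑ n ∈ G, ENNReal.ofReal (((n:ℕ):ℝ) ^ (-σ))
          = ∑ n ∈ G, ((n:ℕ):ℝ≥0∞) ^ (-σ) :=
            Finset.sum_congr rfl (fun n _ => ofReal_term n.2.1 σ)
        _ ≤ _ := ENNReal.sum_le_tsum G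
    have hg1 : b < g 1 := by
      show b < ENNReal.ofReal (∑ n ∈ G, ((n:ℕ):ℝ) ^ (-(1:ℝ)))
      rw [ENNReal.ofReal_sum_of_nonneg (fun n _ => Real.rpow_nonneg (Nat.cast_nonneg _) _)]
      have heq : ∑ n ∈ G, ENNReal.ofReal (((n:ℕ):ℝ)^(-(1:ℝ))) = ∑ n ∈ G, (((n:ℕ):ℝ≥0∞))⁻¹ :=
        Finset.sum_congr rfl (fun n _ => by rw [ofReal_term n.2.1, ENNReal.rpow_neg_one])
      rw [heq]; exact hG
    have hev := (hcont.continuousWithinAt (s := Ioi (1:ℝ))).eventually (eventually_gt_nhds hg1)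
    filter_upwards [hev] with σ hσ using lt_of_lt_of_le hσ (hgle σ)
  · intro b hb
    filter_upwards [self_mem_nhdsWithin] with σ hσ
    exact lt_of_le_of_lt (ZE_le_Zval Q (le_of_lt hσ)) hb
end zeta

lemma zeta_side (Q : Set ℕ) :
    Tendsto (fun σ : ℝ => (∑' n : ↥(genBy (primesNotIn Q)), (((n : ℕ) : ℝ)) ^ (-σ))⁻¹)
      (𝓝[>] (1:ℝ)) (𝓝 (((Zval Q)⁻¹).toReal)) := by
  have hZne : (Zval Q)⁻¹ ≠ ⊤ := by
    rw [Ne, ENNReal.inv_eq_top]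
    intro h
    simpa [h] using one_le_Zval Q
  have htend : Tendsto (fun σ => ((ZE Q σ)⁻¹).toReal) (𝓝[>] (1:ℝ))
      (𝓝 (((Zval Q)⁻¹).toReal)) :=
    (ENNReal.tendsto_toReal hZne).comp ((tendsto_ZE Q).inv)
  apply htend.congr'
  filter_upwards [self_mem_nhdsWithin] with σ hσ
  rw [mem_Ioi] at hσ
  have hsumm : Summable (fun n : ↥(genBy (primesNotIn Q)) => ((n:ℕ):ℝ) ^ (-σ)) := by
    have h := (Real.summable_nat_rpow (p := -σ)).2 (by linarith)
    exact h.subtype _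
  have hofReal : ENNReal.ofReal (∑' n : ↥(genBy (primesNotIn Q)), ((n:ℕ):ℝ) ^ (-σ))
      = ZE Q σ := by
    rw [ENNReal.ofReal_tsum_of_nonneg (fun n => Real.rpow_nonneg (Nat.cast_nonneg _) _) hsumm]
    exact tsum_congr fun n => ofReal_term n.2.1 σ
  rw [ENNReal.toReal_inv, ← hofReal,
    ENNReal.toReal_ofReal (tsum_nonneg (fun n => Real.rpow_nonneg (Nat.cast_nonneg _) _))]

section count
variable (Q : Set ℕ)

lemma prodE_ne_top (F : Finset ℕ) (hF : ∀ p ∈ F, p.Prime) :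
    ∏ p ∈ F, (1 - ((p:ℝ≥0∞))⁻¹)⁻¹ ≠ ⊤ := by
  rw [← lt_top_iff_ne_top]
  apply ENNReal.prod_lt_top
  intro p hp
  have h2 : (2:ℝ≥0∞) ≤ p := by exact_mod_cast (hF p hp).two_le
  have hlt : ((p:ℝ≥0∞))⁻¹ < 1 := ENNReal.inv_lt_one.2 (by exact_mod_cast (hF p hp).one_lt)
  rw [lt_top_iff_ne_top, Ne, ENNReal.inv_eq_top]
  intro h0
  rw [tsub_eq_zero_iff_le] at h0
  exact absurd h0 (not_le.2 hlt)

lemma one_le_prodE (F : Finset ℕ) : 1 ≤ ∏ p ∈ F, (1 - ((p:ℝ≥0∞))⁻¹)⁻¹ := by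
  apply Finset.one_le_prod'
  intro p _
  exact le_trans (le_of_eq inv_one.symm) (ENNReal.inv_le_inv' tsub_le_self)

lemma prodE_toReal (F : Finset ℕ) (hF : ∀ p ∈ F, p.Prime) :
    (∏ p ∈ F, (1 - ((p:ℝ≥0∞))⁻¹)⁻¹).toReal = (∏ p ∈ F, (1 - 1/(p:ℝ)))⁻¹ := by
  rw [ENNReal.toReal_prod, ← Finset.prod_inv_distrib]
  apply Finset.prod_congr rfl
  intro p hp
  have h1 : ((p:ℝ≥0∞))⁻¹ ≤ 1 := ENNReal.inv_le_one.2 (by exact_mod_cast (hF p hp).one_lt.le)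
  rw [ENNReal.toReal_inv, ENNReal.toReal_sub_of_le h1 (by simp)]
  simp [one_div]

lemma dF_pos (F : Finset ℕ) (hF : ∀ p ∈ F, p.Prime) : 0 < ∏ p ∈ F, (1 - 1/(p:ℝ)) := by
  apply Finset.prod_pos
  intro p hp
  have h2 : (2:ℝ) ≤ p := by exact_mod_cast (hF p hp).two_le
  have : 1/(p:ℝ) ≤ 1/2 := by apply one_div_le_one_div_of_le <;> linarith
  linarith

lemma dF_le_one (F : Finset ℕ) (hF : ∀ p ∈ F, p.Prime) : ∏ p ∈ F, (1 - 1/(p:ℝ)) ≤ 1 := by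
  apply Finset.prod_le_one
  · intro p hp
    have h2 : (2:ℝ) ≤ p := by exact_mod_cast (hF p hp).two_le
    have : 1/(p:ℝ) ≤ 1/2 := by apply one_div_le_one_div_of_le <;> linarith
    linarith
  · intro p hp
    have h2 : (2:ℝ) ≤ p := by exact_mod_cast (hF p hp).two_le
    have : 0 < 1/(p:ℝ) := by positivity
    linarith

lemma prodE_le_Zval (F : Finset ℕ) (hF : ↑F ⊆ primesNotIn Q) :
    ∏ p ∈ F, (1 - ((p:ℝ≥0∞))⁻¹)⁻¹ ≤ Zval Q := by
  rw [Zval_eq_iSup]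
  exact le_iSup₂_of_le F hF le_rfl

lemma A_le_dF (F : Finset ℕ) (hF : ↑F ⊆ primesNotIn Q) :
    ((Zval Q)⁻¹).toReal ≤ ∏ p ∈ F, (1 - 1/(p:ℝ)) := by
  have hprime : ∀ p ∈ F, p.Prime := fun p hp => (hF hp).1
  have h2 : (Zval Q)⁻¹ ≤ (∏ p ∈ F, (1 - ((p:ℝ≥0∞))⁻¹)⁻¹)⁻¹ :=
    ENNReal.inv_le_inv' (prodE_le_Zval Q F hF)
  have hne : (∏ p ∈ F, (1 - ((p:ℝ≥0∞))⁻¹)⁻¹)⁻¹ ≠ ⊤ := by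
    rw [Ne, ENNReal.inv_eq_top]
    intro h0
    simpa [h0] using one_le_prodE F
  have h3 := ENNReal.toReal_mono hne h2
  simp only [ENNReal.toReal_inv] at h3
  rw [prodE_toReal F hprime, inv_inv] at h3
  rw [ENNReal.toReal_inv]
  exact h3

lemma exists_F_dF_le {ε : ℝ} (hε : 0 < ε) :
    ∃ F : Finset ℕ, ↑F ⊆ primesNotIn Q ∧
      ∏ p ∈ F, (1 - 1/(p:ℝ)) ≤ ((Zval Q)⁻¹).toReal + ε := by
  set A := ((Zval Q)⁻¹).toReal with hA
  have hA0 : 0 ≤ A := ENNReal.toReal_nonneg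
  have hb : ENNReal.ofReal ((A + ε)⁻¹) < Zval Q := by
    by_cases h : Zval Q = ⊤
    · rw [h]; exact ENNReal.ofReal_lt_top
    · have hz1 : 1 ≤ (Zval Q).toReal := by
        have := ENNReal.toReal_mono h (one_le_Zval Q)
        simpa using this
      have hAz : A = ((Zval Q).toReal)⁻¹ := by rw [hA, ENNReal.toReal_inv]
      have hlt : (A + ε)⁻¹ < (Zval Q).toReal := by
        set z := (Zval Q).toReal
        have hzpos : 0 < z := by linarith
        rw [hAz]
        rw [inv_lt_iff_one_lt_mul₀ (by positivity)]
        have : z⁻¹ * z = 1 := inv_mul_cancel₀ (by linarith)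
        nlinarith
      calc ENNReal.ofReal ((A + ε)⁻¹) < ENNReal.ofReal ((Zval Q).toReal) := by
            rw [ENNReal.ofReal_lt_ofReal_iff (by linarith)]
            exact hlt
        _ = Zval Q := ENNReal.ofReal_toReal h
  rw [Zval_eq_iSup, lt_iSup_iff] at hb
  obtain ⟨F, hb⟩ := hb
  rw [lt_iSup_iff] at hb
  obtain ⟨hF, hb⟩ := hb
  refine ⟨F, hF, ?_⟩
  have hprime : ∀ p ∈ F, p.Prime := fun p hp => (hF hp).1
  have hw := ENNReal.toReal_mono (prodE_ne_top F hprime) hb.le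
  rw [ENNReal.toReal_ofReal (by positivity), prodE_toReal F hprime] at hw
  have hdpos := dF_pos F hprime
  calc ∏ p ∈ F, (1 - 1/(p:ℝ)) = ((∏ p ∈ F, (1 - 1/(p:ℝ)))⁻¹)⁻¹ := (inv_inv _).symm
    _ ≤ ((A + ε)⁻¹)⁻¹ := by
        apply inv_anti₀ (by positivity) hw
    _ = A + ε := inv_inv _
end count

section tail
variable (Q : Set ℕ)

lemma prime_mem_genBy {P : Set ℕ} {p : ℕ} (hp : p.Prime) (hpP : p ∈ P) : p ∈ genBy P :=
  ⟨hp.pos, fun q hq hd => ((Nat.prime_dvd_prime_iff_eq hq hp).1 hd) ▸ hpP⟩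

lemma primes_tsum_le :
    ∑' p : ℕ, (primesNotIn Q).indicator (fun p : ℕ => ((p:ℝ≥0∞))⁻¹) p ≤ Zval Q := by
  rw [← tsum_subtype]
  have hinj : Function.Injective
      (fun p : ↥(primesNotIn Q) =>
        (⟨(p:ℕ), prime_mem_genBy p.2.1 p.2⟩ : ↥(genBy (primesNotIn Q)))) := by
    intro a b h
    simpa [Subtype.ext_iff] using h
  exact ENNReal.tsum_comp_le_tsum_of_injective hinj
    (fun n : ↥(genBy (primesNotIn Q)) => (((n:ℕ):ℝ≥0∞))⁻¹)

lemma exists_tail (h : Zval Q ≠ ⊤) {ε : ℝ} (hε : 0 < ε) :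
    ∃ F : Finset ℕ, ↑F ⊆ primesNotIn Q ∧
      ∀ T : Finset ℕ, ↑T ⊆ primesNotIn Q \ ↑F → ∑ p ∈ T, 1/(p:ℝ) ≤ ε := by
  classical
  set f : ℕ → ℝ≥0∞ := (primesNotIn Q).indicator (fun p : ℕ => ((p:ℝ≥0∞))⁻¹) with hf
  have hfne : ∑' p, f p ≠ ⊤ := ne_top_of_le_ne_top h (primes_tsum_le Q)
  have htail := ENNReal.tendsto_tsum_compl_atTop_zero hfne
  have hev : ∀ᶠ s : Finset ℕ in atTop, ∑' x : {x : ℕ // x ∉ s}, f x < ENNReal.ofReal ε :=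
    htail.eventually_lt_const (by simp [hε])
  obtain ⟨s, hs⟩ := hev.exists
  refine ⟨s.filter (fun p => p ∈ primesNotIn Q), ?_, ?_⟩
  · intro p hp
    simp only [Finset.coe_filter, mem_setOf_eq] at hp
    exact hp.2
  · intro T hT
    have hTsub : ∀ p ∈ T, p ∉ s ∧ p ∈ primesNotIn Q := by
      intro p hp
      have h2 := hT hp
      rw [mem_diff] at h2
      refine ⟨fun hps => h2.2 ?_, h2.1⟩
      simp only [Finset.coe_filter, mem_setOf_eq]
      exact ⟨hps, h2.1⟩
    have hENN : ∑ p ∈ T, ((p:ℝ≥0∞))⁻¹ < ENNReal.ofReal ε := by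
      have h1 : ∑ p ∈ T, ((p:ℝ≥0∞))⁻¹
          = ∑ p ∈ T, ({x : ℕ | x ∉ s}).indicator f p := by
        apply Finset.sum_congr rfl
        intro p hp
        rw [Set.indicator_of_mem (show p ∈ {x : ℕ | x ∉ s} from (hTsub p hp).1), hf,
          Set.indicator_of_mem ((hTsub p hp).2)]
      rw [h1]
      calc ∑ p ∈ T, ({x : ℕ | x ∉ s}).indicator f p
          ≤ ∑' x : ℕ, ({x : ℕ | x ∉ s}).indicator f x := ENNReal.sum_le_tsum T
        _ = ∑' x : {x : ℕ // x ∉ s}, f x := (tsum_subtype _ _).symm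
        _ < ENNReal.ofReal ε := hs
    have hponneg : ∀ p ∈ T, (0:ℝ) ≤ 1/(p:ℝ) := fun p _ => by positivity
    have hofReal : ENNReal.ofReal (∑ p ∈ T, 1/(p:ℝ)) = ∑ p ∈ T, ((p:ℝ≥0∞))⁻¹ := by
      rw [ENNReal.ofReal_sum_of_nonneg hponneg]
      apply Finset.sum_congr rfl
      intro p hp
      have hppos : 0 < p := (hTsub p hp).2.1.pos
      rw [one_div, ENNReal.ofReal_inv_of_pos (by exact_mod_cast hppos), ENNReal.ofReal_natCast]
    rw [← ENNReal.ofReal_le_ofReal_iff hε.le, hofReal]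
    exact hENN.le
end tail

lemma count_side (Q : Set ℕ) :
    Tendsto (fun x : ℝ => countK (genBy Q) x / x) atTop (𝓝 (((Zval Q)⁻¹).toReal)) := by
  set A := ((Zval Q)⁻¹).toReal with hA
  have hA0 : 0 ≤ A := ENNReal.toReal_nonneg
  have hcount : ∀ x : ℝ, 0 ≤ x → countK (genBy Q) x = ((KFin Q ⌊x⌋₊).card : ℝ) := by
    intro x hx
    rw [countK, KFin_coe Q x hx, ncard_coe_finset]
  apply tendsto_order.2
  constructor
  · -- lower bound
    intro b hb
    by_cases hZ : Zval Q = ⊤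
    · have hA0' : A = 0 := by rw [hA, hZ]; simp
      filter_upwards [eventually_gt_atTop (0:ℝ)] with x hx
      have hnn : 0 ≤ countK (genBy Q) x / x := by
        apply div_nonneg _ hx.le
        rw [countK]; positivity
      rw [hA0'] at hb
      linarith
    · set ε := (A - b)/2 with hεdef
      have hε0 : 0 < ε := by rw [hεdef]; linarith
      obtain ⟨F, hF, htail⟩ := exists_tail Q hZ (show (0:ℝ) < ε/3 by linarith)
      have hprime : ∀ p ∈ F, p.Prime := fun p hp => (hF hp).1
      have hAdF := A_le_dF Q F hF
      set d := ∏ p ∈ F, (1 - 1/(p:ℝ)) with hd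
      have hd0 : 0 < d := dF_pos F hprime
      have hd1 : d ≤ 1 := dF_le_one F hprime
      set c := (2:ℝ)^F.card with hc
      have hc0 : 0 < c := by positivity
      filter_upwards [eventually_ge_atTop (max 1 (3*(1+c)/ε))] with x hx
      rw [max_le_iff] at hx
      obtain ⟨hx1, hx2⟩ := hx
      have hx0 : 0 < x := by linarith
      set N := ⌊x⌋₊ with hN
      have hNx : (N:ℝ) ≤ x := Nat.floor_le (by linarith)
      have hNx' : x - 1 < (N:ℝ) := by
        have := Nat.lt_floor_add_one x
        linarith
      rw [hcount x (by linarith), lt_div_iff₀ hx0]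
      have hcnt := (abs_le.1 (cntA_bound F N hprime)).1
      have hlow := count_lower Q F N
      have hsum : ((∑ p ∈ TFin Q F N, (N / p : ℕ) : ℕ) : ℝ) ≤ (N:ℝ) * (ε/3) := by
        rw [Nat.cast_sum]
        calc ∑ p ∈ TFin Q F N, ((N / p : ℕ) : ℝ) ≤ ∑ p ∈ TFin Q F N, (N:ℝ)/(p:ℝ) :=
              Finset.sum_le_sum (fun p _ => Nat.cast_div_le)
          _ = (N:ℝ) * ∑ p ∈ TFin Q F N, 1/(p:ℝ) := by
              rw [Finset.mul_sum]
              exact Finset.sum_congr rfl (fun p _ => by ring)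
          _ ≤ (N:ℝ) * (ε/3) := by
              apply mul_le_mul_of_nonneg_left _ (Nat.cast_nonneg N)
              apply htail
              intro p hp
              simp only [TFin, Finset.coe_filter, mem_setOf_eq] at hp
              exact hp.2
      have hlowR : ((cntA F N).card : ℝ)
          ≤ ((KFin Q N).card : ℝ) + ((∑ p ∈ TFin Q F N, (N / p : ℕ) : ℕ) : ℝ) := by
        exact_mod_cast hlow
      have f1 : (x-1)*d ≤ (N:ℝ)*d := mul_le_mul_of_nonneg_right hNx'.le hd0.le
      have f2 : x*A ≤ x*d := mul_le_mul_of_nonneg_left hAdF hx0.le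
      have f3 : (N:ℝ)*(ε/3) ≤ x*(ε/3) := mul_le_mul_of_nonneg_right hNx (by linarith)
      have f4 : 3*(1+c) ≤ x*ε := by
        rw [div_le_iff₀ hε0] at hx2
        linarith
      have hbx : b = A - 2*ε := by rw [hεdef]; ring
      rw [hbx]
      nlinarith [hcnt, hlowR, hsum, f1, f2, f3, f4, hd1, hε0, hx0]
  · -- upper bound
    intro b hb
    set ε := (b - A)/4 with hεdef
    have hε0 : 0 < ε := by rw [hεdef]; linarith
    obtain ⟨F, hF, hdF⟩ := exists_F_dF_le Q hε0
    have hprime : ∀ p ∈ F, p.Prime := fun p hp => (hF hp).1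
    set d := ∏ p ∈ F, (1 - 1/(p:ℝ)) with hd
    have hd0 : 0 < d := dF_pos F hprime
    set c := (2:ℝ)^F.card with hc
    have hc0 : 0 < c := by positivity
    filter_upwards [eventually_ge_atTop (max 1 (c/ε))] with x hx
    rw [max_le_iff] at hx
    obtain ⟨hx1, hx2⟩ := hx
    have hx0 : 0 < x := by linarith
    set N := ⌊x⌋₊ with hN
    have hNx : (N:ℝ) ≤ x := Nat.floor_le (by linarith)
    rw [hcount x (by linarith), div_lt_iff₀ hx0]
    have hcnt := (abs_le.1 (cntA_bound F N hprime)).2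
    have hupR : ((KFin Q N).card : ℝ) ≤ ((cntA F N).card : ℝ) := by
      exact_mod_cast count_upper Q F hF N
    have g1 : (N:ℝ)*d ≤ x*d := mul_le_mul_of_nonneg_right hNx hd0.le
    have g2 : x*d ≤ x*(A+ε) := mul_le_mul_of_nonneg_left hdF hx0.le
    have g3 : c ≤ x*ε := by
      rw [div_le_iff₀ hε0] at hx2
      linarith
    have hbx : b = A + 4*ε := by rw [hεdef]; ring
    rw [hbx]
    nlinarith [hcnt, hupR, g1, g2, g3, hε0, hx0]

end aux

/-- Let `Q` be a set of primes, `K` the multiplicative semigroup generated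
by `Q` and `J` the semigroup generated by the primes not in `Q`. Then `lim_{x→∞} π_K(x)/x`
exists and equals `lim_{σ→1⁺} 1/ζ_J(σ)` (the latter limit being `0` when `ζ_J(σ) → ∞`). -/
theorem statement11 (Q : Set ℕ) (hQ : ∀ p ∈ Q, p.Prime) :
    ∃ A : ℝ,
      Tendsto (fun x : ℝ => countK (genBy Q) x / x) atTop (𝓝 A) ∧
        Tendsto (fun σ : ℝ =>
            (∑' n : genBy (primesNotIn Q), (((n : ℕ) : ℝ)) ^ (-σ))⁻¹)
          (𝓝[>] (1:ℝ)) (𝓝 A) := by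
  refine ⟨((Zval Q)⁻¹).toReal, count_side Q, zeta_side Q⟩

end
end

section
/- Let Q be a set of prime numbers, let P be the set of primes not in Q, and let J be the multiplicative semigroup generated by P. Assume Σ_{p∈P} 1/p < ∞. Let q > 1 and let q' satisfy 1/q + 1/q' = 1. If Σ_{p∈P} (log p)^{1/q'}/p = ∞, then for every r > q the function t ↦ (ζ_J(1+it) − ζ_J(1))/t is not in L^r_loc, i.e. there is a bounded interval I ⊂ ℝ on which it fails to be in L^r(I). -/
open MeasureTheory Set Filter Topology ComplexConjugate

set_option maxHeartbeats 1000000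

noncomputable section

namespace Stmt15

def invHom : ℕ →* ℝ where
  toFun := fun n => ((n : ℝ))⁻¹
  map_one' := by simp
  map_mul' := by intro m n; push_cast; exact mul_inv _ _

lemma invHom_apply (n : ℕ) : invHom n = ((n:ℝ))⁻¹ := rfl

/-- If `∑ 1/p` over a set of primes `P` converges, then `∑ 1/n` over the multiplicative
semigroup generated by `P` converges. -/
lemma summable_indicator_genBy {P : Set ℕ}
    (hP : Summable (Set.indicator P fun n => (1:ℝ)/n)) :
    Summable (Set.indicator (genBy P) fun n => (1:ℝ)/n) := by
  classical
  set w : ℕ → ℝ := Set.indicator P fun n => (1:ℝ)/n with hw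
  have hwnn : ∀ n, 0 ≤ w n := by
    intro n
    exact Set.indicator_nonneg (fun i _ => by positivity) n
  set C : ℝ := ∑' n, w n with hC
  have hind : ∀ n, 0 ≤ Set.indicator (genBy P) (fun n => (1:ℝ)/n) n :=
    fun n => Set.indicator_nonneg (fun i _ => by positivity) n
  refine summable_of_sum_range_le (c := Real.exp (2 * C)) hind ?_
  intro N
  set s : Finset ℕ := (Finset.range N).filter (fun p => p ∈ P) with hs
  have hEP := EulerProduct.summable_and_hasSum_factoredNumbers_prod_filter_prime_geometric
    (f := invHom) (fun {p} hp' => by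
      rw [invHom_apply, norm_inv]
      rw [inv_lt_one_iff₀]
      right
      simpa using hp'.one_lt) s
  have hsummable : Summable (Set.indicator (Nat.factoredNumbers s) fun n => (1:ℝ)/n) := by
    have := hEP.1.of_norm
    have h2 : Summable (fun m : Nat.factoredNumbers s => (1:ℝ)/((m:ℕ):ℝ)) := by
      simpa [invHom_apply, one_div] using this
    exact (summable_subtype_iff_indicator (s := Nat.factoredNumbers s)
      (f := fun n : ℕ => (1:ℝ)/n)).mp h2
  have step1 : ∑ i ∈ Finset.range N, Set.indicator (genBy P) (fun n => (1:ℝ)/n) i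
      ≤ ∑ i ∈ Finset.range N, Set.indicator (Nat.factoredNumbers s) (fun n => (1:ℝ)/n) i := by
    refine Finset.sum_le_sum ?_
    intro i hi
    by_cases hiJ : i ∈ genBy P
    · have hifac : i ∈ Nat.factoredNumbers s := by
        rw [Nat.mem_factoredNumbers]
        refine ⟨hiJ.1.ne', ?_⟩
        intro p hpmem
        have hpprime := Nat.prime_of_mem_primeFactorsList hpmem
        have hpdvd := Nat.dvd_of_mem_primeFactorsList hpmem
        have hpP := hiJ.2 p hpprime hpdvd
        have hple : p ≤ i := Nat.le_of_dvd hiJ.1 hpdvd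
        have : p < N := lt_of_le_of_lt hple (Finset.mem_range.mp hi)
        simp [hs, Finset.mem_filter, Finset.mem_range, this, hpP]
      rw [Set.indicator_of_mem hiJ, Set.indicator_of_mem hifac]
    · rw [Set.indicator_of_notMem hiJ]
      exact Set.indicator_nonneg (fun j _ => by positivity) i
  have step2 : ∑ i ∈ Finset.range N, Set.indicator (Nat.factoredNumbers s) (fun n => (1:ℝ)/n) i
      ≤ ∑' i, Set.indicator (Nat.factoredNumbers s) (fun n => (1:ℝ)/n) i :=
    Summable.sum_le_tsum _ (fun i _ => Set.indicator_nonneg (fun j _ => by positivity) i) hsummable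
  have step3 : ∑' i, Set.indicator (Nat.factoredNumbers s) (fun n => (1:ℝ)/n) i
      = ∏ p ∈ s.filter Nat.Prime, (1 - ((p:ℝ))⁻¹)⁻¹ := by
    rw [← tsum_subtype]
    have := hEP.2.tsum_eq
    simpa [invHom_apply, one_div] using this
  have step4 : ∏ p ∈ s.filter Nat.Prime, (1 - ((p:ℝ))⁻¹)⁻¹
      ≤ ∏ p ∈ s.filter Nat.Prime, Real.exp (2 * w p) := by
    refine Finset.prod_le_prod ?_ ?_
    · intro p hpmem
      have hpprime : p.Prime := (Finset.mem_filter.mp hpmem).2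
      have h2p : (2:ℝ) ≤ p := by exact_mod_cast hpprime.two_le
      have : ((p:ℝ))⁻¹ ≤ 1/2 := by
        rw [inv_le_iff_one_le_mul₀ (by linarith)]
        linarith
      have h1 : (0:ℝ) < 1 - ((p:ℝ))⁻¹ := by linarith
      positivity
    · intro p hpmem
      have hpprime : p.Prime := (Finset.mem_filter.mp hpmem).2
      have hpP : p ∈ P := (Finset.mem_filter.mp (Finset.mem_filter.mp hpmem).1).2
      have h2p : (2:ℝ) ≤ p := by exact_mod_cast hpprime.two_le
      have hppos : (0:ℝ) < p := by linarith
      have hx : ((p:ℝ))⁻¹ ≤ 1/2 := by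
        rw [inv_le_iff_one_le_mul₀ (by linarith)]
        linarith
      have hxpos : (0:ℝ) < ((p:ℝ))⁻¹ := by positivity
      have h1 : (0:ℝ) < 1 - ((p:ℝ))⁻¹ := by linarith
      have hstep : (1 - ((p:ℝ))⁻¹)⁻¹ ≤ 1 + 2 * ((p:ℝ))⁻¹ := by
        rw [inv_le_iff_one_le_mul₀ h1]
        nlinarith
      have hwp : w p = ((p:ℝ))⁻¹ := by
        rw [hw, Set.indicator_of_mem hpP, one_div]
      calc (1 - ((p:ℝ))⁻¹)⁻¹ ≤ 1 + 2 * ((p:ℝ))⁻¹ := hstep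
        _ ≤ Real.exp (2 * ((p:ℝ))⁻¹) := by
            have := Real.add_one_le_exp (2 * ((p:ℝ))⁻¹)
            linarith
        _ = Real.exp (2 * w p) := by rw [hwp]
  have step5 : ∏ p ∈ s.filter Nat.Prime, Real.exp (2 * w p) ≤ Real.exp (2 * C) := by
    rw [← Real.exp_sum]
    refine Real.exp_le_exp.mpr ?_
    rw [← Finset.mul_sum]
    have : ∑ p ∈ s.filter Nat.Prime, w p ≤ C := Summable.sum_le_tsum _ (fun i _ => hwnn i) hP
    have hCnn : 0 ≤ ∑ p ∈ s.filter Nat.Prime, w p := Finset.sum_nonneg fun i _ => hwnn i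
    linarith
  calc ∑ i ∈ Finset.range N, Set.indicator (genBy P) (fun n => (1:ℝ)/n) i
      ≤ _ := step1
    _ ≤ _ := step2
    _ = _ := step3
    _ ≤ _ := step4
    _ ≤ _ := step5

lemma re_cpow {n : ℕ} (hn : 0 < n) (t : ℝ) :
    (((n:ℕ):ℂ) ^ (-(1 + Complex.I * (t:ℝ)))).re = Real.cos (t * Real.log n) / n := by
  have hne : ((n:ℕ):ℂ) ≠ 0 := by exact_mod_cast hn.ne'
  rw [Complex.cpow_def_of_ne_zero hne]
  have hlog : Complex.log ((n:ℕ):ℂ) = ((Real.log n : ℝ) : ℂ) := by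
    rw [← Complex.ofReal_natCast, ← Complex.ofReal_log (by positivity)]
  rw [hlog, Complex.exp_re]
  have hre : (((Real.log n : ℝ) : ℂ) * (-(1 + Complex.I * (t:ℝ)))).re = -Real.log n := by
    simp [Complex.mul_re, Complex.log_re, Complex.log_im, Complex.natCast_arg,
      Complex.norm_natCast]
  have him : (((Real.log n : ℝ) : ℂ) * (-(1 + Complex.I * (t:ℝ)))).im = -(Real.log n * t) := by
    simp [Complex.mul_im, Complex.log_re, Complex.log_im, Complex.natCast_arg,
      Complex.norm_natCast]
  rw [hre, him, Real.cos_neg, Real.exp_neg, Real.exp_log (by exact_mod_cast hn)]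
  rw [mul_comm (Real.log n) t]
  ring

lemma norm_cpow {n : ℕ} (hn : 0 < n) (t : ℝ) :
    ‖((n:ℕ):ℂ) ^ (-(1 + Complex.I * (t:ℝ)))‖ = 1 / (n:ℝ) := by
  have h0 : (0:ℝ) < (n:ℝ) := by exact_mod_cast hn
  rw [← Complex.ofReal_natCast,
    Complex.norm_cpow_eq_rpow_re_of_pos h0]
  have : (-(1 + Complex.I * (t:ℝ))).re = -1 := by simp
  rw [this, Real.rpow_neg_one, one_div]

lemma summable_cpow {J : Set ℕ} (h1 : ∀ n ∈ J, 0 < n)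
    (hJ : Summable (Set.indicator J fun n => (1:ℝ)/n)) (t : ℝ) :
    Summable (fun n : J => ((n:ℕ):ℂ) ^ (-(1 + Complex.I * (t:ℝ)))) := by
  refine Summable.of_norm ?_
  have hsub : Summable (fun n : J => (1:ℝ)/((n:ℕ):ℝ)) :=
    (summable_subtype_iff_indicator (s := J) (f := fun n : ℕ => (1:ℝ)/n)).mpr hJ
  refine hsub.congr ?_
  intro n
  exact (norm_cpow (h1 n n.2) t).symm

lemma re_zeta_diff {J : Set ℕ} (h1 : ∀ n ∈ J, 0 < n)
    (hJ : Summable (Set.indicator J fun n => (1:ℝ)/n)) (t : ℝ) :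
    (zetaLine J t - zetaLine J 0).re
      = -∑' n, Set.indicator J (fun n => (1 - Real.cos (t * Real.log n)) / n) n := by
  have ht := summable_cpow h1 hJ t
  have h0 := summable_cpow h1 hJ 0
  rw [zetaLine, zetaLine, ← Summable.tsum_sub ht h0, Complex.re_tsum (ht.sub h0)]
  have : ∀ n : J, ((((n:ℕ):ℂ) ^ (-(1 + Complex.I * (t:ℝ)))
      - ((n:ℕ):ℂ) ^ (-(1 + Complex.I * ((0:ℝ):ℝ)))).re)
      = -((1 - Real.cos (t * Real.log (n:ℕ))) / (n:ℕ)) := by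
    intro n
    rw [Complex.sub_re, re_cpow (h1 n n.2) t, re_cpow (h1 n n.2) 0]
    simp
    ring
  calc (∑' n : J, (((n:ℕ):ℂ) ^ (-(1 + Complex.I * (t:ℝ)))
        - ((n:ℕ):ℂ) ^ (-(1 + Complex.I * ((0:ℝ):ℝ)))).re)
      = ∑' n : J, -((1 - Real.cos (t * Real.log (n:ℕ))) / (n:ℕ)) := tsum_congr this
    _ = -∑' n : J, ((1 - Real.cos (t * Real.log (n:ℕ))) / (n:ℕ)) := tsum_neg
    _ = -∑' n, Set.indicator J (fun n => (1 - Real.cos (t * Real.log n)) / n) n := by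
        rw [tsum_subtype J (fun n => (1 - Real.cos (t * Real.log n)) / n)]

lemma V_le_norm {J : Set ℕ} (h1 : ∀ n ∈ J, 0 < n)
    (hJ : Summable (Set.indicator J fun n => (1:ℝ)/n)) (t : ℝ) :
    ∑' n, Set.indicator J (fun n => (1 - Real.cos (t * Real.log n)) / n) n
      ≤ ‖zetaLine J t - zetaLine J 0‖ := by
  have hV : 0 ≤ ∑' n, Set.indicator J (fun n => (1 - Real.cos (t * Real.log n)) / n) n := by
    refine tsum_nonneg ?_
    intro n
    refine Set.indicator_nonneg (fun i _ => ?_) n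
    have hc := Real.cos_le_one (t * Real.log i)
    have hi : (0:ℝ) ≤ (i:ℝ) := by positivity
    exact div_nonneg (by linarith) hi
  have := Complex.abs_re_le_norm (zetaLine J t - zetaLine J 0)
  rw [re_zeta_diff h1 hJ t, abs_neg, abs_of_nonneg hV] at this
  exact this

lemma window_ptwise {P : Set ℕ} (hp : ∀ p ∈ P, Nat.Prime p) (k : ℕ) {t : ℝ}
    (ht : t ∈ Icc (Real.pi/(2*2^k)) (3*Real.pi/(4*2^k))) (n : ℕ) :
    Set.indicator {p | p ∈ P ∧ (2:ℝ)^k ≤ Real.log p ∧ Real.log p < 2^(k+1)}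
        (fun m => (1:ℝ)/m) n
      ≤ Set.indicator (genBy P) (fun m => (1 - Real.cos (t * Real.log m)) / m) n := by
  classical
  by_cases hn : n ∈ {p | p ∈ P ∧ (2:ℝ)^k ≤ Real.log p ∧ Real.log p < 2^(k+1)}
  · obtain ⟨hnP, hlo, hhi⟩ := hn
    have hn' : n ∈ {p | p ∈ P ∧ (2:ℝ)^k ≤ Real.log p ∧ Real.log p < 2^(k+1)} :=
      ⟨hnP, hlo, hhi⟩
    have hprime := hp n hnP
    have hnJ : n ∈ genBy P := by
      refine ⟨hprime.pos, fun p hp' hdvd => ?_⟩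
      rwa [(Nat.prime_dvd_prime_iff_eq hp' hprime).mp hdvd]
    rw [Set.indicator_of_mem hn', Set.indicator_of_mem hnJ]
    have h2k : (0:ℝ) < 2^k := by positivity
    have hπ : (0:ℝ) < Real.pi := Real.pi_pos
    have ht1 := ht.1
    have ht2 := ht.2
    have ht0 : 0 < t := lt_of_lt_of_le (by positivity) ht1
    have hL0 : 0 < Real.log n := lt_of_lt_of_le (by positivity) hlo
    have hhi' : Real.log n ≤ 2*2^k := by
      have h21 : ((2:ℝ))^(k+1) = 2*2^k := by ring
      linarith [hhi]
    have hcos : Real.cos (t * Real.log n) ≤ 0 := by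
      refine Real.cos_nonpos_of_pi_div_two_le_of_le ?_ ?_
      · calc Real.pi / 2 = (Real.pi/(2*2^k)) * 2^k := by field_simp
          _ ≤ t * Real.log n := by
              apply mul_le_mul ht1 hlo (by positivity) ht0.le
      · calc t * Real.log n ≤ (3*Real.pi/(4*2^k)) * (2 * 2^k) := by
              apply mul_le_mul ht2 hhi' hL0.le (by positivity)
          _ = Real.pi + Real.pi / 2 := by field_simp; ring
    have hnpos : (0:ℝ) < n := by exact_mod_cast hprime.pos
    rw [div_le_div_iff₀ hnpos hnpos]
    nlinarith
  · rw [Set.indicator_of_notMem hn]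
    refine Set.indicator_nonneg (fun i _ => ?_) n
    have hc := Real.cos_le_one (t * Real.log i)
    have hi : (0:ℝ) ≤ (i:ℝ) := by positivity
    exact div_nonneg (by linarith) hi

/-- Hölder / AM-GM step. -/
lemma holder_step {r b : ℝ} (hr : 1 < r) {S : ℕ → ℝ} (hS : ∀ k, 0 ≤ S k)
    (hb : b < 1 - 1/r)
    (h : Summable (fun k : ℕ => (2:ℝ)^((k:ℝ)*(r-1)) * S k ^ r)) :
    Summable (fun k : ℕ => (2:ℝ)^((k:ℝ)*b) * S k) := by
  have hr0 : (0:ℝ) < r := by linarith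
  have hr1 : r - 1 ≠ 0 := by linarith
  set δ : ℝ := (1 - 1/r) - b with hδ
  have hδ0 : 0 < δ := by rw [hδ]; linarith
  set β : ℝ := δ * r / (r - 1) with hβ
  have hβ0 : 0 < β := by
    apply div_pos (mul_pos hδ0 hr0); linarith
  set y : ℕ → ℝ := fun k => (2:ℝ)^(-((k:ℝ)*β)) with hy
  have hysum : Summable y := by
    have hρ : (2:ℝ)^(-β) < 1 :=
      Real.rpow_lt_one_of_one_lt_of_neg one_lt_two (by linarith)
    have hρ0 : (0:ℝ) ≤ (2:ℝ)^(-β) := Real.rpow_nonneg (by norm_num) _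
    have hyy : y = fun k => ((2:ℝ)^(-β))^k := by
      funext k
      rw [hy, ← Real.rpow_natCast ((2:ℝ)^(-β)) k, ← Real.rpow_mul (by norm_num)]
      ring_nf
    rw [hyy]
    exact summable_geometric_of_lt_one hρ0 hρ
  have key : ∀ k : ℕ, (2:ℝ)^((k:ℝ)*b) * S k
      ≤ (2:ℝ)^((k:ℝ)*(r-1)) * S k ^ r + y k := by
    intro k
    set x : ℝ := (2:ℝ)^((k:ℝ)*(r-1)) * S k ^ r with hx
    have hx0 : 0 ≤ x := by
      apply mul_nonneg (Real.rpow_nonneg (by norm_num) _) (Real.rpow_nonneg (hS k) _)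
    have hy0 : 0 ≤ y k := Real.rpow_nonneg (by norm_num) _
    have hgm : x ^ (1/r) * (y k) ^ (1 - 1/r) ≤ (1/r) * x + (1 - 1/r) * y k :=
      Real.geom_mean_le_arith_mean2_weighted (by positivity) (by
        have h1r : 1/r < 1 := by rw [div_lt_one hr0]; linarith
        linarith) hx0 hy0 (by ring)
    have hSr : (S k ^ r) ^ (1/r) = S k := by
      rw [← Real.rpow_mul (hS k), mul_one_div, div_self hr0.ne', Real.rpow_one]
    have hid : x ^ (1/r) * (y k) ^ (1 - 1/r) = (2:ℝ)^((k:ℝ)*b) * S k := by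
      rw [hx]
      rw [Real.mul_rpow (Real.rpow_nonneg (by norm_num) _) (Real.rpow_nonneg (hS k) _)]
      rw [hSr]
      show ((2:ℝ)^((k:ℝ)*(r-1)))^(1/r) * S k * ((2:ℝ)^(-((k:ℝ)*β)))^(1 - 1/r) = _
      rw [← Real.rpow_mul (by norm_num : (0:ℝ) ≤ 2),
        ← Real.rpow_mul (by norm_num : (0:ℝ) ≤ 2)]
      rw [mul_right_comm, ← Real.rpow_add two_pos]
      congr 2
      rw [hβ, hδ]
      field_simp
      ring
    calc (2:ℝ)^((k:ℝ)*b) * S k = x ^ (1/r) * (y k) ^ (1 - 1/r) := hid.symm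
      _ ≤ (1/r) * x + (1 - 1/r) * y k := hgm
      _ ≤ x + y k := by
          have h1 : 1/r ≤ 1 := by rw [div_le_one hr0]; linarith
          have h2 : 0 < 1/r := by positivity
          nlinarith [hy0, hx0]
  refine Summable.of_nonneg_of_le (fun k => ?_) key (h.add hysum)
  exact mul_nonneg (Real.rpow_nonneg (by norm_num) _) (hS k)

end Stmt15

/-- With `Q`, `P`, `J` as before, `Σ_{p∈P} 1/p < ∞`, `q > 1` and
`1/q + 1/q' = 1`: if `Σ_{p∈P} (log p)^{1/q'}/p = ∞` then for every `r > q` the function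
`t ↦ (ζ_J(1+it) − ζ_J(1))/t` fails to be in `L^r(I)` for some bounded interval `I`. -/
theorem statement15 (Q : Set ℕ) (hQ : ∀ p ∈ Q, p.Prime)
    (hP : Summable fun p : primesNotIn Q => (1 : ℝ) / ((p : ℕ) : ℝ))
    (q q' : ℝ) (hq : 1 < q) (hq' : 1 / q + 1 / q' = 1)
    (hsum : ¬ Summable fun p : primesNotIn Q =>
      Real.log ((p : ℕ) : ℝ) ^ (1 / q') / ((p : ℕ) : ℝ)) :
    ∀ r : ℝ, q < r →
      ∃ a b : ℝ, ¬ MemLp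
        (fun t : ℝ =>
          (zetaLine (genBy (primesNotIn Q)) t - zetaLine (genBy (primesNotIn Q)) 0) / (t : ℂ))
        (ENNReal.ofReal r) (volume.restrict (Ioo a b)) := by
  classical
  intro r hr
  have hr1 : 1 < r := lt_trans hq hr
  have hr0 : (0:ℝ) < r := by linarith
  set P : Set ℕ := primesNotIn Q with hPdef
  set J : Set ℕ := genBy P with hJdef
  have hPprime : ∀ p ∈ P, Nat.Prime p := fun p hp => hp.1
  have hPind : Summable (Set.indicator P fun n => (1:ℝ)/n) := by
    have h0 : Summable (fun p : P => (1:ℝ)/((p:ℕ):ℝ)) := hP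
    exact (summable_subtype_iff_indicator (s := P) (f := fun n : ℕ => (1:ℝ)/n)).mp h0
  have hJind : Summable (Set.indicator J fun n => (1:ℝ)/n) :=
    Stmt15.summable_indicator_genBy hPind
  have hJ1 : ∀ n ∈ J, 0 < n := fun n hn => hn.1
  set Pk : ℕ → Set ℕ :=
    fun k => {p | p ∈ P ∧ (2:ℝ)^k ≤ Real.log p ∧ Real.log p < 2^(k+1)} with hPk
  set S : ℕ → ℝ := fun k => ∑' n, Set.indicator (Pk k) (fun m => (1:ℝ)/m) n with hSdef
  have hindnn : ∀ (A : Set ℕ) (n : ℕ), 0 ≤ Set.indicator A (fun m => (1:ℝ)/m) n :=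
    fun A n => Set.indicator_nonneg (fun i _ => by positivity) n
  have hSksum : ∀ k, Summable (Set.indicator (Pk k) fun m => (1:ℝ)/m) := by
    intro k
    refine Summable.of_nonneg_of_le (hindnn (Pk k)) (fun n => ?_) hPind
    exact Set.indicator_le_indicator_of_subset (fun x hx => hx.1) (fun m => by positivity) n
  have hSnn : ∀ k, 0 ≤ S k := fun k => tsum_nonneg (hindnn (Pk k))
  set V : ℝ → ℝ :=
    fun t => ∑' n, Set.indicator J (fun m => (1 - Real.cos (t * Real.log m)) / m) n with hV
  have hVtermnn : ∀ (t : ℝ) (n : ℕ),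
      0 ≤ Set.indicator J (fun m => (1 - Real.cos (t * Real.log m)) / m) n := by
    intro t n
    refine Set.indicator_nonneg (fun i _ => ?_) n
    have hc := Real.cos_le_one (t * Real.log i)
    have hi : (0:ℝ) ≤ (i:ℝ) := by positivity
    exact div_nonneg (by linarith) hi
  have hVsum : ∀ t : ℝ,
      Summable (Set.indicator J fun m => (1 - Real.cos (t * Real.log m)) / m) := by
    intro t
    refine Summable.of_nonneg_of_le (hVtermnn t) (fun n => ?_) (hJind.mul_left 2)
    by_cases hn : n ∈ J
    · rw [Set.indicator_of_mem hn, Set.indicator_of_mem hn]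
      have hnpos : (0:ℝ) < n := by exact_mod_cast hJ1 n hn
      have hc := Real.neg_one_le_cos (t * Real.log n)
      rw [mul_one_div, div_le_div_iff₀ hnpos hnpos]
      nlinarith
    · rw [Set.indicator_of_notMem hn, Set.indicator_of_notMem hn]
      norm_num
  have hwin : ∀ k : ℕ, ∀ t ∈ Icc (Real.pi/(2*2^k)) (3*Real.pi/(4*2^k)), S k ≤ V t := by
    intro k t ht
    exact Summable.tsum_le_tsum (fun n => Stmt15.window_ptwise hPprime k ht n) (hSksum k) (hVsum t)
  refine ⟨0, 3, ?_⟩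
  intro hmem
  set F : ℝ → ℂ := fun t => (zetaLine J t - zetaLine J 0) / (t:ℂ) with hF
  have hpne0 : (ENNReal.ofReal r) ≠ 0 := by
    simp only [ne_eq, ENNReal.ofReal_eq_zero, not_le]
    linarith
  have hpnetop : (ENNReal.ofReal r) ≠ ⊤ := ENNReal.ofReal_ne_top
  have hint : Integrable (fun t => ‖F t‖ ^ r) (volume.restrict (Ioo (0:ℝ) 3)) := by
    have h1 := hmem.integrable_norm_rpow hpne0 hpnetop
    rwa [ENNReal.toReal_ofReal hr0.le] at h1
  set G : ℝ → ℝ := fun t => ‖F t‖ ^ r with hG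
  set W : ℕ → Set ℝ := fun k => Icc (Real.pi/(2*2^k)) (3*Real.pi/(4*2^k)) with hW
  have hπ := Real.pi_pos
  have hπ4 : Real.pi < 4 := by linarith [Real.pi_lt_d2]
  have h2kpos : ∀ k : ℕ, (0:ℝ) < 2^k := fun k => by positivity
  have h2kge1 : ∀ k : ℕ, (1:ℝ) ≤ 2^k := fun k => one_le_pow₀ one_le_two
  have hWsub : ∀ k, W k ⊆ Ioo (0:ℝ) 3 := by
    intro k t ht
    constructor
    · have : (0:ℝ) < Real.pi/(2*2^k) := by positivity
      linarith [ht.1]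
    · have h1 : 3*Real.pi/(4*2^k) ≤ 3*Real.pi/4 := by
        apply div_le_div_of_nonneg_left (by positivity) (by norm_num)
        nlinarith [h2kge1 k]
      have := ht.2
      nlinarith
  have hWmeas : ∀ k, MeasurableSet (W k) := fun k => measurableSet_Icc
  have hIG : IntegrableOn G (Ioo (0:ℝ) 3) volume := hint
  have hItg : ∀ k, IntegrableOn G (W k) volume := fun k => hIG.mono_set (hWsub k)
  -- pointwise lower bound on each window
  have hlow : ∀ k : ℕ, ∀ t ∈ W k, (S k * (4*2^k/(3*Real.pi)))^r ≤ G t := by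
    intro k t ht
    have ht0 : 0 < t := lt_of_lt_of_le (by positivity) ht.1
    have hnum : S k ≤ ‖zetaLine J t - zetaLine J 0‖ :=
      le_trans (hwin k t ht) (Stmt15.V_le_norm hJ1 hJind t)
    have hnorm : S k / t ≤ ‖F t‖ := by
      have h1 : ‖F t‖ = ‖zetaLine J t - zetaLine J 0‖ / t := by
        rw [hF]
        rw [norm_div, Complex.norm_real, Real.norm_eq_abs, abs_of_pos ht0]
      rw [h1]
      gcongr
    have h2 : S k * (4*2^k/(3*Real.pi)) ≤ S k / t := by
      rw [div_eq_mul_inv]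
      apply mul_le_mul_of_nonneg_left _ (hSnn k)
      have h3 : (3*Real.pi/(4*2^k))⁻¹ ≤ t⁻¹ := inv_anti₀ ht0 ht.2
      calc 4*2^k/(3*Real.pi) = (3*Real.pi/(4*2^k))⁻¹ := by
            rw [inv_div]
        _ ≤ t⁻¹ := h3
    have hc0 : 0 ≤ S k * (4*2^k/(3*Real.pi)) := by
      have := hSnn k
      positivity
    calc (S k * (4*2^k/(3*Real.pi)))^r ≤ (‖F t‖)^r :=
          Real.rpow_le_rpow hc0 (le_trans h2 hnorm) hr0.le
      _ = G t := rfl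
  -- window volumes
  have hWle : ∀ k : ℕ, Real.pi/(2*2^k) ≤ 3*Real.pi/(4*2^k) := by
    intro k
    rw [div_le_div_iff₀ (by positivity) (by positivity)]
    nlinarith [h2kpos k]
  have hWvol : ∀ k, (volume (W k)).toReal = Real.pi/(4*2^k) := by
    intro k
    rw [hW]
    rw [Real.volume_Icc, ENNReal.toReal_ofReal (by linarith [hWle k])]
    field_simp
    ring
  have hper : ∀ k, (S k * (4*2^k/(3*Real.pi)))^r * (Real.pi/(4*2^k))
      ≤ ∫ t in W k, G t := by
    intro k
    have hfin : volume (W k) ≠ ⊤ := by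
      rw [hW]
      simp [Real.volume_Icc]
    have := setIntegral_ge_of_const_le (hWmeas k) hfin (hlow k) (hItg k)
    rw [measureReal_def, hWvol k, smul_eq_mul, mul_comm] at this
    exact this
  -- disjointness of windows
  have hdisj : ∀ i j : ℕ, i < j → Disjoint (W i) (W j) := by
    intro i j hij
    rw [Set.disjoint_left]
    intro t hti htj
    have h1 : (2:ℝ)^(i+1) ≤ 2^j := by
      apply pow_le_pow_right₀ one_le_two
      omega
    have h2 : 3*Real.pi/(4*2^j) ≤ 3*Real.pi/(4*2^(i+1)) := by
      apply div_le_div_of_nonneg_left (by positivity) (by positivity)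
      nlinarith
    have h3 : 3*Real.pi/(4*2^(i+1)) < Real.pi/(2*2^i) := by
      rw [div_lt_div_iff₀ (by positivity) (by positivity)]
      have h2i := h2kpos i
      have : ((2:ℝ))^(i+1) = 2*2^i := by ring
      nlinarith
    have := hti.1
    have := htj.2
    linarith
  -- sum of window integrals bounded by total integral
  set B : ℝ := ∫ t in Ioo (0:ℝ) 3, G t with hB
  have hBsum : ∀ K : ℕ,
      ∑ k ∈ Finset.range K, (S k * (4*2^k/(3*Real.pi)))^r * (Real.pi/(4*2^k)) ≤ B := by
    intro K
    have h1 : ∑ k ∈ Finset.range K, (S k * (4*2^k/(3*Real.pi)))^r * (Real.pi/(4*2^k))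
        ≤ ∑ k ∈ Finset.range K, ∫ t in W k, G t :=
      Finset.sum_le_sum (fun k _ => hper k)
    have hpw : (↑(Finset.range K) : Set ℕ).Pairwise (Function.onFun Disjoint W) := by
      intro i _ j _ hij
      rcases lt_or_gt_of_ne hij with h | h
      · exact hdisj i j h
      · exact (hdisj j i h).symm
    have h2 : ∑ k ∈ Finset.range K, ∫ t in W k, G t
        = ∫ t in ⋃ k ∈ Finset.range K, W k, G t :=
      (integral_biUnion_finset (Finset.range K) (fun k _ => hWmeas k) hpw
        (fun k _ => hItg k)).symm
    have h3 : ∫ t in ⋃ k ∈ Finset.range K, W k, G t ≤ B := by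
      refine setIntegral_mono_set hIG ?_ ?_
      · refine Filter.Eventually.of_forall (fun t => ?_)
        exact Real.rpow_nonneg (norm_nonneg _) r
      · exact HasSubset.Subset.eventuallyLE (Set.iUnion₂_subset fun k _ => hWsub k)
    linarith
  have htermnn : ∀ k : ℕ, 0 ≤ (S k * (4*2^k/(3*Real.pi)))^r * (Real.pi/(4*2^k)) := by
    intro k
    apply mul_nonneg (Real.rpow_nonneg _ r) (by positivity)
    have := hSnn k
    positivity
  have hsummable1 : Summable
      (fun k : ℕ => (S k * (4*2^k/(3*Real.pi)))^r * (Real.pi/(4*2^k))) :=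
    summable_of_sum_range_le htermnn hBsum
  -- rewrite the terms
  have hterm : ∀ k : ℕ, (S k * (4*2^k/(3*Real.pi)))^r * (Real.pi/(4*2^k))
      = ((4/(3*Real.pi))^r * (Real.pi/4)) * ((2:ℝ)^((k:ℝ)*(r-1)) * S k^r) := by
    intro k
    have h2k := h2kpos k
    have hSk := hSnn k
    have he1 : ((2:ℝ)^k : ℝ) = (2:ℝ)^((k:ℝ)) := (Real.rpow_natCast 2 k).symm
    have key2 : (2:ℝ)^((k:ℝ)*r) * ((2:ℝ)^((k:ℝ)))⁻¹ = (2:ℝ)^((k:ℝ)*(r-1)) := by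
      rw [← Real.rpow_neg (by norm_num : (0:ℝ) ≤ 2), ← Real.rpow_add two_pos]
      congr 1
      ring
    have hArpow : ((2:ℝ)^((k:ℝ)))^r = (2:ℝ)^((k:ℝ)*r) := by
      rw [← Real.rpow_mul (by norm_num : (0:ℝ) ≤ 2)]
    have h2kr : (0:ℝ) < (2:ℝ)^((k:ℝ)) := Real.rpow_pos_of_pos two_pos _
    calc (S k * (4*2^k/(3*Real.pi)))^r * (Real.pi/(4*2^k))
        = ((S k * (4/(3*Real.pi))) * (2:ℝ)^((k:ℝ)))^r
            * (Real.pi/4 * ((2:ℝ)^((k:ℝ)))⁻¹) := by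
          rw [he1]
          congr 1
          · congr 1
            ring
          · field_simp
      _ = (S k)^r * ((4/(3*Real.pi)))^r * ((2:ℝ)^((k:ℝ)))^r
            * (Real.pi/4 * ((2:ℝ)^((k:ℝ)))⁻¹) := by
          rw [Real.mul_rpow (mul_nonneg hSk (by positivity)) h2kr.le,
            Real.mul_rpow hSk (by positivity)]
      _ = ((4/(3*Real.pi))^r * (Real.pi/4))
            * (((2:ℝ)^((k:ℝ)*r) * ((2:ℝ)^((k:ℝ)))⁻¹) * S k^r) := by
          rw [hArpow]
          ring
      _ = ((4/(3*Real.pi))^r * (Real.pi/4)) * ((2:ℝ)^((k:ℝ)*(r-1)) * S k^r) := by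
          rw [key2]
  have hC : (0:ℝ) < (4/(3*Real.pi))^r * (Real.pi/4) := by positivity
  have hkey : Summable (fun k : ℕ => (2:ℝ)^((k:ℝ)*(r-1)) * S k ^ r) := by
    have h1 : Summable (fun k : ℕ =>
        ((4/(3*Real.pi))^r * (Real.pi/4)) * ((2:ℝ)^((k:ℝ)*(r-1)) * S k^r)) :=
      hsummable1.congr fun k => hterm k
    exact (summable_mul_left_iff hC.ne').mp h1
  -- the Hölder step
  have hαval : 1/q' = 1 - 1/q := by linarith
  have h1q : 0 < 1/q := by positivity
  have h1q1 : 1/q < 1 := by rw [div_lt_one (by linarith)]; linarith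
  have hα0 : 0 < 1/q' := by rw [hαval]; linarith
  have hblt : 1/q' < 1 - 1/r := by
    rw [hαval]
    have : 1/r < 1/q := one_div_lt_one_div_of_lt (by linarith) hr
    linarith
  have hS2 : Summable (fun k : ℕ => (2:ℝ)^((k:ℝ)*(1/q')) * S k) :=
    Stmt15.holder_step hr1 hSnn hblt hkey
  -- derive summability of Σ (log p)^(1/q')/p , contradicting hsum
  set α : ℝ := 1/q' with hαdef
  set g : ℕ → ℝ := fun n => Real.log n ^ α / n with hg
  have hgnn : ∀ n : ℕ, 0 ≤ g n := by
    intro n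
    exact div_nonneg (Real.rpow_nonneg (Real.log_natCast_nonneg n) _) (by positivity)
  have hindgnn : ∀ n, 0 ≤ Set.indicator P g n :=
    fun n => Set.indicator_nonneg (fun i _ => hgnn i) n
  have hc2 : Summable (fun k : ℕ => (2:ℝ)^α * ((2:ℝ)^((k:ℝ)*α) * S k)) := hS2.mul_left _
  set c2 : ℝ := ∑' k : ℕ, (2:ℝ)^α * ((2:ℝ)^((k:ℝ)*α) * S k) with hc2def
  have hfinal : Summable (Set.indicator P g) := by
    refine summable_of_sum_range_le (c := 1 + c2) hindgnn ?_
    intro N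
    set kf : ℕ → ℕ := fun n => ⌊Real.logb 2 (Real.log n)⌋₊ with hkf
    set Fb : Finset ℕ := (Finset.range N).filter (fun n => 3 ≤ n) with hFb
    have hlog1 : ∀ n : ℕ, 3 ≤ n → 1 ≤ Real.log n := by
      intro n h3
      have hnpos : (0:ℝ) < n := by
        have : (3:ℝ) ≤ n := by exact_mod_cast h3
        linarith
      rw [Real.le_log_iff_exp_le hnpos]
      have h33 : (3:ℝ) ≤ n := by exact_mod_cast h3
      calc Real.exp 1 ≤ 2.7182818286 := Real.exp_one_lt_d9.le
        _ ≤ 3 := by norm_num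
        _ ≤ (n:ℝ) := h33
    have hmaps : ∀ n ∈ Fb, kf n ∈ Finset.range (2*N+1) := by
      intro n hn
      have hmem := Finset.mem_filter.mp hn
      have hnN : n < N := Finset.mem_range.mp hmem.1
      have h3 : 3 ≤ n := hmem.2
      have h1 := hlog1 n h3
      have hnpos : (0:ℝ) < n := by
        have : (3:ℝ) ≤ n := by exact_mod_cast h3
        linarith
      have hlog2 : (0.6931471803:ℝ) < Real.log 2 := Real.log_two_gt_d9
      have hup : Real.logb 2 (Real.log n) ≤ 2*n := by
        rw [Real.logb, div_le_iff₀ (by linarith)]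
        have ha : Real.log (Real.log n) ≤ Real.log n - 1 :=
          Real.log_le_sub_one_of_pos (by linarith)
        have hb2 : Real.log n ≤ (n:ℝ) - 1 := Real.log_le_sub_one_of_pos hnpos
        nlinarith
      have hkle : kf n ≤ 2*n := by
        rw [hkf]
        calc ⌊Real.logb 2 (Real.log n)⌋₊ ≤ ⌊((2*n : ℕ) : ℝ)⌋₊ := by
              apply Nat.floor_le_floor
              push_cast
              linarith
          _ = 2*n := Nat.floor_natCast _
      rw [Finset.mem_range]
      omega
    have hsplit : ∑ n ∈ Finset.range N, Set.indicator P g n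
        = ∑ n ∈ Fb, Set.indicator P g n
          + ∑ n ∈ (Finset.range N).filter (fun n => ¬ 3 ≤ n), Set.indicator P g n :=
      (Finset.sum_filter_add_sum_filter_not (Finset.range N) (fun n => 3 ≤ n)
        (Set.indicator P g)).symm
    have hsmall : ∑ n ∈ (Finset.range N).filter (fun n => ¬ 3 ≤ n),
        Set.indicator P g n ≤ 1 := by
      have hterm2 : ∀ n ∈ (Finset.range N).filter (fun n => ¬ 3 ≤ n),
          Set.indicator P g n ≤ (fun m => if m = 2 then (1:ℝ) else 0) n := by
        intro n hn
        have h3 : n < 3 := by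
          have := (Finset.mem_filter.mp hn).2
          omega
        interval_cases n
        · rw [Set.indicator_of_notMem]
          · norm_num
          · intro h
            exact Nat.not_prime_zero h.1
        · rw [Set.indicator_of_notMem]
          · norm_num
          · intro h
            exact Nat.not_prime_one h.1
        · have hle : Set.indicator P g 2 ≤ g 2 :=
            Set.indicator_apply_le' (fun _ => le_rfl) (fun _ => hgnn 2)
          have hlog2' : Real.log ((2:ℕ):ℝ) ≤ 1 := by
            have := Real.log_two_lt_d9
            push_cast
            linarith
          have hg2 : g 2 ≤ 1 := by
            show Real.log ((2:ℕ):ℝ) ^ α / ((2:ℕ):ℝ) ≤ 1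
            have hx : Real.log ((2:ℕ):ℝ) ^ α ≤ 1 :=
              Real.rpow_le_one (Real.log_natCast_nonneg 2) hlog2' hα0.le
            have hx0 : (0:ℝ) ≤ Real.log ((2:ℕ):ℝ) ^ α :=
              Real.rpow_nonneg (Real.log_natCast_nonneg 2) _
            rw [div_le_one (by norm_num : (0:ℝ) < ((2:ℕ):ℝ))]
            have h12 : (1:ℝ) ≤ ((2:ℕ):ℝ) := by norm_num
            linarith
          simpa using le_trans hle hg2
      calc ∑ n ∈ (Finset.range N).filter (fun n => ¬ 3 ≤ n), Set.indicator P g n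
          ≤ ∑ n ∈ (Finset.range N).filter (fun n => ¬ 3 ≤ n),
              (fun m => if m = 2 then (1:ℝ) else 0) n := Finset.sum_le_sum hterm2
        _ ≤ 1 := by
            rw [Finset.sum_ite_eq' ((Finset.range N).filter (fun n => ¬ 3 ≤ n)) 2
              (fun _ => (1:ℝ))]
            split_ifs <;> norm_num
    have hbig : ∑ n ∈ Fb, Set.indicator P g n ≤ c2 := by
      rw [← Finset.sum_fiberwise_of_maps_to hmaps (Set.indicator P g)]
      have hfiber : ∀ k ∈ Finset.range (2*N+1),
          ∑ n ∈ Fb.filter (fun n => kf n = k), Set.indicator P g n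
            ≤ (2:ℝ)^α * ((2:ℝ)^((k:ℝ)*α) * S k) := by
        intro k _
        have htw : ∀ n ∈ Fb.filter (fun n => kf n = k),
            Set.indicator P g n
              ≤ ((2:ℝ)^α * (2:ℝ)^((k:ℝ)*α))
                * Set.indicator (Pk k) (fun m => (1:ℝ)/m) n := by
          intro n hn
          obtain ⟨hnFb, hkfn⟩ := Finset.mem_filter.mp hn
          have h3 : 3 ≤ n := (Finset.mem_filter.mp hnFb).2
          by_cases hnP : n ∈ P
          · have h1 := hlog1 n h3
            have hLpos : (0:ℝ) < Real.log n := by linarith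
            have hlb : 0 ≤ Real.logb 2 (Real.log n) := Real.logb_nonneg one_lt_two h1
            have ha : (2:ℝ)^k ≤ Real.log n := by
              calc (2:ℝ)^k = (2:ℝ)^((k:ℝ)) := (Real.rpow_natCast 2 k).symm
                _ ≤ (2:ℝ)^(Real.logb 2 (Real.log n)) := by
                    apply Real.rpow_le_rpow_of_exponent_le one_le_two
                    rw [← hkfn, hkf]
                    exact_mod_cast Nat.floor_le hlb
                _ = Real.log n := Real.rpow_logb two_pos (by norm_num) hLpos
            have hb2 : Real.log n < 2^(k+1) := by
              calc Real.log n = (2:ℝ)^(Real.logb 2 (Real.log n)) :=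
                    (Real.rpow_logb two_pos (by norm_num) hLpos).symm
                _ < (2:ℝ)^(((k:ℝ))+1) := by
                    apply Real.rpow_lt_rpow_of_exponent_lt one_lt_two
                    rw [← hkfn, hkf]
                    exact_mod_cast Nat.lt_floor_add_one (Real.logb 2 (Real.log n))
                _ = (2:ℝ)^(k+1) := by
                    rw [← Real.rpow_natCast 2 (k+1)]
                    push_cast
                    ring_nf
            have hnPk : n ∈ Pk k := ⟨hnP, ha, hb2⟩
            rw [Set.indicator_of_mem hnP, Set.indicator_of_mem hnPk]
            have hpow : Real.log n ^ α ≤ ((2:ℝ)^(k+1)) ^ α :=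
              Real.rpow_le_rpow (by linarith) hb2.le hα0.le
            have hpow2 : ((2:ℝ)^(k+1) : ℝ) ^ α = (2:ℝ)^α * (2:ℝ)^((k:ℝ)*α) := by
              rw [← Real.rpow_natCast 2 (k+1), ← Real.rpow_mul (by norm_num : (0:ℝ) ≤ 2),
                ← Real.rpow_add two_pos]
              congr 1
              push_cast
              ring
            rw [hg]
            show Real.log n ^ α / n ≤ _
            rw [div_eq_mul_one_div]
            apply mul_le_mul_of_nonneg_right _ (by positivity)
            rw [← hpow2]
            exact hpow
          · rw [Set.indicator_of_notMem hnP]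
            have h4 := hindnn (Pk k) n
            have h5 : (0:ℝ) ≤ (2:ℝ)^α * (2:ℝ)^((k:ℝ)*α) := by positivity
            exact mul_nonneg h5 h4
        calc ∑ n ∈ Fb.filter (fun n => kf n = k), Set.indicator P g n
            ≤ ∑ n ∈ Fb.filter (fun n => kf n = k),
                ((2:ℝ)^α * (2:ℝ)^((k:ℝ)*α))
                  * Set.indicator (Pk k) (fun m => (1:ℝ)/m) n := Finset.sum_le_sum htw
          _ = ((2:ℝ)^α * (2:ℝ)^((k:ℝ)*α))
                * ∑ n ∈ Fb.filter (fun n => kf n = k),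
                    Set.indicator (Pk k) (fun m => (1:ℝ)/m) n := by
              rw [Finset.mul_sum]
          _ ≤ ((2:ℝ)^α * (2:ℝ)^((k:ℝ)*α)) * S k := by
              apply mul_le_mul_of_nonneg_left _ (by positivity)
              exact Summable.sum_le_tsum _ (fun i _ => hindnn (Pk k) i) (hSksum k)
          _ = (2:ℝ)^α * ((2:ℝ)^((k:ℝ)*α) * S k) := by ring
      calc ∑ k ∈ Finset.range (2*N+1),
            ∑ n ∈ Fb.filter (fun n => kf n = k), Set.indicator P g n
          ≤ ∑ k ∈ Finset.range (2*N+1), (2:ℝ)^α * ((2:ℝ)^((k:ℝ)*α) * S k) :=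
            Finset.sum_le_sum hfiber
        _ ≤ c2 := by
            refine Summable.sum_le_tsum _ (fun k _ => ?_) hc2
            have := hSnn k
            positivity
    rw [hsplit]
    linarith
  exact hsum ((summable_subtype_iff_indicator (s := P) (f := g)).mpr hfinal)

end
end

section
/- There exists a set Q of prime numbers such that Σ_{p prime, p∉Q} 1/p < ∞ but the prime number theorem fails for Q, i.e. it is not the case that π_Q(x) ~ x/log x as x → ∞. -/
open MeasureTheory Set Filter Topology ComplexConjugate

noncomputable section

set_option maxHeartbeats 1600000 in
/-- There is a set `Q` of primes with `Σ_{p∉Q prime} 1/p < ∞` for which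
the prime number theorem `π_Q(x) ~ x/log x` fails. -/
theorem statement18 :
    ∃ Q : Set ℕ, (∀ p ∈ Q, p.Prime) ∧
      (Summable fun p : primesNotIn Q => (1 : ℝ) / ((p : ℕ) : ℝ)) ∧
      ¬ Tendsto (fun x : ℝ => countK Q x / (x / Real.log x)) atTop (𝓝 1) := by
  classical
  by_cases h : Tendsto (fun x : ℝ => countK {p : ℕ | p.Prime} x / (x / Real.log x)) atTop (𝓝 1)
  · -- PNT holds for all primes: remove a sparse set of primes.
    set P : Set ℕ := {p : ℕ | p.Prime} with hPdef
    -- finiteness of the counted sets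
    have hfin : ∀ (K : Set ℕ) (x : ℝ), (K ∩ {n : ℕ | (n : ℝ) ≤ x}).Finite := by
      intro K x
      apply Set.Finite.subset (Set.finite_Iic ⌈x⌉₊)
      rintro n ⟨-, hn⟩
      have : (n : ℝ) ≤ (⌈x⌉₊ : ℝ) := le_trans hn (Nat.le_ceil x)
      exact_mod_cast this
    -- extract threshold from the PNT hypothesis
    have hev : ∀ᶠ x : ℝ in atTop,
        |countK P x / (x / Real.log x) - 1| < 1/10 := by
      have := Metric.tendsto_nhds.mp h (1/10) (by norm_num)
      simpa [Real.dist_eq] using this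
    obtain ⟨X0, hX0⟩ := eventually_atTop.mp hev
    set X1 : ℝ := max X0 3 with hX1def
    have hX13 : (3:ℝ) ≤ X1 := le_max_right _ _
    have hcount : ∀ x : ℝ, X1 ≤ x → countK P x ≤ 1.1 * (x / Real.log x) := by
      intro x hx
      have hx3 : (3:ℝ) ≤ x := le_trans hX13 hx
      have hlx : 0 < Real.log x := Real.log_pos (by linarith)
      have hpos : 0 < x / Real.log x := by positivity
      have h1 := hX0 x (le_trans (le_max_left _ _) hx)
      have h2 := (abs_lt.mp h1).2
      have : countK P x / (x / Real.log x) ≤ 1.1 := by linarith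
      calc countK P x = countK P x / (x / Real.log x) * (x / Real.log x) := by
            field_simp
        _ ≤ 1.1 * (x / Real.log x) := by
            apply mul_le_mul_of_nonneg_right this hpos.le
    -- the sequence of scales
    set N0 : ℕ := ⌈X1⌉₊ + 3 with hN0def
    have hN0pos : 0 < N0 := by omega
    set c : ℕ → ℕ := fun k => ⌈Real.exp ((2:ℝ)^(k+2))⌉₊ with hcdef
    set m : ℕ → ℕ := fun k => N0 * c k with hmdef
    have hc1 : ∀ k, Real.exp ((2:ℝ)^(k+2)) ≤ (c k : ℝ) := fun k => Nat.le_ceil _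
    have hcpos : ∀ k, 0 < c k := by
      intro k
      have := (Real.exp_pos ((2:ℝ)^(k+2))).trans_le (hc1 k)
      exact_mod_cast this
    have hcm : ∀ k, c k ≤ m k := fun k => Nat.le_mul_of_pos_left _ hN0pos
    have hm_exp : ∀ k, Real.exp ((2:ℝ)^(k+2)) ≤ (m k : ℝ) := by
      intro k
      exact le_trans (hc1 k) (by exact_mod_cast hcm k)
    have hmpos : ∀ k, 0 < m k := fun k => lt_of_lt_of_le (hcpos k) (hcm k)
    have hmX1 : ∀ k, X1 ≤ (m k : ℝ) := by
      intro k
      have h1 : N0 ≤ m k := Nat.le_mul_of_pos_right _ (hcpos k)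
      have h2 : X1 ≤ (N0 : ℝ) := by
        have := Nat.le_ceil X1
        have h3 : ((⌈X1⌉₊ : ℕ) : ℝ) ≤ (N0 : ℝ) := by exact_mod_cast Nat.le_add_right _ 3
        linarith
      exact le_trans h2 (by exact_mod_cast h1)
    have hm3 : ∀ k, (3:ℝ) ≤ (m k : ℝ) := fun k => le_trans hX13 (hmX1 k)
    have hlogm : ∀ k, (2:ℝ)^(k+2) ≤ Real.log (m k) := by
      intro k
      rw [Real.le_log_iff_exp_le (by exact_mod_cast hmpos k)]
      exact hm_exp k
    have h4pow : ∀ k : ℕ, (4:ℝ) ≤ (2:ℝ)^(k+2) := by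
      intro k
      calc (4:ℝ) = 2^2 := by norm_num
        _ ≤ 2^(k+2) := pow_le_pow_right₀ one_le_two (by omega)
    have hlog4 : ∀ k, (4:ℝ) ≤ Real.log (m k) := fun k => le_trans (h4pow k) (hlogm k)
    have hkm : ∀ k, k < m k := by
      intro k
      have h1 : (k : ℝ) < (2:ℝ)^(k+2) := by
        have := Nat.lt_two_pow_self (n := k)
        have h2 : (k:ℝ) < (2:ℝ)^k := by exact_mod_cast this
        have h3 : (2:ℝ)^k ≤ (2:ℝ)^(k+2) := pow_le_pow_right₀ one_le_two (by omega)
        linarith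
      have h2 : (2:ℝ)^(k+2) ≤ Real.exp ((2:ℝ)^(k+2)) := by
        have := Real.add_one_le_exp ((2:ℝ)^(k+2))
        linarith
      have : (k:ℝ) < (m k : ℝ) := lt_of_lt_of_le (lt_of_lt_of_le h1 h2) (hm_exp k)
      exact_mod_cast this
    -- the blocks and the removed set
    set Blk : ℕ → Set ℕ := fun k => {p : ℕ | p.Prime ∧ m k < p ∧ p ≤ 2 * m k} with hBlkdef
    set R : Set ℕ := ⋃ k, Blk k with hRdef
    set Q : Set ℕ := {p : ℕ | p.Prime ∧ p ∉ R} with hQdef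
    -- block cardinality bound
    have hBlkcard : ∀ k, ((Blk k).ncard : ℝ) ≤ 0.55 * (1/2)^k * (m k : ℝ) := by
      intro k
      have hmr : (0:ℝ) < (m k : ℝ) := by exact_mod_cast hmpos k
      have hsub : Blk k ⊆ P ∩ {n : ℕ | (n : ℝ) ≤ 2 * (m k : ℝ)} := by
        rintro p ⟨hp, -, hp2⟩
        refine ⟨hp, ?_⟩
        have : (p : ℝ) ≤ ((2 * m k : ℕ) : ℝ) := by exact_mod_cast hp2
        simpa [mul_comm] using this.trans_eq (by push_cast; ring)
      have h1 : ((Blk k).ncard : ℝ) ≤ countK P (2 * (m k : ℝ)) :=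
        Nat.cast_le.mpr (Set.ncard_le_ncard hsub (hfin P _))
      have hX : X1 ≤ 2 * (m k : ℝ) := le_trans (hmX1 k) (by linarith)
      have h2 : countK P (2 * (m k : ℝ)) ≤ 1.1 * (2 * (m k:ℝ) / Real.log (2 * m k)) :=
        hcount _ hX
      have hL2 : (2:ℝ)^(k+2) ≤ Real.log (2 * (m k : ℝ)) := by
        refine le_trans (hlogm k) (Real.log_le_log (by positivity) (by linarith))
      have hL2pos : (0:ℝ) < Real.log (2 * (m k : ℝ)) :=
        lt_of_lt_of_le (by positivity) hL2
      have h3 : 2 * (m k:ℝ) / Real.log (2 * m k) ≤ 2 * (m k:ℝ) / (2:ℝ)^(k+2) := by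
        apply div_le_div_of_nonneg_left (by positivity) (by positivity) hL2
      have hpow : (2:ℝ)^(k+2) = 4 * 2^k := by ring
      have h4 : 1.1 * (2 * (m k:ℝ) / (2:ℝ)^(k+2)) = 0.55 * (1/2)^k * (m k : ℝ) := by
        rw [hpow]
        rw [div_pow, one_pow]
        field_simp
        ring
      calc ((Blk k).ncard : ℝ) ≤ 1.1 * (2 * (m k:ℝ) / Real.log (2 * m k)) := h1.trans h2
        _ ≤ 1.1 * (2 * (m k:ℝ) / (2:ℝ)^(k+2)) := by nlinarith
        _ = 0.55 * (1/2)^k * (m k : ℝ) := h4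
    refine ⟨Q, fun p hp => hp.1, ?_, ?_⟩
    · -- summability
      have hSR : ∀ n : ℕ, n ∈ primesNotIn Q → n ∈ R := by
        rintro n ⟨hp, hn⟩
        by_contra hnR
        exact hn ⟨hp, hnR⟩
      have hInd : Summable ((primesNotIn Q).indicator (fun n : ℕ => (1:ℝ) / (n:ℝ))) := by
        apply summable_of_sum_range_le (c := 2)
          (fun n => Set.indicator_nonneg (fun i _ => by positivity) n)
        intro N
        have step1 : ∑ n ∈ Finset.range N, (primesNotIn Q).indicator (fun n : ℕ => (1:ℝ)/(n:ℝ)) n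
            ≤ ∑ n ∈ Finset.range N, ∑ k ∈ Finset.range N,
              (Blk k).indicator (fun n : ℕ => (1:ℝ)/(n:ℝ)) n := by
          apply Finset.sum_le_sum
          intro n hn
          by_cases hnS : n ∈ primesNotIn Q
          · obtain ⟨k, hk⟩ := Set.mem_iUnion.mp (hSR n hnS)
            have hkN : k < N := by
              have h1 : k < m k := hkm k
              have h2 : m k < n := hk.2.1
              have h3 : n < N := Finset.mem_range.mp hn
              omega
            rw [Set.indicator_of_mem hnS]
            calc (1:ℝ)/(n:ℝ) = (Blk k).indicator (fun n : ℕ => (1:ℝ)/(n:ℝ)) n := by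
                  rw [Set.indicator_of_mem hk]
              _ ≤ _ := Finset.single_le_sum
                  (f := fun k => (Blk k).indicator (fun n : ℕ => (1:ℝ)/(n:ℝ)) n)
                  (fun i _ => Set.indicator_nonneg (fun i _ => by positivity) n)
                  (Finset.mem_range.mpr hkN)
          · rw [Set.indicator_of_notMem hnS]
            exact Finset.sum_nonneg fun i _ => Set.indicator_nonneg (fun i _ => by positivity) n
        have step2 : ∀ k, ∑ n ∈ Finset.range N,
            (Blk k).indicator (fun n : ℕ => (1:ℝ)/(n:ℝ)) n ≤ ((1:ℝ)/2)^k := by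
          intro k
          have hmr : (0:ℝ) < (m k : ℝ) := by exact_mod_cast hmpos k
          set F : Finset ℕ := (Finset.range N).filter (fun n => n ∈ Blk k) with hFdef
          have hre : ∑ n ∈ Finset.range N, (Blk k).indicator (fun n : ℕ => (1:ℝ)/(n:ℝ)) n
              = ∑ n ∈ F, (1:ℝ)/(n:ℝ) := by
            rw [hFdef, Finset.sum_filter]
            apply Finset.sum_congr rfl
            intro n _
            by_cases hnB : n ∈ Blk k
            · rw [Set.indicator_of_mem hnB, if_pos hnB]
            · rw [Set.indicator_of_notMem hnB, if_neg hnB]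
          have hcard : (F.card : ℝ) ≤ ((Blk k).ncard : ℝ) := by
            have hsub : (F : Set ℕ) ⊆ Blk k := by
              intro n hn
              exact (Finset.mem_filter.mp hn).2
            have hfinB : (Blk k).Finite := by
              apply Set.Finite.subset (Set.finite_Iic (2 * m k))
              rintro p ⟨-, -, hp⟩
              exact hp
            have := Set.ncard_le_ncard hsub hfinB
            rw [Set.ncard_coe_finset] at this
            exact_mod_cast this
          have hterm : ∀ n ∈ F, (1:ℝ)/(n:ℝ) ≤ 1/(m k : ℝ) := by
            intro n hn
            have hnB := (Finset.mem_filter.mp hn).2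
            have : (m k : ℝ) < (n : ℝ) := by exact_mod_cast hnB.2.1
            exact one_div_le_one_div_of_le hmr this.le
          calc ∑ n ∈ Finset.range N, (Blk k).indicator (fun n : ℕ => (1:ℝ)/(n:ℝ)) n
              = ∑ n ∈ F, (1:ℝ)/(n:ℝ) := hre
            _ ≤ F.card • ((1:ℝ)/(m k : ℝ)) := Finset.sum_le_card_nsmul F _ _ hterm
            _ = (F.card : ℝ) * (1/(m k : ℝ)) := by rw [nsmul_eq_mul]
            _ ≤ (0.55 * (1/2)^k * (m k : ℝ)) * (1/(m k : ℝ)) := by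
                apply mul_le_mul_of_nonneg_right (hcard.trans (hBlkcard k)) (by positivity)
            _ = 0.55 * (1/2)^k := by field_simp
            _ ≤ ((1:ℝ)/2)^k := by nlinarith [pow_nonneg (by norm_num : (0:ℝ) ≤ 1/2) k]
        calc ∑ n ∈ Finset.range N, (primesNotIn Q).indicator (fun n : ℕ => (1:ℝ)/(n:ℝ)) n
            ≤ ∑ n ∈ Finset.range N, ∑ k ∈ Finset.range N,
              (Blk k).indicator (fun n : ℕ => (1:ℝ)/(n:ℝ)) n := step1
          _ = ∑ k ∈ Finset.range N, ∑ n ∈ Finset.range N,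
              (Blk k).indicator (fun n : ℕ => (1:ℝ)/(n:ℝ)) n := Finset.sum_comm
          _ ≤ ∑ k ∈ Finset.range N, ((1:ℝ)/2)^k := Finset.sum_le_sum fun k _ => step2 k
          _ ≤ ∑' k : ℕ, ((1:ℝ)/2)^k := Summable.sum_le_tsum _ (fun i _ => by positivity)
              summable_geometric_two
          _ = 2 := tsum_geometric_two
      exact summable_subtype_iff_indicator.mpr hInd
    · -- PNT fails for Q
      intro h2
      have hev2 : ∀ᶠ x : ℝ in atTop,
          |countK Q x / (x / Real.log x) - 1| < 1/10 := by
        have := Metric.tendsto_nhds.mp h2 (1/10) (by norm_num)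
        simpa [Real.dist_eq] using this
      obtain ⟨X2, hX2⟩ := eventually_atTop.mp hev2
      obtain ⟨M, hM3, hL4, hMX2, hQP, hp1⟩ :
          ∃ M : ℝ, 3 ≤ M ∧ 4 ≤ Real.log M ∧ X2 ≤ 2 * M ∧
            countK Q (2 * M) ≤ countK P M ∧ countK P M ≤ 1.1 * (M / Real.log M) := by
        refine ⟨(m ⌈X2⌉₊ : ℝ), hm3 _, hlog4 _, ?_, ?_, hcount _ (hmX1 _)⟩
        · have h1 : X2 ≤ ((⌈X2⌉₊ : ℕ) : ℝ) := Nat.le_ceil X2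
          have h2 : ((⌈X2⌉₊ : ℕ) : ℝ) ≤ ((m ⌈X2⌉₊ : ℕ) : ℝ) := by
            exact_mod_cast (hkm ⌈X2⌉₊).le
          have h3 : (0:ℝ) ≤ ((m ⌈X2⌉₊ : ℕ) : ℝ) := by positivity
          linarith
        · have hsub : Q ∩ {n : ℕ | (n : ℝ) ≤ 2 * ((m ⌈X2⌉₊ : ℕ) : ℝ)}
              ⊆ P ∩ {n : ℕ | (n : ℝ) ≤ ((m ⌈X2⌉₊ : ℕ) : ℝ)} := by
            rintro p ⟨⟨hp, hpR⟩, hple⟩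
            refine ⟨hp, ?_⟩
            by_contra hgt
            simp only [Set.mem_setOf_eq] at hgt hple
            push_neg at hgt
            have h1 : m ⌈X2⌉₊ < p := by exact_mod_cast hgt
            have h2 : p ≤ 2 * m ⌈X2⌉₊ := by
              have : (p : ℝ) ≤ ((2 * m ⌈X2⌉₊ : ℕ) : ℝ) := by push_cast; linarith
              exact_mod_cast this
            exact hpR (Set.mem_iUnion.mpr ⟨⌈X2⌉₊, hp, h1, h2⟩)
          exact Nat.cast_le.mpr (Set.ncard_le_ncard hsub (hfin P _))
      clear h h2 hev hev2 hX0 hcount hc1 hcpos hcm hm_exp hmpos hmX1 hm3 hlogm h4pow hlog4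
        hkm hBlkcard hfin hX13 hN0pos
      clear_value P X1 N0 c m Blk R Q
      clear hPdef hX1def hN0def hcdef hmdef hBlkdef hRdef hQdef
      have hL : 0 < Real.log M := by linarith
      have hL2pos : 0 < Real.log (2 * M) := Real.log_pos (by linarith)
      have hpos2 : 0 < 2 * M / Real.log (2 * M) := by positivity
      have hg := hX2 (2 * M) hMX2
      have hg2 : 0.9 * (2 * M / Real.log (2 * M)) ≤ countK Q (2 * M) := by
        have h3 := (abs_lt.mp hg).1
        have h4 : (0.9:ℝ) ≤ countK Q (2*M) / (2 * M / Real.log (2 * M)) := by linarith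
        calc 0.9 * (2 * M / Real.log (2 * M))
            ≤ countK Q (2*M) / (2 * M / Real.log (2 * M)) * (2 * M / Real.log (2 * M)) :=
              mul_le_mul_of_nonneg_right h4 hpos2.le
          _ = countK Q (2*M) := by field_simp
      have key : 0.9 * (2 * M / Real.log (2 * M)) ≤ 1.1 * (M / Real.log M) :=
        hg2.trans (hQP.trans hp1)
      have hlog2M : Real.log (2 * M) = Real.log 2 + Real.log M :=
        Real.log_mul two_ne_zero (by linarith)
      have hlog2 : Real.log 2 ≤ 1 := by
        have := Real.log_two_lt_d9
        linarith
      have hcross : 0.9 * (2 * M) * Real.log M ≤ 1.1 * M * Real.log (2 * M) := by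
        have h5 : 0.9 * (2 * M) / Real.log (2*M) ≤ 1.1 * M / Real.log M := by
          calc 0.9 * (2 * M) / Real.log (2*M) = 0.9 * (2 * M / Real.log (2 * M)) := by ring
            _ ≤ 1.1 * (M / Real.log M) := key
            _ = 1.1 * M / Real.log M := by ring
        exact (div_le_div_iff₀ hL2pos hL).mp h5
      rw [hlog2M] at hcross
      have e1 : 1.1 * M * Real.log 2 ≤ 1.1 * M := by nlinarith
      nlinarith [hcross, e1, hL4, hM3]
  · refine ⟨{p : ℕ | p.Prime}, fun p hp => hp, ?_, h⟩
    haveI : IsEmpty ↥(primesNotIn {p : ℕ | p.Prime}) := ⟨fun x => x.2.2 x.2.1⟩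
    exact Summable.of_finite

end
end
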